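/- arXiv:math/0609375 — 4 statements merged into one kernel-verified Lean document; each statement's English description precedes it below -/
import Mathlib

section
/- For every n ≥ 1, the connected component Mₙ⁺(SO(3)) of the identity n-tuple in Hom(ℤⁿ, SO(3)) equals the set of n-tuples (A₁,…,Aₙ) ∈ Hom(ℤⁿ, SO(3)) for which there exists a nonzero vector v ∈ ℝ³ with Aᵢv = v for all i (i.e. all the Aᵢ are rotations about a common axis). -/
open Matrix

/-- The space `Hom(ℤⁿ, G)` of ordered commuting `n`-tuples of elements of a topological
monoid `G`, topologized as a subspace of `Gⁿ`. -/
abbrev CommTuples (n : ℕ) (G : Type*) [Monoid G] [TopologicalSpace G] : Type _ :=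
  {f : Fin n → G // ∀ i j, f i * f j = f j * f i}

/-- The special orthogonal group `SO(3)` of 3×3 real matrices. -/
abbrev SO3 : Type _ := Matrix.specialOrthogonalGroup (Fin 3) ℝ

/-- The identity `n`-tuple `(id, …, id)` in `Hom(ℤⁿ, G)`. -/
def oneTuple (n : ℕ) (G : Type*) [Monoid G] [TopologicalSpace G] : CommTuples n G :=
  ⟨fun _ => 1, fun _ _ => rfl⟩

namespace SO3Axis

abbrev R3 := Fin 3 → ℝ
abbrev M3 := Matrix (Fin 3) (Fin 3) ℝ

def cross3 (u w : R3) : R3 :=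
  ![u 1 * w 2 - u 2 * w 1, u 2 * w 0 - u 0 * w 2, u 0 * w 1 - u 1 * w 0]

def frameM (u w : R3) : M3 := Matrix.of fun i j => ![u, w, cross3 u w] j i

def rotM (a b : ℝ) : M3 := Matrix.of ![![1, 0, 0], ![0, a, -b], ![0, b, a]]

lemma cross3_dot_left (u w : R3) : cross3 u w ⬝ᵥ u = 0 := by
  simp [cross3, dotProduct, Fin.sum_univ_three]; ring

lemma cross3_dot_right (u w : R3) : cross3 u w ⬝ᵥ w = 0 := by
  simp [cross3, dotProduct, Fin.sum_univ_three]; ring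

lemma cross3_dot_self (u w : R3) (huu : u ⬝ᵥ u = 1) (hww : w ⬝ᵥ w = 1)
    (huw : u ⬝ᵥ w = 0) : cross3 u w ⬝ᵥ cross3 u w = 1 := by
  simp only [cross3, dotProduct, Fin.sum_univ_three] at *
  simp at *
  nlinarith [huu, hww, huw]

lemma dot_mulVec_mulVec {A : M3} (hA : Aᵀ * A = 1) (x y : R3) :
    (A *ᵥ x) ⬝ᵥ (A *ᵥ y) = x ⬝ᵥ y := by
  calc (A *ᵥ x) ⬝ᵥ (A *ᵥ y) = (x ᵥ* Aᵀ) ⬝ᵥ (A *ᵥ y) := by rw [vecMul_transpose]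
    _ = x ⬝ᵥ (Aᵀ *ᵥ (A *ᵥ y)) := (dotProduct_mulVec _ _ _).symm
    _ = x ⬝ᵥ ((Aᵀ * A) *ᵥ y) := by rw [mulVec_mulVec]
    _ = x ⬝ᵥ y := by rw [hA, one_mulVec]


section frame
variable {u w : R3} (huu : u ⬝ᵥ u = 1) (hww : w ⬝ᵥ w = 1) (huw : u ⬝ᵥ w = 0)

lemma frameM_apply (u w : R3) (i j : Fin 3) :
    frameM u w i j = ![u, w, cross3 u w] j i := rfl

include huu hww huw in
lemma frameM_orth : (frameM u w)ᵀ * frameM u w = 1 := by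
  simp only [dotProduct, Fin.sum_univ_three] at huu hww huw
  ext i j
  fin_cases i <;> fin_cases j <;>
    simp [frameM, cross3, Matrix.mul_apply, Fin.sum_univ_three, Matrix.one_apply] <;>
    nlinarith [huu, hww, huw]

include huu hww huw in
lemma frameM_orth' : frameM u w * (frameM u w)ᵀ = 1 :=
  (mul_eq_one_comm).mp (frameM_orth huu hww huw)

include huu hww huw in
lemma expand3 (x : R3) :
    x = (x ⬝ᵥ u) • u + (x ⬝ᵥ w) • w + (x ⬝ᵥ cross3 u w) • cross3 u w := by
  have h := frameM_orth' huu hww huw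
  have h2 : (frameM u w * (frameM u w)ᵀ) *ᵥ x = x := by rw [h, one_mulVec]
  funext i
  have h3 := congrFun h2 i
  simp only [mulVec, dotProduct, Matrix.mul_apply, Fin.sum_univ_three, frameM, transpose_apply,
    Matrix.of_apply] at h3
  simp only [Pi.add_apply, Pi.smul_apply, dotProduct, Fin.sum_univ_three, smul_eq_mul]
  rw [← h3]
  simp [cross3]
  ring

include huu hww huw in
lemma det_frameM : (frameM u w).det = 1 := by
  have hcc : cross3 u w ⬝ᵥ cross3 u w = 1 := by
    simp only [dotProduct, Fin.sum_univ_three] at *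
    simp only [cross3] at *
    simp at *
    nlinarith [huu, hww, huw]
  rw [Matrix.det_fin_three]
  simp only [dotProduct, Fin.sum_univ_three, cross3] at hcc ⊢
  simp [frameM, cross3] at *
  nlinarith [hcc]

end frame

lemma mul_col (A M : M3) (i j : Fin 3) : (A * M) i j = (A *ᵥ fun k => M k j) i := by
  simp [Matrix.mul_apply, mulVec, dotProduct]

section frame
variable {u w : R3} {A : M3}

lemma frame_mul (hA : Aᵀ * A = 1) (hdet : A.det = 1)
    (huu : u ⬝ᵥ u = 1) (hww : w ⬝ᵥ w = 1) (huw : u ⬝ᵥ w = 0)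
    {α β : ℝ} (hu : A *ᵥ u = α • u) (hw : A *ᵥ w = β • w) :
    A * frameM u w = frameM u w * Matrix.diagonal ![α, β, α * β] ∧ α ^ 2 = 1 ∧ β ^ 2 = 1 := by
  have hα2 : α ^ 2 = 1 := by
    have h := dot_mulVec_mulVec hA u u
    rw [hu, smul_dotProduct, dotProduct_smul, huu] at h
    simp only [smul_eq_mul, mul_one] at h
    nlinarith [h]
  have hβ2 : β ^ 2 = 1 := by
    have h := dot_mulVec_mulVec hA w w
    rw [hw, smul_dotProduct, dotProduct_smul, hww] at h
    simp only [smul_eq_mul, mul_one] at h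
    nlinarith [h]
  set c := cross3 u w with hc
  have hα0 : α ≠ 0 := by intro h0; rw [h0] at hα2; norm_num at hα2
  have hβ0 : β ≠ 0 := by intro h0; rw [h0] at hβ2; norm_num at hβ2
  have hcu : (A *ᵥ c) ⬝ᵥ u = 0 := by
    have h := dot_mulVec_mulVec hA c u
    rw [hu, dotProduct_smul] at h
    have hcu0 : c ⬝ᵥ u = 0 := by
      simp [hc, cross3, dotProduct, Fin.sum_univ_three]; ring
    rw [hcu0] at h
    exact (mul_eq_zero.mp h).resolve_left hα0
  have hcw : (A *ᵥ c) ⬝ᵥ w = 0 := by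
    have h := dot_mulVec_mulVec hA c w
    rw [hw, dotProduct_smul] at h
    have hcw0 : c ⬝ᵥ w = 0 := by
      simp [hc, cross3, dotProduct, Fin.sum_univ_three]; ring
    rw [hcw0] at h
    exact (mul_eq_zero.mp h).resolve_left hβ0
  set lam := (A *ᵥ c) ⬝ᵥ c with hlam
  have hAc : A *ᵥ c = lam • c := by
    have h := expand3 huu hww huw (A *ᵥ c)
    rw [hcu, hcw, zero_smul, zero_smul, zero_add, zero_add] at h
    exact h
  have hM : A * frameM u w = frameM u w * Matrix.diagonal ![α, β, lam] := by
    ext i j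
    rw [mul_col, Matrix.mul_diagonal]
    fin_cases j
    · show (A *ᵥ u) i = frameM u w i 0 * α
      rw [hu]; simp [frameM]; ring
    · show (A *ᵥ w) i = frameM u w i 1 * β
      rw [hw]; simp [frameM]; ring
    · show (A *ᵥ c) i = frameM u w i 2 * lam
      rw [hAc]; simp [frameM]; ring
  have hdM : (frameM u w).det = 1 := det_frameM huu hww huw
  have hdetEq : (1 : ℝ) = α * β * lam := by
    have h := congrArg Matrix.det hM
    rw [Matrix.det_mul, Matrix.det_mul, Matrix.det_diagonal, hdet, hdM] at h
    simpa [Fin.prod_univ_three] using h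
  have hlamEq : lam = α * β := by
    linear_combination (-(α*β))*hdetEq - lam*α^2*hβ2 - lam*hα2
  rw [hlamEq] at hM
  exact ⟨hM, hα2, hβ2⟩

lemma eq_one_of_fix (hA : Aᵀ * A = 1) (hdet : A.det = 1)
    (huu : u ⬝ᵥ u = 1) (hww : w ⬝ᵥ w = 1) (huw : u ⬝ᵥ w = 0)
    (hu : A *ᵥ u = u) (hw : A *ᵥ w = w) : A = 1 := by
  have hu' : A *ᵥ u = (1:ℝ) • u := by simpa using hu
  have hw' : A *ᵥ w = (1:ℝ) • w := by simpa using hw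
  obtain ⟨hM, -, -⟩ := frame_mul hA hdet huu hww huw hu' hw'
  have hD : Matrix.diagonal ![(1:ℝ), 1, 1 * 1] = 1 := by
    ext i j; fin_cases i <;> fin_cases j <;> simp [Matrix.diagonal]
  rw [hD, mul_one] at hM
  calc A = A * (frameM u w * (frameM u w)ᵀ) := by rw [frameM_orth' huu hww huw, mul_one]
    _ = (A * frameM u w) * (frameM u w)ᵀ := by rw [mul_assoc]
    _ = frameM u w * (frameM u w)ᵀ := by rw [hM]
    _ = 1 := frameM_orth' huu hww huw

lemma trace_frame (hA : Aᵀ * A = 1) (hdet : A.det = 1)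
    (huu : u ⬝ᵥ u = 1) (hww : w ⬝ᵥ w = 1) (huw : u ⬝ᵥ w = 0)
    {α β : ℝ} (hu : A *ᵥ u = α • u) (hw : A *ᵥ w = β • w) :
    A.trace = α + β + α * β := by
  obtain ⟨hM, -, -⟩ := frame_mul hA hdet huu hww huw hu hw
  have hMM := frameM_orth' huu hww huw
  have hMM' : (frameM u w)ᵀ * frameM u w = 1 := mul_eq_one_comm.mp hMM
  have hArep : A = frameM u w * Matrix.diagonal ![α, β, α * β] * (frameM u w)ᵀ := by
    calc A = A * (frameM u w * (frameM u w)ᵀ) := by rw [hMM, mul_one]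
      _ = (A * frameM u w) * (frameM u w)ᵀ := by rw [mul_assoc]
      _ = _ := by rw [hM]
  rw [hArep, Matrix.trace_mul_comm, ← mul_assoc, hMM', one_mul, Matrix.trace_diagonal]
  simp [Fin.sum_univ_three]

end frame

lemma dot_self_pos {v : R3} (hv : v ≠ 0) : 0 < v ⬝ᵥ v := by
  obtain ⟨i, hi⟩ := Function.ne_iff.mp hv
  have : (0:ℝ) < v i * v i := mul_self_pos.mpr hi
  rw [dotProduct]
  apply Finset.sum_pos' (fun j _ => mul_self_nonneg _) ⟨i, Finset.mem_univ i, this⟩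

lemma normalize3 {v : R3} (hv : v ≠ 0) : ∃ t : ℝ, t ≠ 0 ∧ (t • v) ⬝ᵥ (t • v) = 1 := by
  have hd := dot_self_pos hv
  set d := v ⬝ᵥ v with hdd
  have hs0 : Real.sqrt d ≠ 0 := ne_of_gt (Real.sqrt_pos.mpr hd)
  refine ⟨(Real.sqrt d)⁻¹, inv_ne_zero hs0, ?_⟩
  rw [smul_dotProduct, dotProduct_smul, smul_eq_mul, smul_eq_mul, ← hdd]
  rw [← Real.mul_self_sqrt (le_of_lt hd)]
  field_simp
  rw [Real.sqrt_sq (Real.sqrt_nonneg _)]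

lemma exists_unit_fixed {A : M3} (hA : Aᵀ * A = 1) (hdet : A.det = 1) :
    ∃ u : R3, u ⬝ᵥ u = 1 ∧ A *ᵥ u = u := by
  have hdet0 : (A - 1).det = 0 := by
    have h1 : Aᵀ * (1 - A) = (A - 1)ᵀ := by
      rw [Matrix.mul_sub, mul_one, hA, Matrix.transpose_sub, Matrix.transpose_one]
    have h2 : (A - 1).det = (A - 1)ᵀ.det := (Matrix.det_transpose _).symm
    rw [← h1, Matrix.det_mul, Matrix.det_transpose, hdet, one_mul] at h2
    have h3 : (1 - A) = -(A - 1) := (neg_sub _ _).symm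
    rw [h3, Matrix.det_neg] at h2
    simp at h2
    linarith [h2]
  obtain ⟨v, hv0, hv⟩ := (Matrix.exists_mulVec_eq_zero_iff).mpr hdet0
  have hfix : A *ᵥ v = v := by
    have := hv
    rw [Matrix.sub_mulVec, Matrix.one_mulVec, sub_eq_zero] at this
    exact this
  obtain ⟨t, ht0, ht1⟩ := normalize3 hv0
  exact ⟨t • v, ht1, by rw [Matrix.mulVec_smul, hfix]⟩


lemma unit_ne_zero {u : R3} (huu : u ⬝ᵥ u = 1) : u ≠ 0 := by
  intro h; rw [h, dotProduct_comm, dotProduct_zero] at huu; norm_num at huu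

lemma fix_eq_smul {A : M3} (hA : Aᵀ * A = 1) (hdet : A.det = 1) (hne : A ≠ 1)
    {u : R3} (huu : u ⬝ᵥ u = 1) (hu : A *ᵥ u = u) {v : R3} (hv : A *ᵥ v = v) :
    v = (v ⬝ᵥ u) • u := by
  set w0 := v - (v ⬝ᵥ u) • u with hw0
  have hfix : A *ᵥ w0 = w0 := by
    rw [hw0, Matrix.mulVec_sub, Matrix.mulVec_smul, hu, hv]
  have hperp : w0 ⬝ᵥ u = 0 := by
    rw [hw0, sub_dotProduct, smul_dotProduct, smul_eq_mul, huu, mul_one, sub_self]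
  by_cases h0 : w0 = 0
  · rw [hw0, sub_eq_zero] at h0; exact h0
  · exfalso
    obtain ⟨t, ht0, ht1⟩ := normalize3 h0
    have hWfix : A *ᵥ (t • w0) = t • w0 := by rw [Matrix.mulVec_smul, hfix]
    have huw : u ⬝ᵥ (t • w0) = 0 := by
      rw [dotProduct_smul, dotProduct_comm, hperp, smul_zero]
    exact hne (eq_one_of_fix hA hdet huu ht1 huw hu hWfix)

lemma neg_fix_lemma {A : M3} (hA : Aᵀ * A = 1) (hdet : A.det = 1)
    {u : R3} (huu : u ⬝ᵥ u = 1) (hu : A *ᵥ u = -u) :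
    A * A = 1 ∧ ∃ w : R3, w ⬝ᵥ w = 1 ∧ u ⬝ᵥ w = 0 ∧ A *ᵥ w = w := by
  obtain ⟨w, hww, hw⟩ := exists_unit_fixed hA hdet
  have huw : u ⬝ᵥ w = 0 := by
    have h := dot_mulVec_mulVec hA u w
    rw [hu, hw, neg_dotProduct] at h
    linarith [h]
  have hAAt : (A * A)ᵀ * (A * A) = 1 := by
    rw [Matrix.transpose_mul]
    calc Aᵀ * Aᵀ * (A * A) = Aᵀ * (Aᵀ * A) * A := by noncomm_ring
      _ = 1 := by rw [hA, mul_one, hA]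
  have hAAdet : (A * A).det = 1 := by rw [Matrix.det_mul, hdet, mul_one]
  have hAAu : (A * A) *ᵥ u = u := by
    rw [← Matrix.mulVec_mulVec, hu, Matrix.mulVec_neg, hu, neg_neg]
  have hAAw : (A * A) *ᵥ w = w := by
    rw [← Matrix.mulVec_mulVec, hw, hw]
  exact ⟨eq_one_of_fix hAAt hAAdet huu hww huw hAAu hAAw, w, hww, huw, hw⟩

lemma eq_one_of_forall_fix {A : M3} (h : ∀ x : R3, A *ᵥ x = x) : A = 1 := by
  ext i j
  have := congrFun (h (fun k => if k = j then 1 else 0)) i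
  simp only [Matrix.mulVec, dotProduct, mul_ite, mul_one, mul_zero,
    Finset.sum_ite_eq', Finset.mem_univ, if_true] at this
  rw [this, Matrix.one_apply]

lemma trace_invol {A : M3} (hA : Aᵀ * A = 1) (hdet : A.det = 1)
    (hA2 : A * A = 1) (hne : A ≠ 1) : A.trace = -1 := by
  obtain ⟨u, huu, hu⟩ := exists_unit_fixed hA hdet
  have hx : ∃ x : R3, A *ᵥ x ≠ x := by
    by_contra hc
    push_neg at hc
    exact hne (eq_one_of_forall_fix hc)
  obtain ⟨x, hx⟩ := hx
  set v0 := A *ᵥ x - x with hv0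
  have hv0ne : v0 ≠ 0 := sub_ne_zero.mpr hx
  have hv0fix : A *ᵥ v0 = -v0 := by
    rw [hv0, Matrix.mulVec_sub, Matrix.mulVec_mulVec, hA2, Matrix.one_mulVec, neg_sub]
  obtain ⟨t, ht0, ht1⟩ := normalize3 hv0ne
  set v := t • v0 with hv
  have hvfix : A *ᵥ v = -v := by
    rw [hv, Matrix.mulVec_smul, hv0fix, smul_neg]
  have huv : u ⬝ᵥ v = 0 := by
    have h := dot_mulVec_mulVec hA u v
    rw [hu, hvfix, dotProduct_neg] at h
    linarith [h]
  have h := trace_frame hA hdet huu ht1 huv (by rw [hu, one_smul])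
    (by rw [hvfix]; rw [neg_one_smul] : A *ᵥ v = (-1 : ℝ) • v)
  rw [h]; ring

lemma fix_pm {B C : M3} (hB : Bᵀ * B = 1) (hdB : B.det = 1) (hBne : B ≠ 1)
    {u : R3} (huu : u ⬝ᵥ u = 1) (hBu : B *ᵥ u = u)
    (hC : Cᵀ * C = 1) (hcm : B * C = C * B) : C *ᵥ u = u ∨ C *ᵥ u = -u := by
  have hfix : B *ᵥ (C *ᵥ u) = C *ᵥ u := by
    rw [Matrix.mulVec_mulVec, hcm, ← Matrix.mulVec_mulVec, hBu]
  have hs := fix_eq_smul hB hdB hBne huu hBu hfix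
  set s := (C *ᵥ u) ⬝ᵥ u with hsdef
  have hs2 : s ^ 2 = 1 := by
    have hnorm := dot_mulVec_mulVec hC u u
    rw [hs, smul_dotProduct, dotProduct_smul, huu] at hnorm
    simp only [smul_eq_mul, mul_one] at hnorm
    nlinarith [hnorm]
  have : (s - 1) * (s + 1) = 0 := by nlinarith [hs2]
  rcases mul_eq_zero.mp this with h1 | h1
  · left; rw [hs, sub_eq_zero.mp h1, one_smul]
  · right
    have : s = -1 := by linarith
    rw [hs, this, neg_one_smul]

lemma ne_one_of_negfix {B : M3} {u : R3} (huu : u ⬝ᵥ u = 1) (hBu : B *ᵥ u = -u) :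
    B ≠ 1 := by
  intro h'
  rw [h', Matrix.one_mulVec] at hBu
  have := congrArg (fun z : R3 => z ⬝ᵥ u) hBu
  simp only [neg_dotProduct] at this
  rw [huu] at this
  norm_num at this

lemma classify {m : ℕ} (A : Fin m → M3)
    (hA : ∀ i, (A i)ᵀ * A i = 1) (hdet : ∀ i, (A i).det = 1)
    (hcomm : ∀ i j, A i * A j = A j * A i)
    (h : ∀ v : R3, (∀ i, A i *ᵥ v = v) → v = 0) :
    ∃ (i j : Fin m) (u w : R3), u ⬝ᵥ u = 1 ∧ w ⬝ᵥ w = 1 ∧ u ⬝ᵥ w = 0 ∧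
      A i *ᵥ u = u ∧ A i * A i = 1 ∧ (A i).trace = -1 ∧
      A j *ᵥ w = w ∧ A j * A j = 1 ∧ (A j).trace = -1 := by
  have claim1 : ∀ i, A i * A i = 1 := by
    intro i
    by_contra hsq
    have hne : A i ≠ 1 := fun h' => hsq (by rw [h', one_mul])
    obtain ⟨u, huu, hu⟩ := exists_unit_fixed (hA i) (hdet i)
    have hall : ¬ ∀ j, A j *ᵥ u = u := fun hc => unit_ne_zero huu (h u hc)
    push_neg at hall
    obtain ⟨j, hj⟩ := hall
    have hj' : A j *ᵥ u = -u :=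
      (fix_pm (hA i) (hdet i) hne huu hu (hA j) (hcomm i j)).resolve_left hj
    obtain ⟨-, w, hww, huw, hw⟩ := neg_fix_lemma (hA j) (hdet j) huu hj'
    have hjne : A j ≠ 1 := ne_one_of_negfix huu hj'
    rcases fix_pm (hA j) (hdet j) hjne hww hw (hA i) (hcomm j i) with hiw | hiw
    · exact hne (eq_one_of_fix (hA i) (hdet i) huu hww huw hu hiw)
    · exact hsq (neg_fix_lemma (hA i) (hdet i) hww hiw).1
  by_cases hallone : ∀ i, A i = 1
  · exfalso
    have hfix : ∀ i, A i *ᵥ ![(1:ℝ), 0, 0] = ![(1:ℝ), 0, 0] := fun i => by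
      rw [hallone i, Matrix.one_mulVec]
    have := congrFun (h _ hfix) 0
    norm_num at this
  · push_neg at hallone
    obtain ⟨i, hne⟩ := hallone
    obtain ⟨u, huu, hu⟩ := exists_unit_fixed (hA i) (hdet i)
    have hall : ¬ ∀ j, A j *ᵥ u = u := fun hc => unit_ne_zero huu (h u hc)
    push_neg at hall
    obtain ⟨j, hj⟩ := hall
    have hj' : A j *ᵥ u = -u :=
      (fix_pm (hA i) (hdet i) hne huu hu (hA j) (hcomm i j)).resolve_left hj
    obtain ⟨-, w, hww, huw, hw⟩ := neg_fix_lemma (hA j) (hdet j) huu hj'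
    have hjne : A j ≠ 1 := ne_one_of_negfix huu hj'
    exact ⟨i, j, u, w, huu, hww, huw, hu, claim1 i,
      trace_invol (hA i) (hdet i) (claim1 i) hne, hw, claim1 j,
      trace_invol (hA j) (hdet j) (claim1 j) hjne⟩


lemma rotM_one : rotM 1 0 = 1 := by
  ext i j; fin_cases i <;> fin_cases j <;> simp [rotM, Matrix.one_apply, Matrix.vecHead, Matrix.vecTail]

lemma rotM_mul (a b a' b' : ℝ) :
    rotM a b * rotM a' b' = rotM (a * a' - b * b') (a * b' + a' * b) := by
  ext i j; fin_cases i <;> fin_cases j <;>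
    simp [rotM, Matrix.mul_apply, Fin.sum_univ_three, Matrix.vecHead, Matrix.vecTail] <;> ring

lemma rotM_comm (a b a' b' : ℝ) : rotM a b * rotM a' b' = rotM a' b' * rotM a b := by
  rw [rotM_mul, rotM_mul]; ring_nf

lemma rotM_orth {a b : ℝ} (h : a ^ 2 + b ^ 2 = 1) : (rotM a b)ᵀ * rotM a b = 1 := by
  ext i j; fin_cases i <;> fin_cases j <;>
    simp [rotM, Matrix.mul_apply, Fin.sum_univ_three, Matrix.one_apply, Matrix.vecHead, Matrix.vecTail] <;> nlinarith [h]

lemma rotM_det {a b : ℝ} (h : a ^ 2 + b ^ 2 = 1) : (rotM a b).det = 1 := by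
  rw [Matrix.det_fin_three]; simp [rotM, Matrix.vecHead, Matrix.vecTail]; nlinarith [h]

lemma exists_perp {v : R3} (hv : v ⬝ᵥ v = 1) : ∃ w : R3, w ⬝ᵥ w = 1 ∧ v ⬝ᵥ w = 0 := by
  by_cases h : v 0 = 0 ∧ v 1 = 0
  · refine ⟨![1, 0, 0], by simp [dotProduct, Fin.sum_univ_three], ?_⟩
    simp [dotProduct, Fin.sum_univ_three, h.1]
  · rw [not_and_or] at h
    set y : R3 := ![-(v 1), v 0, 0] with hy
    have hy0 : y ≠ 0 := by
      intro h0
      have h1 := congrFun h0 0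
      have h2 := congrFun h0 1
      simp [hy] at h1 h2
      rcases h with hh | hh
      · exact hh h2
      · exact hh h1
    obtain ⟨t, ht0, ht1⟩ := normalize3 hy0
    refine ⟨t • y, ht1, ?_⟩
    rw [dotProduct_smul]
    have : v ⬝ᵥ y = 0 := by simp [hy, dotProduct, Fin.sum_univ_three]; ring
    rw [this, smul_zero]

section decomp
variable {v w : R3} {A : M3}

/-- Any special orthogonal matrix fixing `v` is a conjugated plane rotation. -/
lemma fix_decomp (hA : Aᵀ * A = 1) (hdet : A.det = 1)
    (hvv : v ⬝ᵥ v = 1) (hww : w ⬝ᵥ w = 1) (hvw : v ⬝ᵥ w = 0)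
    (hv : A *ᵥ v = v) :
    ∃ a b : ℝ, a ^ 2 + b ^ 2 = 1 ∧
      A = frameM v w * rotM a b * (frameM v w)ᵀ := by
  set c := cross3 v w with hc
  have hcv : c ⬝ᵥ v = 0 := by simp [hc, cross3, dotProduct, Fin.sum_univ_three]; ring
  have hcw : c ⬝ᵥ w = 0 := by simp [hc, cross3, dotProduct, Fin.sum_univ_three]; ring
  have hcc : c ⬝ᵥ c = 1 := cross3_dot_self v w hvv hww hvw
  have hwv : w ⬝ᵥ v = 0 := by rw [dotProduct_comm]; exact hvw
  -- images of w and c are orthogonal to v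
  have hAwv : (A *ᵥ w) ⬝ᵥ v = 0 := by
    have := dot_mulVec_mulVec hA w v
    rw [hv] at this; rw [this, hwv]
  have hAcv : (A *ᵥ c) ⬝ᵥ v = 0 := by
    have := dot_mulVec_mulVec hA c v
    rw [hv] at this; rw [this, hcv]
  set a := (A *ᵥ w) ⬝ᵥ w with ha
  set b := (A *ᵥ w) ⬝ᵥ c with hb
  set p := (A *ᵥ c) ⬝ᵥ w with hp
  set q := (A *ᵥ c) ⬝ᵥ c with hq
  have hAw : A *ᵥ w = a • w + b • c := by
    have h := expand3 hvv hww hvw (A *ᵥ w)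
    rw [hAwv, zero_smul, zero_add, ← hc, ← ha, ← hb] at h
    exact h
  have hAc : A *ᵥ c = p • w + q • c := by
    have h := expand3 hvv hww hvw (A *ᵥ c)
    rw [hAcv, zero_smul, zero_add, ← hc, ← hp, ← hq] at h
    exact h
  have hwc : w ⬝ᵥ c = 0 := by rw [dotProduct_comm]; exact hcw
  -- norms
  have hnorm1 : a ^ 2 + b ^ 2 = 1 := by
    have h := dot_mulVec_mulVec hA w w
    rw [hww, hAw] at h
    simp only [add_dotProduct, dotProduct_add, smul_dotProduct, dotProduct_smul,
      smul_eq_mul] at h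
    rw [hww, hwc, hcw, hcc] at h
    nlinarith [h]
  have hortho : a * p + b * q = 0 := by
    have h := dot_mulVec_mulVec hA c w
    rw [hcw, hAc, hAw] at h
    simp only [add_dotProduct, dotProduct_add, smul_dotProduct, dotProduct_smul,
      smul_eq_mul] at h
    rw [hww, hwc, hcw, hcc] at h
    nlinarith [h]
  -- determinant
  have hMN : A * frameM v w = frameM v w * Matrix.of ![![(1:ℝ),0,0], ![0,a,p], ![0,b,q]] := by
    ext i j
    rw [mul_col]
    fin_cases j
    · show (A *ᵥ v) i = _
      rw [hv]
      simp [frameM, Matrix.mul_apply, Fin.sum_univ_three, Matrix.vecHead, Matrix.vecTail]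
    · show (A *ᵥ w) i = _
      rw [hAw]
      simp [frameM, Matrix.mul_apply, Fin.sum_univ_three, hc, Matrix.vecHead, Matrix.vecTail]
      ring
    · show (A *ᵥ c) i = _
      rw [hAc]
      simp [frameM, Matrix.mul_apply, Fin.sum_univ_three, hc, Matrix.vecHead, Matrix.vecTail]
      ring
  have hdetN : a * q - b * p = 1 := by
    have h := congrArg Matrix.det hMN
    rw [Matrix.det_mul, Matrix.det_mul, hdet, det_frameM hvv hww hvw, one_mul] at h
    rw [Matrix.det_fin_three] at h
    simp [Matrix.vecHead, Matrix.vecTail] at h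
    nlinarith [h]
  have hp' : p = -b := by linear_combination (-p)*hnorm1 + (-b)*hdetN + a*hortho
  have hq' : q = a := by linear_combination (-q)*hnorm1 + a*hdetN + b*hortho
  rw [hp', hq'] at hMN
  have hrot : Matrix.of ![![(1:ℝ),0,0], ![0,a,-b], ![0,b,a]] = rotM a b := rfl
  rw [hrot] at hMN
  refine ⟨a, b, hnorm1, ?_⟩
  calc A = A * (frameM v w * (frameM v w)ᵀ) := by rw [frameM_orth' hvv hww hvw, mul_one]
    _ = (A * frameM v w) * (frameM v w)ᵀ := by rw [mul_assoc]
    _ = frameM v w * rotM a b * (frameM v w)ᵀ := by rw [hMN]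

end decomp

lemma exists_cos_sin {a b : ℝ} (h : a ^ 2 + b ^ 2 = 1) :
    ∃ θ : ℝ, Real.cos θ = a ∧ Real.sin θ = b := by
  have ha1 : -1 ≤ a := by nlinarith [sq_nonneg b]
  have ha2 : a ≤ 1 := by nlinarith [sq_nonneg b]
  have hs : Real.sin (Real.arccos a) = Real.sqrt (1 - a ^ 2) := Real.sin_arccos a
  have hb2 : 1 - a ^ 2 = b ^ 2 := by linarith [h]
  by_cases hb : 0 ≤ b
  · refine ⟨Real.arccos a, Real.cos_arccos ha1 ha2, ?_⟩
    rw [hs, hb2, Real.sqrt_sq_eq_abs, abs_of_nonneg hb]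
  · refine ⟨-Real.arccos a, by rw [Real.cos_neg]; exact Real.cos_arccos ha1 ha2, ?_⟩
    rw [Real.sin_neg, hs, hb2, Real.sqrt_sq_eq_abs, abs_of_neg (not_le.mp hb)]
    ring

section conj
variable {v w : R3} (hvv : v ⬝ᵥ v = 1) (hww : w ⬝ᵥ w = 1) (hvw : v ⬝ᵥ w = 0)

/-- conjugated rotation -/
def conjRot (v w : R3) (a b : ℝ) : M3 := frameM v w * rotM a b * (frameM v w)ᵀ

include hvv hww hvw in
lemma conjRot_orth {a b : ℝ} (h : a ^ 2 + b ^ 2 = 1) :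
    (conjRot v w a b)ᵀ * conjRot v w a b = 1 := by
  unfold conjRot
  have hMM := frameM_orth hvv hww hvw
  have hMM' := frameM_orth' hvv hww hvw
  have e1 : (frameM v w * rotM a b * (frameM v w)ᵀ)ᵀ
      = frameM v w * (rotM a b)ᵀ * (frameM v w)ᵀ := by
    rw [Matrix.transpose_mul, Matrix.transpose_mul, Matrix.transpose_transpose]
    noncomm_ring
  rw [e1]
  calc frameM v w * (rotM a b)ᵀ * (frameM v w)ᵀ * (frameM v w * rotM a b * (frameM v w)ᵀ)
      = frameM v w * ((rotM a b)ᵀ * ((frameM v w)ᵀ * frameM v w) * rotM a b) * (frameM v w)ᵀ := by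
        noncomm_ring
    _ = 1 := by rw [hMM, mul_one, rotM_orth h, mul_one, hMM']

include hvv hww hvw in
lemma conjRot_det {a b : ℝ} (h : a ^ 2 + b ^ 2 = 1) : (conjRot v w a b).det = 1 := by
  unfold conjRot
  simp [Matrix.det_mul, Matrix.det_transpose, det_frameM hvv hww hvw, rotM_det h]

lemma conjRot_mul (a b a' b' : ℝ) :
    conjRot v w a b * conjRot v w a' b' =
      frameM v w * (rotM a b * ((frameM v w)ᵀ * frameM v w) * rotM a' b') * (frameM v w)ᵀ := by
  unfold conjRot; noncomm_ring

include hvv hww hvw in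
lemma conjRot_comm (a b a' b' : ℝ) :
    conjRot v w a b * conjRot v w a' b' = conjRot v w a' b' * conjRot v w a b := by
  rw [conjRot_mul, conjRot_mul, frameM_orth hvv hww hvw, mul_one, mul_one, rotM_comm]

include hvv hww hvw in
lemma conjRot_fix (a b : ℝ) : conjRot v w a b *ᵥ v = v := by
  have h1 : (frameM v w)ᵀ *ᵥ v = ![1, 0, 0] := by
    have hcv : cross3 v w ⬝ᵥ v = 0 := by
      simp [cross3, dotProduct, Fin.sum_univ_three]; ring
    have hwv : w ⬝ᵥ v = 0 := by rw [dotProduct_comm]; exact hvw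
    simp only [dotProduct, Fin.sum_univ_three] at hvv hwv hcv
    funext k
    fin_cases k <;>
      simp [frameM, Matrix.mulVec, dotProduct, Fin.sum_univ_three, Matrix.transpose_apply,
        Matrix.vecHead, Matrix.vecTail] <;> linarith [hvv, hwv, hcv]
  have h2 : rotM a b *ᵥ ![1, 0, 0] = ![1, 0, 0] := by
    funext k
    fin_cases k <;>
      simp [rotM, Matrix.mulVec, dotProduct, Fin.sum_univ_three,
        Matrix.vecHead, Matrix.vecTail]
  have h3 : frameM v w *ᵥ ![1, 0, 0] = v := by
    funext k
    fin_cases k <;>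
      simp [frameM, Matrix.mulVec, dotProduct, Fin.sum_univ_three,
        Matrix.vecHead, Matrix.vecTail]
  unfold conjRot
  rw [← Matrix.mulVec_mulVec, ← Matrix.mulVec_mulVec, h1, h2, h3]

include hvv hww hvw in
lemma conjRot_one : conjRot v w 1 0 = 1 := by
  unfold conjRot
  rw [rotM_one, mul_one, frameM_orth' hvv hww hvw]

end conj

lemma continuous_dot : Continuous fun p : R3 × R3 => p.1 ⬝ᵥ p.2 := by
  unfold dotProduct
  exact continuous_finset_sum _ fun i _ =>
    ((continuous_apply i).comp continuous_fst).mul ((continuous_apply i).comp continuous_snd)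

def unitSphere : Set R3 := {v : R3 | v ⬝ᵥ v = 1}

lemma isCompact_unitSphere : IsCompact unitSphere := by
  have hclosed : IsClosed unitSphere :=
    isClosed_eq (continuous_dot.comp (continuous_id.prodMk continuous_id)) continuous_const
  refine IsCompact.of_isClosed_subset (isCompact_closedBall (0 : R3) 1) hclosed ?_
  intro v hv
  have h : v ⬝ᵥ v = 1 := hv
  simp only [Metric.mem_closedBall, dist_zero_right]
  rw [pi_norm_le_iff_of_nonneg (by norm_num)]
  intro i
  have hle : v i * v i ≤ ∑ j, v j * v j :=
    Finset.single_le_sum (f := fun j => v j * v j) (fun j _ => mul_self_nonneg _)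
      (Finset.mem_univ i)
  rw [dotProduct] at h
  rw [Real.norm_eq_abs, abs_le]
  constructor <;> nlinarith [hle, h]

/-- projection of a closed set along a compact factor is closed -/
lemma isClosed_proj {X Y : Type*} [TopologicalSpace X] [TopologicalSpace Y]
    {K : Set Y} (hK : IsCompact K) {C : Set (X × Y)} (hC : IsClosed C) :
    IsClosed {x : X | ∃ y ∈ K, (x, y) ∈ C} := by
  haveI : CompactSpace K := isCompact_iff_compactSpace.mp hK
  have hC' : IsClosed {p : X × K | (p.1, (p.2 : Y)) ∈ C} :=
    hC.preimage (continuous_fst.prodMk (continuous_subtype_val.comp continuous_snd))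
  have himg : {x : X | ∃ y ∈ K, (x, y) ∈ C} = Prod.fst '' {p : X × K | (p.1, (p.2 : Y)) ∈ C} := by
    ext x
    constructor
    · rintro ⟨y, hyK, hy⟩; exact ⟨(x, ⟨y, hyK⟩), hy, rfl⟩
    · rintro ⟨⟨x', y⟩, hy, rfl⟩; exact ⟨y, y.2, hy⟩
  rw [himg]
  exact isClosedMap_fst_of_compactSpace _ hC'



lemma mem_SO3_iff {A : M3} :
    A ∈ Matrix.specialOrthogonalGroup (Fin 3) ℝ ↔ Aᵀ * A = 1 ∧ A.det = 1 := by
  rw [Matrix.mem_specialOrthogonalGroup_iff, Matrix.mem_orthogonalGroup_iff']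

lemma trace_ne_one {A : M3} (h : A.trace = -1) : A ≠ 1 := by
  intro h1
  rw [h1, Matrix.trace_one] at h
  norm_num at h

/-- Two perpendicular π-rotations admit no common nonzero fixed vector. -/
lemma no_common {A B : M3} (hA : Aᵀ * A = 1) (hdA : A.det = 1) (htrA : A.trace = -1)
    (hB : Bᵀ * B = 1) (hdB : B.det = 1) (htrB : B.trace = -1)
    {u w : R3} (huu : u ⬝ᵥ u = 1) (hww : w ⬝ᵥ w = 1) (huw : u ⬝ᵥ w = 0)
    (hu : A *ᵥ u = u) (hw : B *ᵥ w = w)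
    {v : R3} (hv0 : v ≠ 0) (hvA : A *ᵥ v = v) (hvB : B *ᵥ v = v) : False := by
  have h1 := fix_eq_smul hA hdA (trace_ne_one htrA) huu hu hvA
  have h2 := fix_eq_smul hB hdB (trace_ne_one htrB) hww hw hvB
  have hvu : v ⬝ᵥ u ≠ 0 := by
    intro h0; rw [h0, zero_smul] at h1; exact hv0 h1
  have h3 : ((v ⬝ᵥ u) • u) ⬝ᵥ u = ((v ⬝ᵥ w) • w) ⬝ᵥ u := by rw [← h1, ← h2]
  rw [smul_dotProduct, smul_dotProduct, huu, smul_eq_mul, mul_one,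
    smul_eq_mul, dotProduct_comm w u, huw, mul_zero] at h3
  exact hvu h3

section mainsec
variable {n : ℕ}

def axisC (n : ℕ) : Set (CommTuples n SO3 × R3) :=
  {p | ∀ i, (↑(p.1.val i) : M3) *ᵥ p.2 = p.2}

/-- The common-axis set, with unit axis vector, in projection-friendly form. -/
def axisSet (n : ℕ) : Set (CommTuples n SO3) :=
  {f | ∃ v ∈ unitSphere, (f, v) ∈ axisC n}

lemma axisSet_eq (n : ℕ) :
    axisSet n = {f : CommTuples n SO3 |
      ∃ v : R3, v ≠ 0 ∧ ∀ i, ((f.val i : M3)) *ᵥ v = v} := by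
  ext f
  constructor
  · rintro ⟨v, hv1, hv2⟩
    exact ⟨v, unit_ne_zero hv1, hv2⟩
  · rintro ⟨v, hv0, hv⟩
    obtain ⟨t, ht0, ht1⟩ := normalize3 hv0
    exact ⟨t • v, ht1, fun i => by rw [Matrix.mulVec_smul, hv i]⟩

lemma continuous_coord (i : Fin n) :
    Continuous fun f : CommTuples n SO3 => (↑(f.val i) : M3) :=
  continuous_subtype_val.comp ((continuous_apply i).comp continuous_subtype_val)

lemma isClosed_axisSet (n : ℕ) : IsClosed (axisSet n) := by
  apply isClosed_proj isCompact_unitSphere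
  have heq : axisC n =
      ⋂ i : Fin n, {p : CommTuples n SO3 × R3 | (↑(p.1.val i) : M3) *ᵥ p.2 = p.2} := by
    ext p; simp [axisC, Set.mem_iInter]
  rw [heq]
  exact isClosed_iInter fun i => isClosed_eq
    (Continuous.matrix_mulVec ((continuous_coord i).comp continuous_fst) continuous_snd)
    continuous_snd

/-- witness set for tuples with two perpendicular π-rotations -/
def perpC (n : ℕ) (i j : Fin n) : Set (CommTuples n SO3 × (R3 × R3)) :=
  {p | p.2.1 ⬝ᵥ p.2.2 = 0 ∧
    (↑(p.1.val i) : M3) *ᵥ p.2.1 = p.2.1 ∧ (↑(p.1.val i) : M3).trace = -1 ∧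
    (↑(p.1.val j) : M3) *ᵥ p.2.2 = p.2.2 ∧ (↑(p.1.val j) : M3).trace = -1}

def perpSet (n : ℕ) : Set (CommTuples n SO3) :=
  ⋃ i : Fin n, ⋃ j : Fin n, {f | ∃ q ∈ unitSphere ×ˢ unitSphere, (f, q) ∈ perpC n i j}

lemma isClosed_perpSet (n : ℕ) : IsClosed (perpSet n) := by
  refine isClosed_iUnion_of_finite fun i => isClosed_iUnion_of_finite fun j => ?_
  apply isClosed_proj (isCompact_unitSphere.prod isCompact_unitSphere)
  refine IsClosed.inter ?_ (IsClosed.inter ?_ (IsClosed.inter ?_ (IsClosed.inter ?_ ?_)))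
  · exact isClosed_eq (continuous_dot.comp continuous_snd) continuous_const
  · exact isClosed_eq
      (Continuous.matrix_mulVec ((continuous_coord i).comp continuous_fst)
        (continuous_fst.comp continuous_snd))
      (continuous_fst.comp continuous_snd)
  · exact isClosed_eq (Continuous.matrix_trace ((continuous_coord i).comp continuous_fst))
      continuous_const
  · exact isClosed_eq
      (Continuous.matrix_mulVec ((continuous_coord j).comp continuous_fst)
        (continuous_snd.comp continuous_snd))
      (continuous_snd.comp continuous_snd)
  · exact isClosed_eq (Continuous.matrix_trace ((continuous_coord j).comp continuous_fst))
      continuous_const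

lemma coe_props (f : CommTuples n SO3) (i : Fin n) :
    ((f.val i : M3))ᵀ * (f.val i : M3) = 1 ∧ ((f.val i : M3)).det = 1 :=
  mem_SO3_iff.mp (f.val i).2

lemma coe_comm (f : CommTuples n SO3) (i j : Fin n) :
    (↑(f.val i) : M3) * (↑(f.val j) : M3) = (↑(f.val j) : M3) * (↑(f.val i) : M3) := by
  have h := congrArg Subtype.val (f.prop i j)
  simpa using h

lemma compl_axisSet (n : ℕ) : (axisSet n)ᶜ = perpSet n := by
  ext f
  constructor
  · intro hf
    have hna : ∀ v : R3, (∀ i, (↑(f.val i) : M3) *ᵥ v = v) → v = 0 := by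
      intro v hv
      by_contra hv0
      exact hf ((axisSet_eq n ▸ (Set.mem_setOf_eq ▸ ⟨v, hv0, hv⟩)) : f ∈ axisSet n)
    obtain ⟨i, j, u, w, huu, hww, huw, hu, -, htri, hw, -, htrj⟩ :=
      classify (fun i => (↑(f.val i) : M3)) (fun i => (coe_props f i).1)
        (fun i => (coe_props f i).2) (coe_comm f) hna
    refine Set.mem_iUnion.mpr ⟨i, Set.mem_iUnion.mpr ⟨j, ⟨(u, w), ⟨huu, hww⟩, ?_⟩⟩⟩
    exact ⟨huw, hu, htri, hw, htrj⟩
  · intro hf hmem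
    obtain ⟨i, hi⟩ := Set.mem_iUnion.mp hf
    obtain ⟨j, hj⟩ := Set.mem_iUnion.mp hi
    obtain ⟨⟨u, w⟩, ⟨huu, hww⟩, huw, hu, htri, hw, htrj⟩ := hj
    rw [axisSet_eq n] at hmem
    obtain ⟨v, hv0, hv⟩ := hmem
    exact no_common (coe_props f i).1 (coe_props f i).2 htri
      (coe_props f j).1 (coe_props f j).2 htrj huu hww huw hu hw hv0 (hv i) (hv j)

lemma oneTuple_mem_axisSet (n : ℕ) : oneTuple n SO3 ∈ axisSet n := by
  refine ⟨![1, 0, 0], by simp [unitSphere, dotProduct, Fin.sum_univ_three], fun i => ?_⟩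
  show ((1 : SO3) : M3) *ᵥ ![1, 0, 0] = ![1, 0, 0]
  rw [OneMemClass.coe_one, Matrix.one_mulVec]

lemma continuous_rotM_comp {α : Type*} [TopologicalSpace α] {g h : α → ℝ}
    (hg : Continuous g) (hh : Continuous h) :
    Continuous fun x => rotM (g x) (h x) := by
  apply continuous_matrix
  intro i j
  fin_cases i <;> fin_cases j <;>
    simp [rotM, Matrix.vecHead, Matrix.vecTail] <;> fun_prop

lemma joined_axis (n : ℕ) (f : CommTuples n SO3) (hf : f ∈ axisSet n) :
    JoinedIn (axisSet n) f (oneTuple n SO3) := by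
  obtain ⟨v, hvv, hfix⟩ := hf
  have hvv : v ⬝ᵥ v = 1 := hvv
  obtain ⟨w, hww, hvw⟩ := exists_perp hvv
  have hdec : ∀ i : Fin n, ∃ ab : ℝ × ℝ, ab.1 ^ 2 + ab.2 ^ 2 = 1 ∧
      (↑(f.val i) : M3) = conjRot v w ab.1 ab.2 := by
    intro i
    obtain ⟨a, b, h1, h2⟩ :=
      fix_decomp (coe_props f i).1 (coe_props f i).2 hvv hww hvw (hfix i)
    exact ⟨(a, b), h1, h2⟩
  choose ab hab1 hab2 using hdec
  choose θ hθc hθs using fun i => exists_cos_sin (hab1 i)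
  set G : ℝ → Fin n → M3 := fun t i =>
    conjRot v w (Real.cos ((1 - t) * θ i)) (Real.sin ((1 - t) * θ i)) with hG
  have hGmem : ∀ (t : ℝ) (i : Fin n), G t i ∈ Matrix.specialOrthogonalGroup (Fin 3) ℝ :=
    fun t i => mem_SO3_iff.mpr
      ⟨conjRot_orth hvv hww hvw (Real.cos_sq_add_sin_sq _),
        conjRot_det hvv hww hvw (Real.cos_sq_add_sin_sq _)⟩
  set F : unitInterval → CommTuples n SO3 := fun t =>
    ⟨fun i => ⟨G (↑t) i, hGmem _ i⟩, fun i j => Subtype.ext (by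
      show G (↑t) i * G (↑t) j = G (↑t) j * G (↑t) i
      exact conjRot_comm hvv hww hvw _ _ _ _)⟩ with hF
  have hcont : Continuous F := by
    apply Continuous.subtype_mk
    apply continuous_pi
    intro i
    apply Continuous.subtype_mk
    show Continuous fun t : unitInterval =>
      frameM v w * rotM (Real.cos ((1 - (t:ℝ)) * θ i)) (Real.sin ((1 - (t:ℝ)) * θ i))
        * (frameM v w)ᵀ
    refine Continuous.matrix_mul (Continuous.matrix_mul continuous_const ?_) continuous_const
    exact continuous_rotM_comp
      (Real.continuous_cos.comp (by fun_prop))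
      (Real.continuous_sin.comp (by fun_prop))
  have h0 : F 0 = f := by
    apply Subtype.ext
    funext i
    apply Subtype.ext
    show G (↑(0 : unitInterval)) i = (↑(f.val i) : M3)
    rw [hab2 i]
    show conjRot v w (Real.cos ((1 - ((0 : unitInterval) : ℝ)) * θ i))
      (Real.sin ((1 - ((0 : unitInterval) : ℝ)) * θ i)) = _
    norm_num
    rw [hθc i, hθs i]
  have h1 : F 1 = oneTuple n SO3 := by
    apply Subtype.ext
    funext i
    apply Subtype.ext
    show G (↑(1 : unitInterval)) i = ((1 : SO3) : M3)
    rw [OneMemClass.coe_one]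
    show conjRot v w (Real.cos ((1 - ((1 : unitInterval) : ℝ)) * θ i))
      (Real.sin ((1 - ((1 : unitInterval) : ℝ)) * θ i)) = 1
    norm_num
    exact conjRot_one hvv hww hvw
  exact ⟨⟨⟨F, hcont⟩, h0, h1⟩, fun t =>
    ⟨v, hvv, fun i => conjRot_fix hvv hww hvw _ _⟩⟩

end mainsec
end SO3Axis

/-- For every `n ≥ 1`, the connected component `Mₙ⁺(SO(3))` of the identity `n`-tuple in
`Hom(ℤⁿ, SO(3))` is exactly the set of commuting `n`-tuples `(A₁, …, Aₙ)` admitting a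
common nonzero fixed vector `v` (i.e. all the `Aᵢ` are rotations about a common axis). -/
theorem MPlus_SO3_eq_common_axis (n : ℕ) (hn : 1 ≤ n) :
    connectedComponent (oneTuple n SO3) =
      {f : CommTuples n SO3 |
        ∃ v : Fin 3 → ℝ, v ≠ 0 ∧
          ∀ i, ((f.val i : Matrix (Fin 3) (Fin 3) ℝ)) *ᵥ v = v} := by
  rw [← SO3Axis.axisSet_eq n]
  apply Set.Subset.antisymm
  · refine IsClopen.connectedComponent_subset
      ⟨SO3Axis.isClosed_axisSet n, ?_⟩ (SO3Axis.oneTuple_mem_axisSet n)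
    rw [← isClosed_compl_iff, SO3Axis.compl_axisSet]
    exact SO3Axis.isClosed_perpSet n
  · have hpc : IsPathConnected (SO3Axis.axisSet n) :=
      ⟨oneTuple n SO3, SO3Axis.oneTuple_mem_axisSet n,
        fun _ hy => (SO3Axis.joined_axis n _ hy).symm⟩
    exact hpc.isConnected.isPreconnected.subset_connectedComponent
      (SO3Axis.oneTuple_mem_axisSet n)
end

section
/- The space Hom(ℤ², SO(3)) of ordered commuting pairs of elements of SO(3) has exactly two connected components. -/
open Matrix Real

namespace SO3Proof

abbrev M3 := Matrix (Fin 3) (Fin 3) ℝ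
abbrev V3 := Fin 3 → ℝ

/-- predicate for special orthogonal matrices -/
def SO (A : M3) : Prop := Aᵀ * A = 1 ∧ A.det = 1

lemma mem_so3_iff {A : M3} :
    A ∈ Matrix.specialOrthogonalGroup (Fin 3) ℝ ↔ SO A := by
  rw [Matrix.mem_specialOrthogonalGroup_iff, Matrix.mem_orthogonalGroup_iff']
  rfl

lemma SO.mul_transpose {A : M3} (h : SO A) : A * Aᵀ = 1 :=
  mul_eq_one_comm.mp h.1

lemma SO.one : SO (1 : M3) := by constructor <;> simp

lemma SO.mul {A B : M3} (hA : SO A) (hB : SO B) : SO (A * B) := by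
  constructor
  · rw [Matrix.transpose_mul, Matrix.mul_assoc, ← Matrix.mul_assoc Aᵀ, hA.1, Matrix.one_mul, hB.1]
  · rw [Matrix.det_mul, hA.2, hB.2, one_mul]

lemma SO.transpose {A : M3} (h : SO A) : SO Aᵀ := by
  refine ⟨?_, by rw [Matrix.det_transpose]; exact h.2⟩
  rw [Matrix.transpose_transpose]
  exact h.mul_transpose

lemma SO.dot_mulVec {A : M3} (h : SO A) (x y : V3) : (A *ᵥ x) ⬝ᵥ (A *ᵥ y) = x ⬝ᵥ y := by
  rw [Matrix.dotProduct_mulVec, ← Matrix.mulVec_transpose, Matrix.mulVec_mulVec, h.1,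
    Matrix.one_mulVec]

/-- the cofactor matrix of a 3x3 matrix -/
def cof (M : M3) : M3 := Matrix.of
  ![![M 1 1 * M 2 2 - M 1 2 * M 2 1, M 1 2 * M 2 0 - M 1 0 * M 2 2, M 1 0 * M 2 1 - M 1 1 * M 2 0],
    ![M 0 2 * M 2 1 - M 0 1 * M 2 2, M 0 0 * M 2 2 - M 0 2 * M 2 0, M 0 1 * M 2 0 - M 0 0 * M 2 1],
    ![M 0 1 * M 1 2 - M 0 2 * M 1 1, M 0 2 * M 1 0 - M 0 0 * M 1 2, M 0 0 * M 1 1 - M 0 1 * M 1 0]]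

lemma cof_cross (M : M3) (u v : V3) : (cof M) *ᵥ (u ⨯₃ v) = (M *ᵥ u) ⨯₃ (M *ᵥ v) := by
  funext i
  fin_cases i <;>
    simp [cof, cross_apply, Matrix.mulVec, dotProduct, Fin.sum_univ_three] <;> ring

lemma transpose_mul_cof (M : M3) : Mᵀ * cof M = M.det • 1 := by
  ext i j
  fin_cases i <;> fin_cases j <;>
    simp [cof, Matrix.mul_apply, Fin.sum_univ_three, Matrix.det_fin_three, Matrix.one_apply] <;>
    ring

lemma SO.cof_eq {A : M3} (h : SO A) : cof A = A := by
  have h1 : Aᵀ * cof A = Aᵀ * A := by rw [transpose_mul_cof, h.2, h.1, one_smul]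
  calc cof A = (A * Aᵀ) * cof A := by rw [h.mul_transpose, Matrix.one_mul]
    _ = A * (Aᵀ * A) := by rw [Matrix.mul_assoc, h1]
    _ = A := by rw [h.1, Matrix.mul_one]

lemma SO.mulVec_cross {A : M3} (h : SO A) (u v : V3) :
    A *ᵥ (u ⨯₃ v) = (A *ᵥ u) ⨯₃ (A *ᵥ v) := by
  rw [← cof_cross, h.cof_eq]

lemma SO.det_sub_one {A : M3} (h : SO A) : (A - 1).det = 0 := by
  have h1 : (A - 1).det = (Aᵀ - 1).det := by rw [← Matrix.det_transpose (A - 1), transpose_sub,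
    transpose_one]
  have h2 : Aᵀ - 1 = Aᵀ * (1 - A) := by rw [Matrix.mul_sub, Matrix.mul_one, h.1]
  have h3 : ((1 : M3) - A).det = - (A - 1).det := by
    rw [← neg_sub A 1, Matrix.det_neg]; simp; ring
  have h4 : (Aᵀ).det = 1 := by rw [Matrix.det_transpose]; exact h.2
  have h5 : (A - 1).det = - (A - 1).det := by
    conv_lhs => rw [h1, h2]
    rw [Matrix.det_mul, h4, one_mul, h3]
  linarith

lemma SO.exists_fixed {A : M3} (h : SO A) : ∃ v : V3, v ≠ 0 ∧ A *ᵥ v = v := by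
  obtain ⟨v, hv0, hv⟩ := (Matrix.exists_mulVec_eq_zero_iff).mpr h.det_sub_one
  refine ⟨v, hv0, ?_⟩
  rwa [Matrix.sub_mulVec, Matrix.one_mulVec, sub_eq_zero] at hv

lemma collinear_of_cross_eq_zero {v u : V3} (hv : v ≠ 0) (h : v ⨯₃ u = 0) :
    ∃ c : ℝ, u = c • v := by
  have key : ∀ i j, v i * u j = v j * u i := by
    have h0 := congrFun h 0
    have h1 := congrFun h 1
    have h2 := congrFun h 2
    simp [cross_apply] at h0 h1 h2
    intro i j
    fin_cases i <;> fin_cases j <;> simp <;> linarith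
  obtain ⟨i, hi⟩ : ∃ i, v i ≠ 0 := by
    by_contra hc
    push_neg at hc
    exact hv (funext hc)
  refine ⟨u i / v i, funext fun j => ?_⟩
  have := key i j
  field_simp
  rw [Pi.smul_apply, smul_eq_mul, div_mul_eq_mul_div, eq_div_iff hi]
  linear_combination key i j

/-- matrix with columns v, u, w -/
def colMat (v u w : V3) : M3 := (Matrix.of ![v, u, w])ᵀ

lemma mul_colMat (A : M3) (v u w : V3) :
    A * colMat v u w = colMat (A *ᵥ v) (A *ᵥ u) (A *ᵥ w) := by
  ext i j
  fin_cases j <;>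
    simp [colMat, Matrix.mul_apply, Matrix.mulVec, dotProduct, Fin.sum_univ_three,
      Matrix.transpose_apply, Matrix.vecHead, Matrix.vecTail]

lemma det_colMat (v u w : V3) : (colMat v u w).det = v ⬝ᵥ (u ⨯₃ w) := by
  rw [colMat, Matrix.det_transpose]
  exact (triple_product_eq_det v u w).symm

lemma SO.eq_one_of_indep_fixed {A : M3} (h : SO A) {v u : V3} (hv : A *ᵥ v = v)
    (hu : A *ᵥ u = u) (hind : v ⨯₃ u ≠ 0) : A = 1 := by
  set w := v ⨯₃ u with hw
  have hAw : A *ᵥ w = w := by rw [hw, h.mulVec_cross, hv, hu]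
  have hAP : A * colMat v u w = colMat v u w := by rw [mul_colMat, hv, hu, hAw]
  have hdet : (colMat v u w).det ≠ 0 := by
    rw [det_colMat, triple_product_permutation]
    rw [triple_product_permutation u w v]
    rw [← hw]
    exact fun hc => hind (dotProduct_self_eq_zero.mp hc)
  have hinv : IsUnit (colMat v u w).det := isUnit_iff_ne_zero.mpr hdet
  calc A = A * (colMat v u w * (colMat v u w)⁻¹) := by
        rw [Matrix.mul_nonsing_inv _ hinv, Matrix.mul_one]
    _ = colMat v u w * (colMat v u w)⁻¹ := by rw [← Matrix.mul_assoc, hAP]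
    _ = 1 := Matrix.mul_nonsing_inv _ hinv

lemma SO.fixed_line {A : M3} (h : SO A) (hA : A ≠ 1) {v u : V3} (hv0 : v ≠ 0)
    (hv : A *ᵥ v = v) (hu : A *ᵥ u = u) : ∃ c : ℝ, u = c • v := by
  rcases eq_or_ne (v ⨯₃ u) 0 with hc | hc
  · exact collinear_of_cross_eq_zero hv0 hc
  · exact absurd (h.eq_one_of_indep_fixed hv hu hc) hA

lemma dot_self_pos {v : V3} (hv : v ≠ 0) : 0 < v ⬝ᵥ v := by
  have hnn : 0 ≤ v ⬝ᵥ v := Finset.sum_nonneg fun i _ => mul_self_nonneg (v i)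
  rcases lt_or_eq_of_le hnn with h | h
  · exact h
  · exact absurd (dotProduct_self_eq_zero.mp h.symm) hv

lemma eigen_pm_one {B : M3} (hB : SO B) {v : V3} (hv0 : v ≠ 0) {c : ℝ}
    (h : B *ᵥ v = c • v) : c = 1 ∨ c = -1 := by
  have h1 : (B *ᵥ v) ⬝ᵥ (B *ᵥ v) = v ⬝ᵥ v := hB.dot_mulVec v v
  rw [h, smul_dotProduct, dotProduct_smul, smul_eq_mul, smul_eq_mul] at h1
  have h2 := dot_self_pos hv0
  have h4 : (c - 1) * ((c + 1) * (v ⬝ᵥ v)) = 0 := by linear_combination h1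
  rcases mul_eq_zero.mp h4 with h | h
  · exact Or.inl (by linarith)
  rcases mul_eq_zero.mp h with h | h
  · exact Or.inr (by linarith)
  · exact absurd h (ne_of_gt h2)

theorem classify {A B : M3} (hA : SO A) (hB : SO B) (hc : A * B = B * A) :
    (∃ v : V3, v ≠ 0 ∧ A *ᵥ v = v ∧ B *ᵥ v = v) ∨
    (∃ v w : V3, v ≠ 0 ∧ w ≠ 0 ∧ v ⬝ᵥ w = 0 ∧
      A *ᵥ v = v ∧ A *ᵥ w = -w ∧ B *ᵥ v = -v ∧ B *ᵥ w = w) := by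
  rcases eq_or_ne A 1 with rfl | hA1
  · obtain ⟨w, hw0, hw⟩ := hB.exists_fixed
    exact Or.inl ⟨w, hw0, Matrix.one_mulVec w, hw⟩
  rcases eq_or_ne B 1 with rfl | hB1
  · obtain ⟨v, hv0, hv⟩ := hA.exists_fixed
    exact Or.inl ⟨v, hv0, hv, Matrix.one_mulVec v⟩
  obtain ⟨v, hv0, hv⟩ := hA.exists_fixed
  have hABv : A *ᵥ (B *ᵥ v) = B *ᵥ v := by
    rw [Matrix.mulVec_mulVec, hc, ← Matrix.mulVec_mulVec, hv]
  obtain ⟨c, hcv⟩ := hA.fixed_line hA1 hv0 hv hABv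
  rcases eigen_pm_one hB hv0 hcv with rfl | rfl
  · exact Or.inl ⟨v, hv0, hv, by rw [hcv, one_smul]⟩
  · obtain ⟨w, hw0, hw⟩ := hB.exists_fixed
    have hBAw : B *ᵥ (A *ᵥ w) = A *ᵥ w := by
      rw [Matrix.mulVec_mulVec, ← hc, ← Matrix.mulVec_mulVec, hw]
    obtain ⟨d, hdw⟩ := hB.fixed_line hB1 hw0 hw hBAw
    rcases eigen_pm_one hA hw0 hdw with rfl | rfl
    · exact Or.inl ⟨w, hw0, by rw [hdw, one_smul], hw⟩
    · have hBv : B *ᵥ v = -v := by rw [hcv, neg_one_smul]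
      have hAw : A *ᵥ w = -w := by rw [hdw, neg_one_smul]
      have horth : v ⬝ᵥ w = 0 := by
        have hd := hB.dot_mulVec v w
        rw [hBv, hw, neg_dotProduct] at hd
        linarith
      exact Or.inr ⟨v, w, hv0, hw0, horth, hv, hAw, hBv, hw⟩

/-- block rotation matrix fixing e0 -/
def rot (c s : ℝ) : M3 := Matrix.of ![![1,0,0],![0,c,-s],![0,s,c]]

lemma rot_one : rot 1 0 = 1 := by
  ext i j; fin_cases i <;> fin_cases j <;> simp [rot, Matrix.one_apply, Matrix.vecHead, Matrix.vecTail]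

lemma rot_mul (c s c' s' : ℝ) :
    rot c s * rot c' s' = rot (c*c' - s*s') (s*c' + c*s') := by
  ext i j
  fin_cases i <;> fin_cases j <;>
    simp [rot, Matrix.mul_apply, Fin.sum_univ_three, Matrix.vecHead, Matrix.vecTail] <;> ring

lemma rot_comm (c s c' s' : ℝ) : rot c s * rot c' s' = rot c' s' * rot c s := by
  rw [rot_mul, rot_mul]; congr 1 <;> ring

lemma SO_rot {c s : ℝ} (h : c^2 + s^2 = 1) : SO (rot c s) := by
  constructor
  · ext i j
    fin_cases i <;> fin_cases j <;>
      simp [rot, Matrix.mul_apply, Matrix.transpose_apply, Matrix.one_apply,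
        Fin.sum_univ_three, Matrix.vecHead, Matrix.vecTail] <;> nlinarith [h]
  · rw [Matrix.det_fin_three]
    simp [rot, Matrix.vecHead, Matrix.vecTail]
    nlinarith [h]

lemma trace_rot (c s : ℝ) : (rot c s).trace = 1 + 2*c := by
  simp [rot, Matrix.trace, Fin.sum_univ_three, Matrix.diag, Matrix.vecHead, Matrix.vecTail]
  ring

lemma trace_conj {P M : M3} (hP : SO P) : (P * M * Pᵀ).trace = M.trace := by
  rw [Matrix.trace_mul_comm, ← Matrix.mul_assoc, hP.1, Matrix.one_mul]

lemma conj_recover {P A Q : M3} (hP : SO P) (h : A * P = P * Q) : A = P * Q * Pᵀ := by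
  rw [← h, Matrix.mul_assoc, hP.mul_transpose, Matrix.mul_one]

lemma transpose_mul_colMat (v u w : V3) :
    (colMat v u w)ᵀ * colMat v u w =
      Matrix.of ![![v⬝ᵥv, v⬝ᵥu, v⬝ᵥw],![u⬝ᵥv,u⬝ᵥu,u⬝ᵥw],![w⬝ᵥv,w⬝ᵥu,w⬝ᵥw]] := by
  ext i j
  fin_cases i <;> fin_cases j <;>
    simp [colMat, Matrix.mul_apply, Matrix.transpose_apply, dotProduct,
      Fin.sum_univ_three, Matrix.vecHead, Matrix.vecTail] <;> ring

lemma SO_colMat {v w : V3} (hv : v ⬝ᵥ v = 1) (hw : w ⬝ᵥ w = 1) (hvw : v ⬝ᵥ w = 0) :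
    SO (colMat v w (v ⨯₃ w)) := by
  have hwv : w ⬝ᵥ v = 0 := by rwa [dotProduct_comm]
  have hcc : (v ⨯₃ w) ⬝ᵥ (v ⨯₃ w) = 1 := by
    rw [cross_dot_cross, hv, hw, hvw, hwv]; ring
  have hc1 : (v ⨯₃ w) ⬝ᵥ v = 0 := by rw [dotProduct_comm]; exact dot_self_cross v w
  have hc2 : (v ⨯₃ w) ⬝ᵥ w = 0 := by rw [dotProduct_comm]; exact dot_cross_self v w
  constructor
  · rw [transpose_mul_colMat, hv, hw, hvw, hwv, hcc, hc1, hc2, dot_self_cross, dot_cross_self]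
    ext i j
    fin_cases i <;> fin_cases j <;>
      simp [Matrix.one_apply, Matrix.vecHead, Matrix.vecTail]
  · rw [det_colMat, triple_product_permutation, triple_product_permutation w (v ⨯₃ w) v, hcc]

lemma colMat_mulVec_e0 (v u w : V3) : colMat v u w *ᵥ ![1,0,0] = v := by
  funext i
  simp [colMat, Matrix.mulVec, dotProduct, Fin.sum_univ_three, Matrix.transpose_apply,
    Matrix.vecHead, Matrix.vecTail]

lemma block_of_fix_e0 {Q : M3} (h : SO Q) (he : Q *ᵥ ![1,0,0] = ![1,0,0]) :
    ∃ c s : ℝ, c^2 + s^2 = 1 ∧ Q = rot c s := by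
  have hcol : ∀ i, Q i 0 = (![1,0,0] : V3) i := by
    intro i
    have := congrFun he i
    simpa [Matrix.mulVec, dotProduct, Fin.sum_univ_three] using this
  have h00 : Q 0 0 = 1 := hcol 0
  have h10 : Q 1 0 = 0 := hcol 1
  have h20 : Q 2 0 = 0 := hcol 2
  have hrow := fun i j => congrFun (congrFun h.mul_transpose i) j
  have hcolo := fun i j => congrFun (congrFun h.1 i) j
  have hr00 := hrow 0 0
  simp [Matrix.mul_apply, Matrix.transpose_apply, Matrix.one_apply, Fin.sum_univ_three] at hr00
  have h01 : Q 0 1 = 0 := by nlinarith [hr00, sq_nonneg (Q 0 1), sq_nonneg (Q 0 2)]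
  have h02 : Q 0 2 = 0 := by nlinarith [hr00, sq_nonneg (Q 0 1), sq_nonneg (Q 0 2)]
  have hc11 := hcolo 1 1
  have hc12 := hcolo 1 2
  simp [Matrix.mul_apply, Matrix.transpose_apply, Matrix.one_apply, Fin.sum_univ_three,
    h01, h02] at hc11 hc12
  have hdet : Q.det = 1 := h.2
  rw [Matrix.det_fin_three] at hdet
  rw [h00, h01, h02, h10, h20] at hdet
  have hdet' : Q 1 1 * Q 2 2 - Q 1 2 * Q 2 1 = 1 := by linarith [hdet]
  refine ⟨Q 1 1, Q 2 1, by nlinarith [hc11], ?_⟩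
  have hd : Q 2 2 = Q 1 1 := by
    linear_combination (Q 1 1) * hdet' + (Q 2 1) * hc12 - (Q 2 2) * hc11
  have hb : Q 1 2 = - Q 2 1 := by
    linear_combination (Q 1 1) * hc12 - (Q 2 1) * hdet' - (Q 1 2) * hc11
  ext i j
  fin_cases i <;> fin_cases j <;> simp [rot, Matrix.vecHead, Matrix.vecTail] <;> first
    | exact h00 | exact h01 | exact h02 | exact h10 | exact h20
    | rfl | exact hb | (rw [hb]; ring) | exact hd

lemma exists_unit_scale {v : V3} (hv : v ≠ 0) :
    ∃ (u : V3) (r : ℝ), r ≠ 0 ∧ u = r • v ∧ u ⬝ᵥ u = 1 := by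
  have h2 := dot_self_pos hv
  set r := (Real.sqrt (v ⬝ᵥ v))⁻¹ with hr
  have hs : Real.sqrt (v ⬝ᵥ v) > 0 := Real.sqrt_pos.mpr h2
  have hrne : r ≠ 0 := inv_ne_zero (ne_of_gt hs)
  refine ⟨r • v, r, hrne, rfl, ?_⟩
  have hsq : Real.sqrt (v ⬝ᵥ v) * Real.sqrt (v ⬝ᵥ v) = v ⬝ᵥ v := Real.mul_self_sqrt h2.le
  rw [smul_dotProduct, dotProduct_smul, smul_eq_mul, smul_eq_mul, hr, ← hsq]
  field_simp
  have hs' := hs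
  simp [dotProduct, Fin.sum_univ_three] at hs'
  rw [Real.sqrt_sq hs.le]

lemma exists_perp {v : V3} (hv : v ≠ 0) : ∃ w : V3, w ≠ 0 ∧ v ⬝ᵥ w = 0 := by
  by_cases h0 : v 0 ≠ 0
  · refine ⟨![v 1, -(v 0), 0], fun hc => h0 ?_, ?_⟩
    · have := congrFun hc 1
      simp at this
      linarith
    · simp [dotProduct, Fin.sum_univ_three]
      ring
  push_neg at h0
  by_cases h1 : v 1 ≠ 0
  · refine ⟨![-(v 1), v 0, 0], fun hc => h1 ?_, ?_⟩
    · have := congrFun hc 0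
      simp at this
      linarith
    · simp [dotProduct, Fin.sum_univ_three]
      ring
  push_neg at h1
  have h2 : v 2 ≠ 0 := by
    intro h2
    apply hv
    funext i
    fin_cases i <;> assumption
  refine ⟨![0, -(v 2), v 1], fun hc => h2 ?_, ?_⟩
  · have := congrFun hc 1
    simp at this
    linarith
  · simp [dotProduct, Fin.sum_univ_three]
    ring

/-- simultaneous block-diagonalization of a commuting pair with a common unit fixed vector -/
theorem pair_form {A B : M3} (hA : SO A) (hB : SO B) {v : V3} (hvv : v ⬝ᵥ v = 1)
    (hAv : A *ᵥ v = v) (hBv : B *ᵥ v = v) :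
    ∃ (P : M3) (c s c' s' : ℝ), SO P ∧ c^2 + s^2 = 1 ∧ c'^2 + s'^2 = 1 ∧
      A = P * rot c s * Pᵀ ∧ B = P * rot c' s' * Pᵀ := by
  have hv0 : v ≠ 0 := by
    intro hc
    rw [hc] at hvv
    simp at hvv
  obtain ⟨w0, hw00, hvw0⟩ := exists_perp hv0
  obtain ⟨w, r, hr0, hwr, hww⟩ := exists_unit_scale hw00
  have hvw : v ⬝ᵥ w = 0 := by rw [hwr, dotProduct_smul, hvw0, smul_zero]
  set P := colMat v w (v ⨯₃ w) with hP
  have hPso : SO P := SO_colMat hvv hww hvw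
  have hPe0 : P *ᵥ ![1,0,0] = v := colMat_mulVec_e0 _ _ _
  have hPtv : Pᵀ *ᵥ v = ![1,0,0] := by
    rw [← hPe0, Matrix.mulVec_mulVec, hPso.1, Matrix.one_mulVec]
  have key : ∀ M : M3, SO M → M *ᵥ v = v →
      ∃ c s : ℝ, c^2 + s^2 = 1 ∧ M = P * rot c s * Pᵀ := by
    intro M hM hMv
    have hQso : SO (Pᵀ * M * P) := (hPso.transpose.mul hM).mul hPso
    have hQe : (Pᵀ * M * P) *ᵥ ![1,0,0] = ![1,0,0] := by
      rw [← Matrix.mulVec_mulVec, hPe0, ← Matrix.mulVec_mulVec, hMv, hPtv]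
    obtain ⟨c, s, hcs, hQ⟩ := block_of_fix_e0 hQso hQe
    refine ⟨c, s, hcs, ?_⟩
    rw [← hQ]
    rw [← Matrix.mul_assoc, ← Matrix.mul_assoc, hPso.mul_transpose, Matrix.one_mul,
      Matrix.mul_assoc, hPso.mul_transpose, Matrix.mul_one]
  obtain ⟨c, s, hcs, hAeq⟩ := key A hA hAv
  obtain ⟨c', s', hcs', hBeq⟩ := key B hB hBv
  exact ⟨P, c, s, c', s', hPso, hcs, hcs', hAeq, hBeq⟩

/-- diag (1,-1,-1) -/
def D1 : M3 := rot (-1) 0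

/-- diag (-1,1,-1) -/
def D2 : M3 := Matrix.of ![![-1,0,0],![0,1,0],![0,0,-1]]

lemma SO_D1 : SO D1 := SO_rot (by norm_num)

lemma SO_D2 : SO D2 := by
  constructor
  · ext i j
    fin_cases i <;> fin_cases j <;>
      simp [D2, Matrix.mul_apply, Matrix.transpose_apply, Matrix.one_apply,
        Fin.sum_univ_three, Matrix.vecHead, Matrix.vecTail]
  · rw [Matrix.det_fin_three]
    simp [D2, Matrix.vecHead, Matrix.vecTail]

lemma colMat_mul_D1 (v u w : V3) : colMat v u w * D1 = colMat v (-u) (-w) := by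
  ext i j
  fin_cases j <;>
    simp [colMat, D1, rot, Matrix.mul_apply, Fin.sum_univ_three, Matrix.transpose_apply,
      Matrix.vecHead, Matrix.vecTail]

lemma colMat_mul_D2 (v u w : V3) : colMat v u w * D2 = colMat (-v) u (-w) := by
  ext i j
  fin_cases j <;>
    simp [colMat, D2, Matrix.mul_apply, Fin.sum_univ_three, Matrix.transpose_apply,
      Matrix.vecHead, Matrix.vecTail]

theorem exotic_form {A B : M3} (hA : SO A) (hB : SO B) {v w : V3}
    (hvv : v ⬝ᵥ v = 1) (hww : w ⬝ᵥ w = 1) (hvw : v ⬝ᵥ w = 0)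
    (hAv : A *ᵥ v = v) (hAw : A *ᵥ w = -w) (hBv : B *ᵥ v = -v) (hBw : B *ᵥ w = w) :
    ∃ P : M3, SO P ∧ A = P * D1 * Pᵀ ∧ B = P * D2 * Pᵀ := by
  set P := colMat v w (v ⨯₃ w) with hP
  have hPso : SO P := SO_colMat hvv hww hvw
  have hAc : A *ᵥ (v ⨯₃ w) = -(v ⨯₃ w) := by
    rw [hA.mulVec_cross, hAv, hAw, ← LinearMap.map_neg]
  have hBc : B *ᵥ (v ⨯₃ w) = -(v ⨯₃ w) := by
    rw [hB.mulVec_cross, hBv, hBw]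
    rw [show (-v) ⨯₃ w = -(v ⨯₃ w) by rw [map_neg, LinearMap.neg_apply]]
  refine ⟨P, hPso, ?_, ?_⟩
  · refine conj_recover hPso ?_
    rw [hP, mul_colMat, colMat_mul_D1, hAv, hAw, hAc]
  · refine conj_recover hPso ?_
    rw [hP, mul_colMat, colMat_mul_D2, hBv, hBw, hBc]

lemma exists_cos_sin {c s : ℝ} (h : c^2 + s^2 = 1) :
    ∃ θ : ℝ, Real.cos θ = c ∧ Real.sin θ = s := by
  have hc1 : -1 ≤ c := by nlinarith [sq_nonneg s]
  have hc2 : c ≤ 1 := by nlinarith [sq_nonneg s]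
  have hs2 : s^2 = 1 - c^2 := by linarith
  rcases le_or_gt 0 s with hs | hs
  · refine ⟨Real.arccos c, Real.cos_arccos hc1 hc2, ?_⟩
    rw [Real.sin_arccos, ← hs2, Real.sqrt_sq hs]
  · refine ⟨-Real.arccos c, by rw [Real.cos_neg]; exact Real.cos_arccos hc1 hc2, ?_⟩
    rw [Real.sin_neg, Real.sin_arccos, ← hs2]
    rw [show s^2 = (-s)^2 by ring, Real.sqrt_sq (by linarith)]
    ring

lemma torus_trace_ineq {c s c' s' : ℝ} (h : c^2 + s^2 = 1) (h' : c'^2 + s'^2 = 1) :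
    0 ≤ (1 + 2*c) + (1 + 2*c') + (1 + 2*(c*c' - s*s')) := by
  nlinarith [sq_nonneg (c + c' + 1), sq_nonneg (s + s'), sq_nonneg (s - s'),
    sq_nonneg (c - c'), sq_nonneg (c + c'), sq_nonneg (c*c' - s*s' + 1)]

lemma so3_mem (A : SO3) : SO (A : M3) := mem_so3_iff.mp A.2

/-- constructor for SO3 elements -/
def so3 (A : M3) (h : SO A) : SO3 := ⟨A, mem_so3_iff.mpr h⟩

/-- constructor for commuting pairs -/
def mk2 (A B : SO3) (h : A * B = B * A) : CommTuples 2 SO3 :=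
  ⟨![A, B], by
    intro i j
    fin_cases i <;> fin_cases j <;> simp [h]⟩

/-- the sum of traces invariant -/
noncomputable def ts (x : CommTuples 2 SO3) : ℝ :=
  ((x.1 0 : M3)).trace + ((x.1 1 : M3)).trace + ((x.1 0 : M3) * (x.1 1 : M3)).trace

lemma continuous_entry (i : Fin 2) : Continuous fun x : CommTuples 2 SO3 => ((x.1 i : M3)) :=
  continuous_subtype_val.comp ((continuous_apply i).comp continuous_subtype_val)

lemma ts_continuous : Continuous ts :=
  (((continuous_entry 0).matrix_trace.add (continuous_entry 1).matrix_trace).add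
    ((continuous_entry 0).matrix_mul (continuous_entry 1)).matrix_trace)

lemma conj_pair_mul {P M N : M3} (hP : SO P) :
    (P * M * Pᵀ) * (P * N * Pᵀ) = P * (M * N) * Pᵀ := by
  have h1 : Pᵀ * (P * N) = N := by rw [← Matrix.mul_assoc, hP.1, Matrix.one_mul]
  calc (P * M * Pᵀ) * (P * N * Pᵀ) = P * M * (Pᵀ * (P * N)) * Pᵀ := by
        simp only [Matrix.mul_assoc]
    _ = P * (M * N) * Pᵀ := by rw [h1]; simp only [Matrix.mul_assoc]

lemma trace_D1 : D1.trace = -1 := by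
  rw [D1, trace_rot]; norm_num

lemma trace_D2 : D2.trace = -1 := by
  simp [D2, Matrix.trace, Fin.sum_univ_three, Matrix.diag, Matrix.vecHead, Matrix.vecTail]

lemma trace_D1_mul_D2 : (D1 * D2).trace = -1 := by
  simp [D1, D2, rot, Matrix.trace, Fin.sum_univ_three, Matrix.diag, Matrix.mul_apply,
    Matrix.vecHead, Matrix.vecTail]

/-- every commuting pair is conjugate to a pair of block rotations or to the standard
exotic pair -/
theorem normal_form (x : CommTuples 2 SO3) :
    (∃ (P : M3) (c s c' s' : ℝ), SO P ∧ c^2 + s^2 = 1 ∧ c'^2 + s'^2 = 1 ∧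
      (x.1 0 : M3) = P * rot c s * Pᵀ ∧ (x.1 1 : M3) = P * rot c' s' * Pᵀ) ∨
    (∃ P : M3, SO P ∧ (x.1 0 : M3) = P * D1 * Pᵀ ∧ (x.1 1 : M3) = P * D2 * Pᵀ) := by
  have hA : SO (x.1 0 : M3) := so3_mem _
  have hB : SO (x.1 1 : M3) := so3_mem _
  have hc : (x.1 0 : M3) * (x.1 1 : M3) = (x.1 1 : M3) * (x.1 0 : M3) :=
    congrArg Subtype.val (x.2 0 1)
  rcases classify hA hB hc with ⟨v, hv0, hAv, hBv⟩ | ⟨v, w, hv0, hw0, hvw, hAv, hAw, hBv, hBw⟩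
  · obtain ⟨u, r, hr0, hu, huu⟩ := exists_unit_scale hv0
    have hAu : (x.1 0 : M3) *ᵥ u = u := by rw [hu, Matrix.mulVec_smul, hAv]
    have hBu : (x.1 1 : M3) *ᵥ u = u := by rw [hu, Matrix.mulVec_smul, hBv]
    obtain ⟨P, c, s, c', s', hP, hcs, hcs', hAeq, hBeq⟩ := pair_form hA hB huu hAu hBu
    exact Or.inl ⟨P, c, s, c', s', hP, hcs, hcs', hAeq, hBeq⟩
  · obtain ⟨u, r, hr0, hu, huu⟩ := exists_unit_scale hv0
    obtain ⟨z, t, ht0, hz, hzz⟩ := exists_unit_scale hw0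
    have huz : u ⬝ᵥ z = 0 := by
      rw [hu, hz, smul_dotProduct, dotProduct_smul, hvw]
      simp
    have hAu : (x.1 0 : M3) *ᵥ u = u := by rw [hu, Matrix.mulVec_smul, hAv]
    have hBu : (x.1 1 : M3) *ᵥ u = -u := by rw [hu, Matrix.mulVec_smul, hBv, smul_neg]
    have hAz : (x.1 0 : M3) *ᵥ z = -z := by rw [hz, Matrix.mulVec_smul, hAw, smul_neg]
    have hBz : (x.1 1 : M3) *ᵥ z = z := by rw [hz, Matrix.mulVec_smul, hBw]
    obtain ⟨P, hP, hAeq, hBeq⟩ := exotic_form hA hB huu hzz huz hAu hAz hBu hBz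
    exact Or.inr ⟨P, hP, hAeq, hBeq⟩

lemma ts_torus {x : CommTuples 2 SO3} {P : M3} {c s c' s' : ℝ} (hP : SO P)
    (hAeq : (x.1 0 : M3) = P * rot c s * Pᵀ) (hBeq : (x.1 1 : M3) = P * rot c' s' * Pᵀ) :
    ts x = (1 + 2*c) + (1 + 2*c') + (1 + 2*(c*c' - s*s')) := by
  rw [ts, hAeq, hBeq, conj_pair_mul hP, rot_mul, trace_conj hP, trace_conj hP,
    trace_conj hP, trace_rot, trace_rot, trace_rot]

lemma ts_exotic {x : CommTuples 2 SO3} {P : M3} (hP : SO P)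
    (hAeq : (x.1 0 : M3) = P * D1 * Pᵀ) (hBeq : (x.1 1 : M3) = P * D2 * Pᵀ) :
    ts x = -3 := by
  rw [ts, hAeq, hBeq, conj_pair_mul hP, trace_conj hP, trace_conj hP, trace_conj hP,
    trace_D1, trace_D2, trace_D1_mul_D2]
  norm_num

theorem ts_dichotomy (x : CommTuples 2 SO3) : ts x = -3 ∨ 0 ≤ ts x := by
  rcases normal_form x with ⟨P, c, s, c', s', hP, hcs, hcs', hAeq, hBeq⟩ |
    ⟨P, hP, hAeq, hBeq⟩
  · right
    rw [ts_torus hP hAeq hBeq]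
    exact torus_trace_ineq hcs hcs'
  · exact Or.inl (ts_exotic hP hAeq hBeq)

/-- the low fiber: exotic pairs -/
def Slow : Set (CommTuples 2 SO3) := {x | ts x < -1}

/-- the high fiber: torus pairs -/
def Shigh : Set (CommTuples 2 SO3) := {x | ¬ ts x < -1}

/-- the pair of identity matrices -/
def one2 : CommTuples 2 SO3 := mk2 1 1 rfl

lemma conjrot_so {P : M3} (hP : SO P) (a : ℝ) : SO (P * rot (Real.cos a) (Real.sin a) * Pᵀ) :=
  (hP.mul (SO_rot (Real.cos_sq_add_sin_sq a))).mul hP.transpose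

lemma continuous_conj_rot (P : M3) (θ : ℝ) :
    Continuous fun t : ℝ => P * rot (Real.cos (t*θ)) (Real.sin (t*θ)) * Pᵀ := by
  refine Continuous.matrix_mul (Continuous.matrix_mul continuous_const ?_) continuous_const
  apply continuous_matrix
  intro i j
  fin_cases i <;> fin_cases j <;> simp [rot, Matrix.vecHead, Matrix.vecTail] <;> fun_prop

lemma continuous_pair {α : Type*} [TopologicalSpace α] {a b : α → SO3}
    (ha : Continuous a) (hb : Continuous b) (h : ∀ t, a t * b t = b t * a t) :
    Continuous fun t => mk2 (a t) (b t) (h t) := by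
  apply Continuous.subtype_mk
  apply continuous_pi
  intro i
  fin_cases i
  · simpa [mk2] using ha
  · simpa [mk2] using hb

/-- family of torus pairs -/
noncomputable def torusFam (P : M3) (hP : SO P) (θ φ : ℝ) (t : ℝ) : CommTuples 2 SO3 :=
  mk2 (so3 (P * rot (Real.cos (t*θ)) (Real.sin (t*θ)) * Pᵀ) (conjrot_so hP _))
      (so3 (P * rot (Real.cos (t*φ)) (Real.sin (t*φ)) * Pᵀ) (conjrot_so hP _))
      (Subtype.ext (by
        show (P * rot (Real.cos (t*θ)) (Real.sin (t*θ)) * Pᵀ) *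
            (P * rot (Real.cos (t*φ)) (Real.sin (t*φ)) * Pᵀ) =
            (P * rot (Real.cos (t*φ)) (Real.sin (t*φ)) * Pᵀ) *
            (P * rot (Real.cos (t*θ)) (Real.sin (t*θ)) * Pᵀ)
        rw [conj_pair_mul hP, conj_pair_mul hP, rot_comm]))

lemma torusFam_fst (P : M3) (hP : SO P) (θ φ t : ℝ) :
    ((torusFam P hP θ φ t).1 0 : M3) = P * rot (Real.cos (t*θ)) (Real.sin (t*θ)) * Pᵀ := rfl

lemma torusFam_snd (P : M3) (hP : SO P) (θ φ t : ℝ) :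
    ((torusFam P hP θ φ t).1 1 : M3) = P * rot (Real.cos (t*φ)) (Real.sin (t*φ)) * Pᵀ := rfl

lemma torusFam_mem (P : M3) (hP : SO P) (θ φ t : ℝ) : torusFam P hP θ φ t ∈ Shigh := by
  have h1 := ts_torus hP (torusFam_fst P hP θ φ t) (torusFam_snd P hP θ φ t)
  have h2 := torus_trace_ineq (Real.cos_sq_add_sin_sq (t*θ)) (Real.cos_sq_add_sin_sq (t*φ))
  show ¬ ts _ < -1
  rw [h1]
  linarith

lemma torusFam_continuous (P : M3) (hP : SO P) (θ φ : ℝ) :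
    Continuous (torusFam P hP θ φ) :=
  continuous_pair (Continuous.subtype_mk (continuous_conj_rot P θ) _)
    (Continuous.subtype_mk (continuous_conj_rot P φ) _) _

lemma joinedIn_shigh {x : CommTuples 2 SO3}
    (h : ∃ (P : M3) (c s c' s' : ℝ), SO P ∧ c^2 + s^2 = 1 ∧ c'^2 + s'^2 = 1 ∧
      (x.1 0 : M3) = P * rot c s * Pᵀ ∧ (x.1 1 : M3) = P * rot c' s' * Pᵀ) :
    JoinedIn Shigh one2 x := by
  obtain ⟨P, c, s, c', s', hP, hcs, hcs', hAeq, hBeq⟩ := h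
  obtain ⟨θ, hθc, hθs⟩ := exists_cos_sin hcs
  obtain ⟨φ, hφc, hφs⟩ := exists_cos_sin hcs'
  have hsrc : torusFam P hP θ φ 0 = one2 := by
    apply Subtype.ext
    funext i
    fin_cases i <;>
      · apply Subtype.ext
        show P * rot (Real.cos (0*_)) (Real.sin (0*_)) * Pᵀ = _
        rw [zero_mul, Real.cos_zero, Real.sin_zero, rot_one, Matrix.mul_one,
          hP.mul_transpose]
        rfl
  have htgt : torusFam P hP θ φ 1 = x := by
    apply Subtype.ext
    funext i
    fin_cases i
    · apply Subtype.ext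
      show P * rot (Real.cos (1*θ)) (Real.sin (1*θ)) * Pᵀ = _
      rw [one_mul, hθc, hθs, ← hAeq]
      rfl
    · apply Subtype.ext
      show P * rot (Real.cos (1*φ)) (Real.sin (1*φ)) * Pᵀ = _
      rw [one_mul, hφc, hφs, ← hBeq]
      rfl
  refine ⟨⟨⟨fun t => torusFam P hP θ φ (t : ℝ), ?_⟩, ?_, ?_⟩, ?_⟩
  · exact (torusFam_continuous P hP θ φ).comp continuous_subtype_val
  · exact hsrc
  · exact htgt
  · intro t
    exact torusFam_mem P hP θ φ _

lemma D1_mul_D2_comm : D1 * D2 = D2 * D1 := by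
  ext i j
  fin_cases i <;> fin_cases j <;>
    simp [D1, D2, rot, Matrix.mul_apply, Fin.sum_univ_three, Matrix.vecHead, Matrix.vecTail]

/-- exotic pair obtained by conjugating the standard one -/
def gx (P : SO3) : CommTuples 2 SO3 :=
  mk2 (so3 ((P : M3) * D1 * (P : M3)ᵀ) (((so3_mem P).mul SO_D1).mul (so3_mem P).transpose))
      (so3 ((P : M3) * D2 * (P : M3)ᵀ) (((so3_mem P).mul SO_D2).mul (so3_mem P).transpose))
      (Subtype.ext (by
        show ((P:M3) * D1 * (P:M3)ᵀ) * ((P:M3) * D2 * (P:M3)ᵀ) =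
             ((P:M3) * D2 * (P:M3)ᵀ) * ((P:M3) * D1 * (P:M3)ᵀ)
        rw [conj_pair_mul (so3_mem P), conj_pair_mul (so3_mem P), D1_mul_D2_comm]))

lemma gx_fst (P : SO3) : ((gx P).1 0 : M3) = (P:M3) * D1 * (P:M3)ᵀ := rfl

lemma gx_snd (P : SO3) : ((gx P).1 1 : M3) = (P:M3) * D2 * (P:M3)ᵀ := rfl

lemma gx_mem (P : SO3) : gx P ∈ Slow := by
  show ts _ < -1
  rw [ts_exotic (so3_mem P) (gx_fst P) (gx_snd P)]
  norm_num

lemma gx_continuous : Continuous gx :=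
  continuous_pair
    (Continuous.subtype_mk ((continuous_subtype_val.matrix_mul continuous_const).matrix_mul
      continuous_subtype_val.matrix_transpose) _)
    (Continuous.subtype_mk ((continuous_subtype_val.matrix_mul continuous_const).matrix_mul
      continuous_subtype_val.matrix_transpose) _) _

lemma gx_surj {x : CommTuples 2 SO3} (hx : x ∈ Slow) : ∃ P : SO3, gx P = x := by
  rcases normal_form x with ⟨P, c, s, c', s', hP, hcs, hcs', hAeq, hBeq⟩ | ⟨P, hP, hAeq, hBeq⟩
  · exfalso
    have h1 := ts_torus hP hAeq hBeq
    have h2 := torus_trace_ineq hcs hcs'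
    have h3 : ts x < -1 := hx
    linarith
  · refine ⟨so3 P hP, ?_⟩
    apply Subtype.ext
    funext i
    fin_cases i
    · apply Subtype.ext
      show P * D1 * Pᵀ = _
      rw [← hAeq]
      rfl
    · apply Subtype.ext
      show P * D2 * Pᵀ = _
      rw [← hBeq]
      rfl

lemma joined_one (A : SO3) : Joined (1 : SO3) A := by
  have hA : SO (A : M3) := so3_mem A
  obtain ⟨v, hv0, hv⟩ := hA.exists_fixed
  obtain ⟨u, r, hr0, hu, huu⟩ := exists_unit_scale hv0
  have hAu : (A : M3) *ᵥ u = u := by rw [hu, Matrix.mulVec_smul, hv]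
  obtain ⟨P, c, s, c', s', hP, hcs, _, hAeq, _⟩ := pair_form hA hA huu hAu hAu
  obtain ⟨θ, hθc, hθs⟩ := exists_cos_sin hcs
  set F : ℝ → SO3 := fun t =>
    so3 (P * rot (Real.cos (t*θ)) (Real.sin (t*θ)) * Pᵀ) (conjrot_so hP _) with hF
  have hF0 : F 0 = 1 := by
    apply Subtype.ext
    show P * rot (Real.cos (0*θ)) (Real.sin (0*θ)) * Pᵀ = _
    rw [zero_mul, Real.cos_zero, Real.sin_zero, rot_one, Matrix.mul_one, hP.mul_transpose]
    rfl
  have hF1 : F 1 = A := by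
    apply Subtype.ext
    show P * rot (Real.cos (1*θ)) (Real.sin (1*θ)) * Pᵀ = _
    rw [one_mul, hθc, hθs, ← hAeq]
  refine ⟨⟨⟨fun t => F (t : ℝ), ?_⟩, ?_, ?_⟩⟩
  · exact Continuous.subtype_mk ((continuous_conj_rot P θ).comp continuous_subtype_val) _
  · exact hF0
  · exact hF1

lemma isPathConnected_Slow : IsPathConnected Slow := by
  refine ⟨gx 1, gx_mem 1, ?_⟩
  intro y hy
  obtain ⟨P, rfl⟩ := gx_surj hy
  obtain ⟨γ⟩ := joined_one P
  exact ⟨γ.map gx_continuous, fun t => gx_mem _⟩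

lemma ts_one2 : ts one2 = 9 := by
  have h1 : (one2.1 0 : M3) = (1 : M3) * rot 1 0 * (1 : M3)ᵀ := by
    rw [rot_one, Matrix.mul_one, Matrix.transpose_one, Matrix.mul_one]
    rfl
  have h2 : (one2.1 1 : M3) = (1 : M3) * rot 1 0 * (1 : M3)ᵀ := by
    rw [rot_one, Matrix.mul_one, Matrix.transpose_one, Matrix.mul_one]
    rfl
  rw [ts_torus SO.one h1 h2]
  norm_num

lemma one2_mem : one2 ∈ Shigh := by
  show ¬ ts one2 < -1
  rw [ts_one2]
  norm_num

lemma isPathConnected_Shigh : IsPathConnected Shigh := by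
  refine ⟨one2, one2_mem, ?_⟩
  intro y hy
  rcases normal_form y with h | ⟨P, hP, hAeq, hBeq⟩
  · exact joinedIn_shigh h
  · exfalso
    exact hy (by rw [show ts y = -3 from ts_exotic hP hAeq hBeq]; norm_num)

/-- the invariant with values in Bool -/
noncomputable def fB : CommTuples 2 SO3 → Bool := fun x => decide (ts x < -1)

lemma isOpen_Slow : IsOpen Slow := isOpen_lt ts_continuous continuous_const

lemma isOpen_Shigh : IsOpen Shigh := by
  have h : Shigh = {x | (-3/2 : ℝ) < ts x} := by
    ext x
    constructor
    · intro hx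
      have : ¬ ts x < -1 := hx
      show (-3/2 : ℝ) < ts x
      linarith [not_lt.mp this]
    · intro hx
      rcases ts_dichotomy x with h1 | h1
      · exfalso
        have : (-3/2 : ℝ) < ts x := hx
        rw [h1] at this
        norm_num at this
      · show ¬ ts x < -1
        linarith
  rw [h]
  exact isOpen_lt continuous_const ts_continuous

lemma fB_preim_true : fB ⁻¹' {true} = Slow := by
  ext x
  simp [fB, Slow]

lemma fB_preim_false : fB ⁻¹' {false} = Shigh := by
  ext x
  simp [fB, Shigh]

lemma fB_continuous : Continuous fB := by
  apply IsLocallyConstant.continuous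
  intro s
  by_cases h1 : true ∈ s <;> by_cases h2 : false ∈ s
  · have : fB ⁻¹' s = Set.univ := by
      ext x
      simp only [Set.mem_preimage, Set.mem_univ, iff_true]
      rcases Bool.dichotomy (fB x) with h | h <;> rw [h] <;> assumption
    rw [this]; exact isOpen_univ
  · have : fB ⁻¹' s = Slow := by
      rw [← fB_preim_true]
      ext x
      simp only [Set.mem_preimage, Set.mem_singleton_iff]
      rcases Bool.dichotomy (fB x) with h | h <;> rw [h] <;> simp_all
    rw [this]; exact isOpen_Slow
  · have : fB ⁻¹' s = Shigh := by
      rw [← fB_preim_false]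
      ext x
      simp only [Set.mem_preimage, Set.mem_singleton_iff]
      rcases Bool.dichotomy (fB x) with h | h <;> rw [h] <;> simp_all
    rw [this]; exact isOpen_Shigh
  · have : fB ⁻¹' s = ∅ := by
      ext x
      simp only [Set.mem_preimage, Set.mem_empty_iff_false, iff_false]
      rcases Bool.dichotomy (fB x) with h | h <;> rw [h] <;> assumption
    rw [this]; exact isOpen_empty

lemma same_component {x y : CommTuples 2 SO3} (h : fB x = fB y) :
    ConnectedComponents.mk x = ConnectedComponents.mk y := by
  rw [ConnectedComponents.coe_eq_coe]
  rcases Bool.dichotomy (fB x) with hb | hb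
  · have hx : x ∈ Shigh := by rw [← fB_preim_false]; exact hb
    have hy : y ∈ Shigh := by
      rw [← fB_preim_false]
      show fB y = false
      rw [← h]; exact hb
    have hpre := isPathConnected_Shigh.isConnected.isPreconnected
    have h1 := hpre.subset_connectedComponent hx hy
    exact connectedComponent_eq h1
  · have hx : x ∈ Slow := by rw [← fB_preim_true]; exact hb
    have hy : y ∈ Slow := by
      rw [← fB_preim_true]
      show fB y = true
      rw [← h]; exact hb
    have hpre := isPathConnected_Slow.isConnected.isPreconnected
    have h1 := hpre.subset_connectedComponent hx hy
    exact connectedComponent_eq h1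

end SO3Proof

open SO3Proof in
/-- The space `Hom(ℤ², SO(3))` of ordered commuting pairs of elements of `SO(3)` has
exactly two connected components. -/
theorem commTuples_two_SO3_two_components :
    Nat.card (ConnectedComponents (CommTuples 2 SO3)) = 2 := by
  have hcont := fB_continuous
  have hbij : Function.Bijective hcont.connectedComponentsLift := by
    constructor
    · intro a b hab
      obtain ⟨x, rfl⟩ := ConnectedComponents.surjective_coe a
      obtain ⟨y, rfl⟩ := ConnectedComponents.surjective_coe b
      rw [hcont.connectedComponentsLift_apply_coe, hcont.connectedComponentsLift_apply_coe] at hab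
      exact same_component hab
    · intro b
      rcases Bool.dichotomy b with rfl | rfl
      · refine ⟨ConnectedComponents.mk one2, ?_⟩
        rw [hcont.connectedComponentsLift_apply_coe]
        have := one2_mem
        simp only [fB, decide_eq_false_iff_not]
        exact this
      · refine ⟨ConnectedComponents.mk (gx 1), ?_⟩
        rw [hcont.connectedComponentsLift_apply_coe]
        have := gx_mem 1
        simp only [fB, decide_eq_true_iff]
        exact this
  rw [Nat.card_eq_of_bijective _ hbij]
  simp [Nat.card_eq_fintype_card]
end

section
/- The quotient of the Stiefel manifold V₂(ℝ³) = {(v₁, v₂) ∈ S² × S² : ⟨v₁, v₂⟩ = 0} by the equivalence relation (v₁, v₂) ∼ (ε₁v₁, ε₂v₂), ε₁, ε₂ ∈ {±1}, is homeomorphic to the orbit space S³/Q₈, where S³ is the unit sphere in the quaternions ℍ and Q₈ = {±1, ±i, ±j, ±k} acts on S³ by quaternion multiplication. -/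
open Matrix Quaternion

/-- The Stiefel manifold `V₂(ℝ³)` of orthonormal 2-frames in `ℝ³`, as the subspace
`{(v₁, v₂) ∈ S² × S² : ⟨v₁, v₂⟩ = 0}` of `S² × S²`. -/
abbrev V2R3 : Type _ :=
  {p : (Fin 3 → ℝ) × (Fin 3 → ℝ) // p.1 ⬝ᵥ p.1 = 1 ∧ p.2 ⬝ᵥ p.2 = 1 ∧ p.1 ⬝ᵥ p.2 = 0}

/-- The relation `(v₁, v₂) ∼ (ε₁ v₁, ε₂ v₂)` for signs `ε₁, ε₂ ∈ {±1}` on `V₂(ℝ³)`. -/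
def signRel (p q : V2R3) : Prop :=
  ∃ ε₁ ε₂ : ℝ, (ε₁ = 1 ∨ ε₁ = -1) ∧ (ε₂ = 1 ∨ ε₂ = -1) ∧
    q.val.1 = ε₁ • p.val.1 ∧ q.val.2 = ε₂ • p.val.2

/-- The unit sphere `S³` in the quaternions `ℍ`. -/
abbrev S3 : Type _ := {q : ℍ[ℝ] // ‖q‖ = 1}

/-- The quaternion group `Q₈ = {±1, ±i, ±j, ±k}` as a subset of the quaternions. -/
def Q8set : Set ℍ[ℝ] :=
  {1, -1, ⟨0, 1, 0, 0⟩, -⟨0, 1, 0, 0⟩, ⟨0, 0, 1, 0⟩, -⟨0, 0, 1, 0⟩, ⟨0, 0, 0, 1⟩,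
    -⟨0, 0, 0, 1⟩}

/-- The orbit relation of the action of `Q₈` on `S³` by quaternion multiplication. -/
def q8Rel (a b : S3) : Prop := ∃ g ∈ Q8set, b.val = g * a.val

def qI : ℍ[ℝ] := ⟨0,1,0,0⟩
def qJ : ℍ[ℝ] := ⟨0,0,1,0⟩
def qK : ℍ[ℝ] := ⟨0,0,0,1⟩

def v1 (g : ℍ[ℝ]) : Fin 3 → ℝ :=
  ![g.re^2 + g.imI^2 - g.imJ^2 - g.imK^2,
    2*(g.imI*g.imJ - g.re*g.imK),
    2*(g.re*g.imJ + g.imI*g.imK)]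

def v2 (g : ℍ[ℝ]) : Fin 3 → ℝ :=
  ![2*(g.imI*g.imJ + g.re*g.imK),
    g.re^2 - g.imI^2 + g.imJ^2 - g.imK^2,
    2*(g.imJ*g.imK - g.re*g.imI)]

lemma conjI (g : ℍ[ℝ]) : star g * qI * g = ⟨0, v1 g 0, v1 g 1, v1 g 2⟩ := by
  ext <;>
    simp [v1, Quaternion.re_mul, Quaternion.imI_mul, Quaternion.imJ_mul,
      Quaternion.imK_mul] <;> simp [qI] <;> ring

lemma conjJ (g : ℍ[ℝ]) : star g * qJ * g = ⟨0, v2 g 0, v2 g 1, v2 g 2⟩ := by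
  ext <;>
    simp [v2, Quaternion.re_mul, Quaternion.imI_mul, Quaternion.imJ_mul,
      Quaternion.imK_mul] <;> simp [qJ] <;> ring

lemma unit_coords {g : ℍ[ℝ]} (h : ‖g‖ = 1) :
    g.re^2 + g.imI^2 + g.imJ^2 + g.imK^2 = 1 := by
  have := Quaternion.normSq_eq_norm_mul_self g
  rw [h, mul_one] at this
  simp only [Quaternion.normSq_def'] at this
  linarith

def Fq (a : S3) : V2R3 := by
  refine ⟨(v1 a.val, v2 a.val), ?_, ?_, ?_⟩ <;>
  · have h := unit_coords a.property
    simp only [v1, v2, dotProduct, Fin.sum_univ_three, Matrix.cons_val_zero,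
      Matrix.cons_val_one, Matrix.head_cons, Matrix.cons_val_two, Matrix.tail_cons]
    nlinarith [h]

lemma continuous_Fq : Continuous Fq := by
  have hre : Continuous fun a : S3 => (a.val).re :=
    Quaternion.continuous_re.comp continuous_subtype_val
  have hi : Continuous fun a : S3 => (a.val).imI :=
    Quaternion.continuous_imI.comp continuous_subtype_val
  have hj : Continuous fun a : S3 => (a.val).imJ :=
    Quaternion.continuous_imJ.comp continuous_subtype_val
  have hk : Continuous fun a : S3 => (a.val).imK :=
    Quaternion.continuous_imK.comp continuous_subtype_val
  apply Continuous.subtype_mk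
  apply Continuous.prodMk <;>
  · apply continuous_pi
    intro i
    fin_cases i <;>
      simp [v1, v2] <;>
      fun_prop

lemma conj_scale {g w : ℍ[ℝ]} (a : ℍ[ℝ]) (e : ℝ) (hg : star g * w * g = e • w) :
    star (g * a) * w * (g * a) = e • (star a * w * a) := by
  have h1 : star (g * a) * w * (g * a) = star a * (star g * w * g) * a := by
    rw [StarMul.star_mul]; noncomm_ring
  rw [h1, hg, mul_smul_comm, smul_mul_assoc]

lemma q8_conjI : (star (1:ℍ[ℝ]) * qI * 1 = (1:ℝ) • qI)
    ∧ (star qI * qI * qI = (1:ℝ) • qI)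
    ∧ (star qJ * qI * qJ = (-1:ℝ) • qI)
    ∧ (star qK * qI * qK = (-1:ℝ) • qI) := by
  refine ⟨?_, ?_, ?_, ?_⟩ <;>
  · ext <;>
      simp [Quaternion.re_mul, Quaternion.imI_mul, Quaternion.imJ_mul,
        Quaternion.imK_mul] <;> simp [qI, qJ, qK]

lemma q8_conjJ : (star (1:ℍ[ℝ]) * qJ * 1 = (1:ℝ) • qJ)
    ∧ (star qI * qJ * qI = (-1:ℝ) • qJ)
    ∧ (star qJ * qJ * qJ = (1:ℝ) • qJ)
    ∧ (star qK * qJ * qK = (-1:ℝ) • qJ) := by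
  refine ⟨?_, ?_, ?_, ?_⟩ <;>
  · ext <;>
      simp [Quaternion.re_mul, Quaternion.imI_mul, Quaternion.imJ_mul,
        Quaternion.imK_mul] <;> simp [qI, qJ, qK]

lemma neg_conj (g w : ℍ[ℝ]) : star (-g) * w * (-g) = star g * w * g := by
  simp

lemma v1_of_conj {a b g : ℍ[ℝ]} (e : ℝ) (hb : b = g * a) (h : star g * qI * g = e • qI) :
    v1 b = e • v1 a := by
  have k : star b * qI * b = e • (star a * qI * a) := by rw [hb]; exact conj_scale a e h
  rw [conjI b, conjI a] at k
  have h0 := congrArg QuaternionAlgebra.imI k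
  have h1 := congrArg QuaternionAlgebra.imJ k
  have h2 := congrArg QuaternionAlgebra.imK k
  simp only [Quaternion.imI_smul, Quaternion.imJ_smul, Quaternion.imK_smul,
    smul_eq_mul] at h0 h1 h2
  funext i
  fin_cases i <;> simp only [Pi.smul_apply, smul_eq_mul] <;> assumption

lemma v2_of_conj {a b g : ℍ[ℝ]} (e : ℝ) (hb : b = g * a) (h : star g * qJ * g = e • qJ) :
    v2 b = e • v2 a := by
  have k : star b * qJ * b = e • (star a * qJ * a) := by rw [hb]; exact conj_scale a e h
  rw [conjJ b, conjJ a] at k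
  have h0 := congrArg QuaternionAlgebra.imI k
  have h1 := congrArg QuaternionAlgebra.imJ k
  have h2 := congrArg QuaternionAlgebra.imK k
  simp only [Quaternion.imI_smul, Quaternion.imJ_smul, Quaternion.imK_smul,
    smul_eq_mul] at h0 h1 h2
  funext i
  fin_cases i <;> simp only [Pi.smul_apply, smul_eq_mul] <;> assumption

lemma Fq_invariant {a b : S3} (h : q8Rel a b) : signRel (Fq a) (Fq b) := by
  obtain ⟨g, hg, hb⟩ := h
  have hQ8 : ∃ e1 e2 : ℝ, (e1 = 1 ∨ e1 = -1) ∧ (e2 = 1 ∨ e2 = -1) ∧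
      star g * qI * g = e1 • qI ∧ star g * qJ * g = e2 • qJ := by
    simp only [Q8set, Set.mem_insert_iff, Set.mem_singleton_iff] at hg
    obtain h|h|h|h|h|h|h|h := hg <;> subst h
    · exact ⟨1, 1, Or.inl rfl, Or.inl rfl, q8_conjI.1, q8_conjJ.1⟩
    · exact ⟨1, 1, Or.inl rfl, Or.inl rfl,
        (neg_conj 1 qI).trans q8_conjI.1, (neg_conj 1 qJ).trans q8_conjJ.1⟩
    · exact ⟨1, -1, Or.inl rfl, Or.inr rfl, q8_conjI.2.1, q8_conjJ.2.1⟩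
    · exact ⟨1, -1, Or.inl rfl, Or.inr rfl,
        (neg_conj qI qI).trans q8_conjI.2.1, (neg_conj qI qJ).trans q8_conjJ.2.1⟩
    · exact ⟨-1, 1, Or.inr rfl, Or.inl rfl, q8_conjI.2.2.1, q8_conjJ.2.2.1⟩
    · exact ⟨-1, 1, Or.inr rfl, Or.inl rfl,
        (neg_conj qJ qI).trans q8_conjI.2.2.1, (neg_conj qJ qJ).trans q8_conjJ.2.2.1⟩
    · exact ⟨-1, -1, Or.inr rfl, Or.inr rfl, q8_conjI.2.2.2, q8_conjJ.2.2.2⟩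
    · exact ⟨-1, -1, Or.inr rfl, Or.inr rfl,
        (neg_conj qK qI).trans q8_conjI.2.2.2, (neg_conj qK qJ).trans q8_conjJ.2.2.2⟩
  obtain ⟨e1, e2, he1, he2, hc1, hc2⟩ := hQ8
  exact ⟨e1, e2, he1, he2, v1_of_conj e1 hb hc1, v2_of_conj e2 hb hc2⟩

lemma mk_smul_of_v (e : ℝ) (u w : Fin 3 → ℝ) (h : u = e • w) :
    (⟨0, u 0, u 1, u 2⟩ : ℍ[ℝ]) = e • ⟨0, w 0, w 1, w 2⟩ := by
  have h0 := congrFun h 0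
  have h1 := congrFun h 1
  have h2 := congrFun h 2
  simp only [Pi.smul_apply, smul_eq_mul] at h0 h1 h2
  ext <;> simp [*]

lemma conj_cancel {a : ℍ[ℝ]} (ha : a * star a = 1) {X Y : ℍ[ℝ]}
    (h : star a * X * a = star a * Y * a) : X = Y := by
  have e : ∀ Z : ℍ[ℝ], a * (star a * Z * a) * star a = (a * star a) * Z * (a * star a) := by
    intro Z; noncomm_ring
  have h2 : a * (star a * X * a) * star a = a * (star a * Y * a) * star a := by rw [h]
  rw [e, e, ha, one_mul, mul_one, one_mul, mul_one] at h2
  exact h2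

lemma star_mul_self_unit {a : ℍ[ℝ]} (ha : ‖a‖ = 1) : star a * a = 1 := by
  rw [Quaternion.star_mul_self, Quaternion.normSq_eq_norm_mul_self, ha, mul_one]
  exact Quaternion.coe_one

lemma mul_star_self_unit {a : ℍ[ℝ]} (ha : ‖a‖ = 1) : a * star a = 1 := by
  rw [Quaternion.self_mul_star, Quaternion.normSq_eq_norm_mul_self, ha, mul_one]
  exact Quaternion.coe_one

lemma Fq_inj_core {a b : S3} (h : signRel (Fq a) (Fq b)) : q8Rel a b := by
  obtain ⟨e1, e2, he1, he2, hv1, hv2⟩ := h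
  obtain ⟨g, hgdef⟩ : ∃ g : ℍ[ℝ], g = b.val * star a.val := ⟨_, rfl⟩
  have hb : b.val = g * a.val := by
    rw [hgdef, mul_assoc, star_mul_self_unit a.property, mul_one]
  have hIb : star b.val * qI * b.val = e1 • (star a.val * qI * a.val) := by
    rw [conjI, conjI]; exact mk_smul_of_v e1 _ _ hv1
  have hJb : star b.val * qJ * b.val = e2 • (star a.val * qJ * a.val) := by
    rw [conjJ, conjJ]; exact mk_smul_of_v e2 _ _ hv2
  have key : ∀ w : ℍ[ℝ], ∀ e : ℝ, star b.val * w * b.val = e • (star a.val * w * a.val) →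
      star g * w * g = e • w := by
    intro w e hw
    apply conj_cancel (mul_star_self_unit a.property)
    have lhs : star a.val * (star g * w * g) * a.val = star b.val * w * b.val := by
      rw [hb, StarMul.star_mul]; noncomm_ring
    have rhs : star a.val * (e • w) * a.val = e • (star a.val * w * a.val) := by
      rw [mul_smul_comm, smul_mul_assoc]
    rw [lhs, rhs, hw]
  have hg1 := key qI e1 hIb
  have hg2 := key qJ e2 hJb
  have hgn : ‖g‖ = 1 := by
    rw [hgdef, norm_mul, Quaternion.norm_star, a.property, b.property, mul_one]
  -- coordinate equations
  rw [conjI g] at hg1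
  rw [conjJ g] at hg2
  have A1 := congrArg QuaternionAlgebra.imI hg1
  have A2 := congrArg QuaternionAlgebra.imJ hg1
  have A3 := congrArg QuaternionAlgebra.imK hg1
  have B1 := congrArg QuaternionAlgebra.imI hg2
  have B2 := congrArg QuaternionAlgebra.imJ hg2
  have B3 := congrArg QuaternionAlgebra.imK hg2
  simp only [v1, v2, Quaternion.imI_smul, Quaternion.imJ_smul, Quaternion.imK_smul,
    smul_eq_mul, Matrix.cons_val_zero, Matrix.cons_val_one, Matrix.head_cons,
    Matrix.cons_val_two, Matrix.tail_cons, mul_zero, mul_one] at A1 A2 A3 B1 B2 B3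
  simp only [qI, qJ, mul_zero, mul_one] at A1 A2 A3 B1 B2 B3
  have S := unit_coords hgn
  clear hv1 hv2 hIb hJb key hg1 hg2 hgn hgdef
  obtain he1 | he1 := he1 <;> obtain he2 | he2 := he2 <;> subst he1 <;> subst he2
  · -- e1 = 1, e2 = 1 : g = ±1
    have hJ2 : g.imJ ^ 2 = 0 := by linarith [sq_nonneg g.imJ, sq_nonneg g.imK]
    have hK2 : g.imK ^ 2 = 0 := by linarith [sq_nonneg g.imJ, sq_nonneg g.imK]
    have hI2 : g.imI ^ 2 = 0 := by linarith
    have hI0 := sq_eq_zero_iff.mp hI2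
    have hJ0 := sq_eq_zero_iff.mp hJ2
    have hK0 := sq_eq_zero_iff.mp hK2
    have hre2 : g.re ^ 2 = 1 := by linarith
    rcases mul_eq_zero.mp (show (g.re - 1) * (g.re + 1) = 0 by linear_combination hre2) with
      h | h
    · refine ⟨1, by simp [Q8set], ?_⟩
      have hgv : g = 1 := by ext <;> simp [hI0, hJ0, hK0] <;> linarith
      rw [← hgv]; exact hb
    · refine ⟨-1, by simp [Q8set], ?_⟩
      have hgv : g = -1 := by ext <;> simp [hI0, hJ0, hK0] <;> linarith
      rw [← hgv]; exact hb
  · -- e1 = 1, e2 = -1 : g = ±i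
    have hJ2 : g.imJ ^ 2 = 0 := by linarith [sq_nonneg g.imJ, sq_nonneg g.imK]
    have hK2 : g.imK ^ 2 = 0 := by linarith [sq_nonneg g.imJ, sq_nonneg g.imK]
    have hr2 : g.re ^ 2 = 0 := by linarith
    have hr0 := sq_eq_zero_iff.mp hr2
    have hJ0 := sq_eq_zero_iff.mp hJ2
    have hK0 := sq_eq_zero_iff.mp hK2
    have hI2 : g.imI ^ 2 = 1 := by linarith
    rcases mul_eq_zero.mp (show (g.imI - 1) * (g.imI + 1) = 0 by linear_combination hI2) with
      h | h
    · refine ⟨⟨0,1,0,0⟩, by simp only [Q8set]; exact Or.inr (Or.inr (Or.inl rfl)), ?_⟩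
      have hgv : g = (⟨0,1,0,0⟩ : ℍ[ℝ]) := by ext <;> simp [hr0, hJ0, hK0] <;> linarith
      rw [← hgv]; exact hb
    · refine ⟨-⟨0,1,0,0⟩, by simp only [Q8set]; exact Or.inr (Or.inr (Or.inr (Or.inl rfl))), ?_⟩
      have hgv : g = -(⟨0,1,0,0⟩ : ℍ[ℝ]) := by ext <;> simp [hr0, hJ0, hK0] <;> linarith
      exact hb.trans (congrArg (· * a.val) hgv)
  · -- e1 = -1, e2 = 1 : g = ±j
    have hr2 : g.re ^ 2 = 0 := by linarith [sq_nonneg g.re, sq_nonneg g.imI]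
    have hI2 : g.imI ^ 2 = 0 := by linarith [sq_nonneg g.re, sq_nonneg g.imI]
    have hK2 : g.imK ^ 2 = 0 := by linarith
    have hr0 := sq_eq_zero_iff.mp hr2
    have hI0 := sq_eq_zero_iff.mp hI2
    have hK0 := sq_eq_zero_iff.mp hK2
    have hJ2 : g.imJ ^ 2 = 1 := by linarith
    rcases mul_eq_zero.mp (show (g.imJ - 1) * (g.imJ + 1) = 0 by linear_combination hJ2) with
      h | h
    · refine ⟨⟨0,0,1,0⟩, by simp only [Q8set]; exact Or.inr (Or.inr (Or.inr (Or.inr (Or.inl rfl)))), ?_⟩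
      have hgv : g = (⟨0,0,1,0⟩ : ℍ[ℝ]) := by ext <;> simp [hr0, hI0, hK0] <;> linarith
      rw [← hgv]; exact hb
    · refine ⟨-⟨0,0,1,0⟩, by simp only [Q8set]; exact Or.inr (Or.inr (Or.inr (Or.inr (Or.inr (Or.inl rfl))))), ?_⟩
      have hgv : g = -(⟨0,0,1,0⟩ : ℍ[ℝ]) := by ext <;> simp [hr0, hI0, hK0] <;> linarith
      exact hb.trans (congrArg (· * a.val) hgv)
  · -- e1 = -1, e2 = -1 : g = ±k
    have hr2 : g.re ^ 2 = 0 := by linarith [sq_nonneg g.re, sq_nonneg g.imI]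
    have hI2 : g.imI ^ 2 = 0 := by linarith [sq_nonneg g.re, sq_nonneg g.imI]
    have hJ2 : g.imJ ^ 2 = 0 := by linarith
    have hr0 := sq_eq_zero_iff.mp hr2
    have hI0 := sq_eq_zero_iff.mp hI2
    have hJ0 := sq_eq_zero_iff.mp hJ2
    have hK2 : g.imK ^ 2 = 1 := by linarith
    rcases mul_eq_zero.mp (show (g.imK - 1) * (g.imK + 1) = 0 by linear_combination hK2) with
      h | h
    · refine ⟨⟨0,0,0,1⟩, by simp only [Q8set]; exact Or.inr (Or.inr (Or.inr (Or.inr (Or.inr (Or.inr (Or.inl rfl)))))), ?_⟩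
      have hgv : g = (⟨0,0,0,1⟩ : ℍ[ℝ]) := by ext <;> simp [hr0, hI0, hJ0] <;> linarith
      rw [← hgv]; exact hb
    · refine ⟨-⟨0,0,0,1⟩, by simp only [Q8set]; exact Or.inr (Or.inr (Or.inr (Or.inr (Or.inr (Or.inr (Or.inr (rfl))))))), ?_⟩
      have hgv : g = -(⟨0,0,0,1⟩ : ℍ[ℝ]) := by ext <;> simp [hr0, hI0, hJ0] <;> linarith
      exact hb.trans (congrArg (· * a.val) hgv)

lemma build {p q : Fin 3 → ℝ}
    (hpq : p ⬝ᵥ p = 1 ∧ q ⬝ᵥ q = 1 ∧ p ⬝ᵥ q = 0) {C : ℍ[ℝ]}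
    (hC : Quaternion.normSq C ≠ 0)
    (hI : star C * qI * C = (Quaternion.normSq C) • (⟨0, p 0, p 1, p 2⟩ : ℍ[ℝ]))
    (hJ : star C * qJ * C = (Quaternion.normSq C) • (⟨0, q 0, q 1, q 2⟩ : ℍ[ℝ])) :
    ∃ a : S3, Fq a = ⟨(p, q), hpq⟩ := by
  have hCne : C ≠ 0 := fun h => hC (by simp [h])
  have hnorm : ‖C‖ ≠ 0 := norm_ne_zero_iff.mpr hCne
  have hunit : ‖(‖C‖⁻¹ • C : ℍ[ℝ])‖ = 1 := by
    rw [norm_smul]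
    simp [abs_of_nonneg (norm_nonneg C), inv_mul_cancel₀ hnorm]
  refine ⟨⟨‖C‖⁻¹ • C, hunit⟩, ?_⟩
  have key : ∀ (w : ℍ[ℝ]) (u : Fin 3 → ℝ),
      star C * w * C = (Quaternion.normSq C) • (⟨0, u 0, u 1, u 2⟩ : ℍ[ℝ]) →
      star (‖C‖⁻¹ • C) * w * (‖C‖⁻¹ • C) = (⟨0, u 0, u 1, u 2⟩ : ℍ[ℝ]) := by
    intro w u hw
    have h1 : star (‖C‖⁻¹ • C) = ‖C‖⁻¹ • star C := by
      rw [Quaternion.star_smul]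
    rw [h1, smul_mul_assoc, smul_mul_assoc, mul_smul_comm, smul_smul, hw]; erw [smul_smul]
    have hcoef : ‖C‖⁻¹ * ‖C‖⁻¹ * Quaternion.normSq C = 1 := by
      rw [Quaternion.normSq_eq_norm_mul_self]
      field_simp
    rw [hcoef]; erw [one_smul]
  have kI := key qI p hI
  have kJ := key qJ q hJ
  apply Subtype.ext
  have hv1 : v1 (‖C‖⁻¹ • C) = p := by
    have hc := (conjI (‖C‖⁻¹ • C)).symm.trans kI
    funext i
    fin_cases i
    · exact congrArg QuaternionAlgebra.imI hc
    · exact congrArg QuaternionAlgebra.imJ hc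
    · exact congrArg QuaternionAlgebra.imK hc
  have hv2 : v2 (‖C‖⁻¹ • C) = q := by
    have hc := (conjJ (‖C‖⁻¹ • C)).symm.trans kJ
    funext i
    fin_cases i
    · exact congrArg QuaternionAlgebra.imI hc
    · exact congrArg QuaternionAlgebra.imJ hc
    · exact congrArg QuaternionAlgebra.imK hc
  show (v1 (‖C‖⁻¹ • C), v2 (‖C‖⁻¹ • C)) = (p, q)
  rw [hv1, hv2]
lemma surj_core (v : V2R3) : ∃ a : S3, Fq a = v := by
  obtain ⟨⟨p, q⟩, hpq⟩ := v
  have h1 : p 0 * p 0 + p 1 * p 1 + p 2 * p 2 = 1 := by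
    simpa [dotProduct, Fin.sum_univ_three] using hpq.1
  have h2 : q 0 * q 0 + q 1 * q 1 + q 2 * q 2 = 1 := by
    simpa [dotProduct, Fin.sum_univ_three] using hpq.2.1
  have h3 : p 0 * q 0 + p 1 * q 1 + p 2 * q 2 = 0 := by
    simpa [dotProduct, Fin.sum_univ_three] using hpq.2.2
  have hsum : Quaternion.normSq (⟨(p 0)*(q 1) + (p 0) - 1*(p 1)*(q 0) + (q 1) + 1, -1*(p 0)*(q 2) + (p 2)*(q 0) - 1*(q 2), -1*(p 1)*(q 2) + (p 2)*(q 1) + (p 2), -1*(p 1) + (q 0)⟩ : ℍ[ℝ]) + Quaternion.normSq (⟨-1*(p 0)*(q 2) + (p 2)*(q 0) - 1*(q 2), -1*(p 0)*(q 1) + (p 0) + (p 1)*(q 0) - 1*(q 1) + 1, (p 1) + (q 0), (p 1)*(q 2) - 1*(p 2)*(q 1) + (p 2)⟩ : ℍ[ℝ]) + Quaternion.normSq (⟨-1*(p 1)*(q 2) + (p 2)*(q 1) + (p 2), (p 1) + (q 0), -1*(p 0)*(q 1) - 1*(p 0) + (p 1)*(q 0) + (q 1) + 1, -1*(p 0)*(q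 2) + (p 2)*(q 0) + (q 2)⟩ : ℍ[ℝ]) + Quaternion.normSq (⟨-1*(p 1) + (q 0), (p 1)*(q 2) - 1*(p 2)*(q 1) + (p 2), -1*(p 0)*(q 2) + (p 2)*(q 0) + (q 2), (p 0)*(q 1) - 1*(p 0) - 1*(p 1)*(q 0) - 1*(q 1) + 1⟩ : ℍ[ℝ]) = 16 := by
    erw [Quaternion.normSq_def', Quaternion.normSq_def', Quaternion.normSq_def', Quaternion.normSq_def']
    linear_combination ((8:ℝ)) * h1 + (4*(p 0)^2 + 4*(p 1)^2 + 4*(p 2)^2 + 4) * h2 + (-4*(p 0)*(q 0) - 4*(p 1)*(q 1) - 4*(p 2)*(q 2)) * h3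
  have hnz : Quaternion.normSq (⟨(p 0)*(q 1) + (p 0) - 1*(p 1)*(q 0) + (q 1) + 1, -1*(p 0)*(q 2) + (p 2)*(q 0) - 1*(q 2), -1*(p 1)*(q 2) + (p 2)*(q 1) + (p 2), -1*(p 1) + (q 0)⟩ : ℍ[ℝ]) ≠ 0 ∨ Quaternion.normSq (⟨-1*(p 0)*(q 2) + (p 2)*(q 0) - 1*(q 2), -1*(p 0)*(q 1) + (p 0) + (p 1)*(q 0) - 1*(q 1) + 1, (p 1) + (q 0), (p 1)*(q 2) - 1*(p 2)*(q 1) + (p 2)⟩ : ℍ[ℝ]) ≠ 0 ∨ Quaternion.normSq (⟨-1*(p 1)*(q 2) + (p 2)*(q 1) + (p 2), (p 1) + (q 0), -1*(p 0)*(q 1) - 1*(p 0) + (p 1)*(q 0) + (q 1) + 1, -1*(p 0)*(q 2) + (p 2)*(q 0) + (q 2)⟩ : ℍ[ℝ]) ≠ 0 ∨ Quaternion.normSq (⟨-1*(p 1) + (q 0), (p 1)*(q 2) - 1*(p 2)*(q 1) + (p 2), -1*(p 0)*(q 2) + (p 2)*(q 0) + (q 2), (p 0)*(q 1) - 1*(p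 0) - 1*(p 1)*(q 0) - 1*(q 1) + 1⟩ : ℍ[ℝ]) ≠ 0 := by
    by_contra hcon
    push_neg at hcon
    rw [hcon.1, hcon.2.1, hcon.2.2.1, hcon.2.2.2] at hsum
    norm_num at hsum
  rcases hnz with h | h | h | h
  · refine build hpq h ?_ ?_
    · erw [conjI]
      ext <;> erw [Quaternion.normSq_def']
      · simp only [v1, v2, Quaternion.normSq_def', Quaternion.re_smul, Quaternion.imI_smul, Quaternion.imJ_smul, Quaternion.imK_smul, QuaternionAlgebra.re_smul, QuaternionAlgebra.imI_smul, QuaternionAlgebra.imJ_smul, QuaternionAlgebra.imK_smul, smul_eq_mul, mul_zero, smul_zero, Matrix.cons_val_zero, Matrix.cons_val_one, Matrix.head_cons, Matrix.cons_val_two, Matrix.tail_cons]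
      · simp only [v1, v2, Quaternion.normSq_def', Quaternion.re_smul, Quaternion.imI_smul, Quaternion.imJ_smul, Quaternion.imK_smul, QuaternionAlgebra.re_smul, QuaternionAlgebra.imI_smul, QuaternionAlgebra.imJ_smul, QuaternionAlgebra.imK_smul, smul_eq_mul, mul_zero, smul_zero, Matrix.cons_val_zero, Matrix.cons_val_one, Matrix.head_cons, Matrix.cons_val_two, Matrix.tail_cons]
        linear_combination (-2*(p 0)*(q 1)^2 - 2*(p 0)*(q 1) - 2*(p 0)*(q 2)^2 + 2*(p 1)*(q 0)*(q 1) + 2*(p 2)*(q 0)*(q 2) - 2*(q 1)^2 - 2*(q 1) - 2*(q 2)^2) * h1 + ((p 0)^3 + (p 0)^2 + (p 0)*(p 1)^2 + (p 0)*(p 2)^2 - 1*(p 0) + (p 1)^2 + (p 2)^2 - 1) * h2 + (-1*(p 0)^2*(q 0) + (p 0)*(p 1)*(q 1) + 2*(p 0)*(p 1) + (p 0)*(p 2)*(q 2) - 1*(p 0)*(q 0) - 2*(p 1)^2*(q 0) + (p 1)*(q 1) + 2*(p 1) - 2*(p 2)^2*(q 0) + (p 2)*(q 2)) * h3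
      · simp only [v1, v2, Quaternion.normSq_def', Quaternion.re_smul, Quaternion.imI_smul, Quaternion.imJ_smul, Quaternion.imK_smul, QuaternionAlgebra.re_smul, QuaternionAlgebra.imI_smul, QuaternionAlgebra.imJ_smul, QuaternionAlgebra.imK_smul, smul_eq_mul, mul_zero, smul_zero, Matrix.cons_val_zero, Matrix.cons_val_one, Matrix.head_cons, Matrix.cons_val_two, Matrix.tail_cons]
        linear_combination (-2*(p 1)*(q 1) - 2*(p 1) + 2*(q 0)*(q 1) + 2*(q 0)) * h1 + (-1*(p 0)^2*(p 1) - 1*(p 1)^3 - 1*(p 1)*(p 2)^2 + (p 1)) * h2 + ((p 0)*(p 1)*(q 0) - 2*(p 0)*(q 1) - 2*(p 0) + (p 1)^2*(q 1) + 2*(p 1)^2 + (p 1)*(p 2)*(q 2) - 2*(q 1) - 2) * h3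
      · simp only [v1, v2, Quaternion.normSq_def', Quaternion.re_smul, Quaternion.imI_smul, Quaternion.imJ_smul, Quaternion.imK_smul, QuaternionAlgebra.re_smul, QuaternionAlgebra.imI_smul, QuaternionAlgebra.imJ_smul, QuaternionAlgebra.imK_smul, smul_eq_mul, mul_zero, smul_zero, Matrix.cons_val_zero, Matrix.cons_val_one, Matrix.head_cons, Matrix.cons_val_two, Matrix.tail_cons]
        linear_combination (-2*(p 2)*(q 1) - 2*(p 2) + 2*(q 0)*(q 2)) * h1 + (-1*(p 0)^2*(p 2) - 1*(p 1)^2*(p 2) - 1*(p 2)^3 + (p 2)) * h2 + ((p 0)*(p 2)*(q 0) - 2*(p 0)*(q 2) + (p 1)*(p 2)*(q 1) + 2*(p 1)*(p 2) + (p 2)^2*(q 2) - 2*(q 2)) * h3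
    · erw [conjJ]
      ext <;> erw [Quaternion.normSq_def']
      · simp only [v1, v2, Quaternion.normSq_def', Quaternion.re_smul, Quaternion.imI_smul, Quaternion.imJ_smul, Quaternion.imK_smul, QuaternionAlgebra.re_smul, QuaternionAlgebra.imI_smul, QuaternionAlgebra.imJ_smul, QuaternionAlgebra.imK_smul, smul_eq_mul, mul_zero, smul_zero, Matrix.cons_val_zero, Matrix.cons_val_one, Matrix.head_cons, Matrix.cons_val_two, Matrix.tail_cons]
      · simp only [v1, v2, Quaternion.normSq_def', Quaternion.re_smul, Quaternion.imI_smul, Quaternion.imJ_smul, Quaternion.imK_smul, QuaternionAlgebra.re_smul, QuaternionAlgebra.imI_smul, QuaternionAlgebra.imJ_smul, QuaternionAlgebra.imK_smul, smul_eq_mul, mul_zero, smul_zero, Matrix.cons_val_zero, Matrix.cons_val_one, Matrix.head_cons, Matrix.cons_val_two, Matrix.tail_cons]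
        linear_combination (-1*(p 0)^2*(q 0) + 2*(p 0)*(p 1) - 1*(p 1)^2*(q 0) + 2*(p 1)*(q 1) + 2*(p 1) - 1*(p 2)^2*(q 0) + 2*(p 2)*(q 2) - 1*(q 0)) * h2 + ((p 0)*(q 0)^2 - 2*(p 0)*(q 1) - 2*(p 0) + (p 1)*(q 0)*(q 1) + (p 2)*(q 0)*(q 2) - 2*(q 1)^2 - 2*(q 1) - 2*(q 2)^2) * h3
      · simp only [v1, v2, Quaternion.normSq_def', Quaternion.re_smul, Quaternion.imI_smul, Quaternion.imJ_smul, Quaternion.imK_smul, QuaternionAlgebra.re_smul, QuaternionAlgebra.imI_smul, QuaternionAlgebra.imJ_smul, QuaternionAlgebra.imK_smul, smul_eq_mul, mul_zero, smul_zero, Matrix.cons_val_zero, Matrix.cons_val_one, Matrix.head_cons, Matrix.cons_val_two, Matrix.tail_cons]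
        linear_combination (-1*(p 0)^2*(q 1) - 1*(p 0)^2 - 2*(p 0)*(q 1) - 2*(p 0) - 1*(p 1)^2*(q 1) + (p 1)^2 - 1*(p 2)^2*(q 1) - 1*(p 2)^2 - 1*(q 1) - 1) * h2 + ((p 0)*(q 0)*(q 1) + (p 0)*(q 0) + (p 1)*(q 1)^2 - 1*(p 1)*(q 1) - 2*(p 1) + (p 2)*(q 1)*(q 2) + (p 2)*(q 2) + 2*(q 0)*(q 1) + 2*(q 0)) * h3
      · simp only [v1, v2, Quaternion.normSq_def', Quaternion.re_smul, Quaternion.imI_smul, Quaternion.imJ_smul, Quaternion.imK_smul, QuaternionAlgebra.re_smul, QuaternionAlgebra.imI_smul, QuaternionAlgebra.imJ_smul, QuaternionAlgebra.imK_smul, smul_eq_mul, mul_zero, smul_zero, Matrix.cons_val_zero, Matrix.cons_val_one, Matrix.head_cons, Matrix.cons_val_two, Matrix.tail_cons]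
        linear_combination (-1*(p 0)^2*(q 2) - 2*(p 0)*(q 2) - 1*(p 1)^2*(q 2) + 2*(p 1)*(p 2) - 1*(p 2)^2*(q 2) - 1*(q 2)) * h2 + ((p 0)*(q 0)*(q 2) + (p 1)*(q 1)*(q 2) - 2*(p 2)*(q 1) + (p 2)*(q 2)^2 - 2*(p 2) + 2*(q 0)*(q 2)) * h3
  · refine build hpq h ?_ ?_
    · erw [conjI]
      ext <;> erw [Quaternion.normSq_def']
      · simp only [v1, v2, Quaternion.normSq_def', Quaternion.re_smul, Quaternion.imI_smul, Quaternion.imJ_smul, Quaternion.imK_smul, QuaternionAlgebra.re_smul, QuaternionAlgebra.imI_smul, QuaternionAlgebra.imJ_smul, QuaternionAlgebra.imK_smul, smul_eq_mul, mul_zero, smul_zero, Matrix.cons_val_zero, Matrix.cons_val_one, Matrix.head_cons, Matrix.cons_val_two, Matrix.tail_cons]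
      · simp only [v1, v2, Quaternion.normSq_def', Quaternion.re_smul, Quaternion.imI_smul, Quaternion.imJ_smul, Quaternion.imK_smul, QuaternionAlgebra.re_smul, QuaternionAlgebra.imI_smul, QuaternionAlgebra.imJ_smul, QuaternionAlgebra.imK_smul, smul_eq_mul, mul_zero, smul_zero, Matrix.cons_val_zero, Matrix.cons_val_one, Matrix.head_cons, Matrix.cons_val_two, Matrix.tail_cons]
        linear_combination (-2*(p 0)*(q 1)^2 + 2*(p 0)*(q 1) - 2*(p 0)*(q 2)^2 + 2*(p 1)*(q 0)*(q 1) + 2*(p 2)*(q 0)*(q 2) - 2*(q 1)^2 + 2*(q 1) - 2*(q 2)^2) * h1 + ((p 0)^3 + (p 0)^2 + (p 0)*(p 1)^2 + (p 0)*(p 2)^2 - 1*(p 0) + (p 1)^2 + (p 2)^2 - 1) * h2 + (-1*(p 0)^2*(q 0) + (p 0)*(p 1)*(q 1) - 2*(p 0)*(p 1) + (p 0)*(p 2)*(q 2) - 1*(p 0)*(q 0) - 2*(p 1)^2*(q 0) + (p 1)*(q 1) - 2*(p 1) - 2*(p 2)^2*(q 0) + (p 2)*(q 2)) * h3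
      · simp only [v1, v2, Quaternion.normSq_def', Quaternion.re_smul, Quaternion.imI_smul, Quaternion.imJ_smul, Quaternion.imK_smul, QuaternionAlgebra.re_smul, QuaternionAlgebra.imI_smul, QuaternionAlgebra.imJ_smul, QuaternionAlgebra.imK_smul, smul_eq_mul, mul_zero, smul_zero, Matrix.cons_val_zero, Matrix.cons_val_one, Matrix.head_cons, Matrix.cons_val_two, Matrix.tail_cons]
        linear_combination (2*(p 1)*(q 1) - 2*(p 1) + 2*(q 0)*(q 1) - 2*(q 0)) * h1 + (-1*(p 0)^2*(p 1) - 1*(p 1)^3 - 1*(p 1)*(p 2)^2 + (p 1)) * h2 + ((p 0)*(p 1)*(q 0) - 2*(p 0)*(q 1) + 2*(p 0) + (p 1)^2*(q 1) - 2*(p 1)^2 + (p 1)*(p 2)*(q 2) - 2*(q 1) + 2) * h3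
      · simp only [v1, v2, Quaternion.normSq_def', Quaternion.re_smul, Quaternion.imI_smul, Quaternion.imJ_smul, Quaternion.imK_smul, QuaternionAlgebra.re_smul, QuaternionAlgebra.imI_smul, QuaternionAlgebra.imJ_smul, QuaternionAlgebra.imK_smul, smul_eq_mul, mul_zero, smul_zero, Matrix.cons_val_zero, Matrix.cons_val_one, Matrix.head_cons, Matrix.cons_val_two, Matrix.tail_cons]
        linear_combination (2*(p 2)*(q 1) - 2*(p 2) + 2*(q 0)*(q 2)) * h1 + (-1*(p 0)^2*(p 2) - 1*(p 1)^2*(p 2) - 1*(p 2)^3 + (p 2)) * h2 + ((p 0)*(p 2)*(q 0) - 2*(p 0)*(q 2) + (p 1)*(p 2)*(q 1) - 2*(p 1)*(p 2) + (p 2)^2*(q 2) - 2*(q 2)) * h3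
    · erw [conjJ]
      ext <;> erw [Quaternion.normSq_def']
      · simp only [v1, v2, Quaternion.normSq_def', Quaternion.re_smul, Quaternion.imI_smul, Quaternion.imJ_smul, Quaternion.imK_smul, QuaternionAlgebra.re_smul, QuaternionAlgebra.imI_smul, QuaternionAlgebra.imJ_smul, QuaternionAlgebra.imK_smul, smul_eq_mul, mul_zero, smul_zero, Matrix.cons_val_zero, Matrix.cons_val_one, Matrix.head_cons, Matrix.cons_val_two, Matrix.tail_cons]
      · simp only [v1, v2, Quaternion.normSq_def', Quaternion.re_smul, Quaternion.imI_smul, Quaternion.imJ_smul, Quaternion.imK_smul, QuaternionAlgebra.re_smul, QuaternionAlgebra.imI_smul, QuaternionAlgebra.imJ_smul, QuaternionAlgebra.imK_smul, smul_eq_mul, mul_zero, smul_zero, Matrix.cons_val_zero, Matrix.cons_val_one, Matrix.head_cons, Matrix.cons_val_two, Matrix.tail_cons]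
        linear_combination (-1*(p 0)^2*(q 0) - 2*(p 0)*(p 1) - 1*(p 1)^2*(q 0) + 2*(p 1)*(q 1) - 2*(p 1) - 1*(p 2)^2*(q 0) + 2*(p 2)*(q 2) - 1*(q 0)) * h2 + ((p 0)*(q 0)^2 + 2*(p 0)*(q 1) - 2*(p 0) + (p 1)*(q 0)*(q 1) + (p 2)*(q 0)*(q 2) - 2*(q 1)^2 + 2*(q 1) - 2*(q 2)^2) * h3
      · simp only [v1, v2, Quaternion.normSq_def', Quaternion.re_smul, Quaternion.imI_smul, Quaternion.imJ_smul, Quaternion.imK_smul, QuaternionAlgebra.re_smul, QuaternionAlgebra.imI_smul, QuaternionAlgebra.imJ_smul, QuaternionAlgebra.imK_smul, smul_eq_mul, mul_zero, smul_zero, Matrix.cons_val_zero, Matrix.cons_val_one, Matrix.head_cons, Matrix.cons_val_two, Matrix.tail_cons]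
        linear_combination (-1*(p 0)^2*(q 1) + (p 0)^2 - 2*(p 0)*(q 1) + 2*(p 0) - 1*(p 1)^2*(q 1) - 1*(p 1)^2 - 1*(p 2)^2*(q 1) + (p 2)^2 - 1*(q 1) + 1) * h2 + ((p 0)*(q 0)*(q 1) - 1*(p 0)*(q 0) + (p 1)*(q 1)^2 + (p 1)*(q 1) - 2*(p 1) + (p 2)*(q 1)*(q 2) - 1*(p 2)*(q 2) + 2*(q 0)*(q 1) - 2*(q 0)) * h3
      · simp only [v1, v2, Quaternion.normSq_def', Quaternion.re_smul, Quaternion.imI_smul, Quaternion.imJ_smul, Quaternion.imK_smul, QuaternionAlgebra.re_smul, QuaternionAlgebra.imI_smul, QuaternionAlgebra.imJ_smul, QuaternionAlgebra.imK_smul, smul_eq_mul, mul_zero, smul_zero, Matrix.cons_val_zero, Matrix.cons_val_one, Matrix.head_cons, Matrix.cons_val_two, Matrix.tail_cons]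
        linear_combination (-1*(p 0)^2*(q 2) - 2*(p 0)*(q 2) - 1*(p 1)^2*(q 2) - 2*(p 1)*(p 2) - 1*(p 2)^2*(q 2) - 1*(q 2)) * h2 + ((p 0)*(q 0)*(q 2) + (p 1)*(q 1)*(q 2) + 2*(p 2)*(q 1) + (p 2)*(q 2)^2 - 2*(p 2) + 2*(q 0)*(q 2)) * h3
  · refine build hpq h ?_ ?_
    · erw [conjI]
      ext <;> erw [Quaternion.normSq_def']
      · simp only [v1, v2, Quaternion.normSq_def', Quaternion.re_smul, Quaternion.imI_smul, Quaternion.imJ_smul, Quaternion.imK_smul, QuaternionAlgebra.re_smul, QuaternionAlgebra.imI_smul, QuaternionAlgebra.imJ_smul, QuaternionAlgebra.imK_smul, smul_eq_mul, mul_zero, smul_zero, Matrix.cons_val_zero, Matrix.cons_val_one, Matrix.head_cons, Matrix.cons_val_two, Matrix.tail_cons]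
      · simp only [v1, v2, Quaternion.normSq_def', Quaternion.re_smul, Quaternion.imI_smul, Quaternion.imJ_smul, Quaternion.imK_smul, QuaternionAlgebra.re_smul, QuaternionAlgebra.imI_smul, QuaternionAlgebra.imJ_smul, QuaternionAlgebra.imK_smul, smul_eq_mul, mul_zero, smul_zero, Matrix.cons_val_zero, Matrix.cons_val_one, Matrix.head_cons, Matrix.cons_val_two, Matrix.tail_cons]
        linear_combination (-2*(p 0)*(q 1)^2 - 2*(p 0)*(q 1) - 2*(p 0)*(q 2)^2 + 2*(p 1)*(q 0)*(q 1) + 2*(p 2)*(q 0)*(q 2) + 2*(q 1)^2 + 2*(q 1) + 2*(q 2)^2) * h1 + ((p 0)^3 - 1*(p 0)^2 + (p 0)*(p 1)^2 + (p 0)*(p 2)^2 - 1*(p 0) - 1*(p 1)^2 - 1*(p 2)^2 + 1) * h2 + (-1*(p 0)^2*(q 0) + (p 0)*(p 1)*(q 1) + 2*(p 0)*(p 1) + (p 0)*(p 2)*(q 2) + (p 0)*(q 0) - 2*(p 1)^2*(q 0) - 1*(p 1)*(q 1) - 2*(p 1) - 2*(p 2)^2*(q 0) - 1*(p 2)*(q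 2)) * h3
      · simp only [v1, v2, Quaternion.normSq_def', Quaternion.re_smul, Quaternion.imI_smul, Quaternion.imJ_smul, Quaternion.imK_smul, QuaternionAlgebra.re_smul, QuaternionAlgebra.imI_smul, QuaternionAlgebra.imJ_smul, QuaternionAlgebra.imK_smul, smul_eq_mul, mul_zero, smul_zero, Matrix.cons_val_zero, Matrix.cons_val_one, Matrix.head_cons, Matrix.cons_val_two, Matrix.tail_cons]
        linear_combination (-2*(p 1)*(q 1) - 2*(p 1) - 2*(q 0)*(q 1) - 2*(q 0)) * h1 + (-1*(p 0)^2*(p 1) - 1*(p 1)^3 - 1*(p 1)*(p 2)^2 + (p 1)) * h2 + ((p 0)*(p 1)*(q 0) + 2*(p 0)*(q 1) + 2*(p 0) + (p 1)^2*(q 1) + 2*(p 1)^2 + (p 1)*(p 2)*(q 2) - 2*(q 1) - 2) * h3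
      · simp only [v1, v2, Quaternion.normSq_def', Quaternion.re_smul, Quaternion.imI_smul, Quaternion.imJ_smul, Quaternion.imK_smul, QuaternionAlgebra.re_smul, QuaternionAlgebra.imI_smul, QuaternionAlgebra.imJ_smul, QuaternionAlgebra.imK_smul, smul_eq_mul, mul_zero, smul_zero, Matrix.cons_val_zero, Matrix.cons_val_one, Matrix.head_cons, Matrix.cons_val_two, Matrix.tail_cons]
        linear_combination (-2*(p 2)*(q 1) - 2*(p 2) - 2*(q 0)*(q 2)) * h1 + (-1*(p 0)^2*(p 2) - 1*(p 1)^2*(p 2) - 1*(p 2)^3 + (p 2)) * h2 + ((p 0)*(p 2)*(q 0) + 2*(p 0)*(q 2) + (p 1)*(p 2)*(q 1) + 2*(p 1)*(p 2) + (p 2)^2*(q 2) - 2*(q 2)) * h3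
    · erw [conjJ]
      ext <;> erw [Quaternion.normSq_def']
      · simp only [v1, v2, Quaternion.normSq_def', Quaternion.re_smul, Quaternion.imI_smul, Quaternion.imJ_smul, Quaternion.imK_smul, QuaternionAlgebra.re_smul, QuaternionAlgebra.imI_smul, QuaternionAlgebra.imJ_smul, QuaternionAlgebra.imK_smul, smul_eq_mul, mul_zero, smul_zero, Matrix.cons_val_zero, Matrix.cons_val_one, Matrix.head_cons, Matrix.cons_val_two, Matrix.tail_cons]
      · simp only [v1, v2, Quaternion.normSq_def', Quaternion.re_smul, Quaternion.imI_smul, Quaternion.imJ_smul, Quaternion.imK_smul, QuaternionAlgebra.re_smul, QuaternionAlgebra.imI_smul, QuaternionAlgebra.imJ_smul, QuaternionAlgebra.imK_smul, smul_eq_mul, mul_zero, smul_zero, Matrix.cons_val_zero, Matrix.cons_val_one, Matrix.head_cons, Matrix.cons_val_two, Matrix.tail_cons]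
        linear_combination (-1*(p 0)^2*(q 0) + 2*(p 0)*(p 1) - 1*(p 1)^2*(q 0) - 2*(p 1)*(q 1) - 2*(p 1) - 1*(p 2)^2*(q 0) - 2*(p 2)*(q 2) - 1*(q 0)) * h2 + ((p 0)*(q 0)^2 - 2*(p 0)*(q 1) - 2*(p 0) + (p 1)*(q 0)*(q 1) + (p 2)*(q 0)*(q 2) + 2*(q 1)^2 + 2*(q 1) + 2*(q 2)^2) * h3
      · simp only [v1, v2, Quaternion.normSq_def', Quaternion.re_smul, Quaternion.imI_smul, Quaternion.imJ_smul, Quaternion.imK_smul, QuaternionAlgebra.re_smul, QuaternionAlgebra.imI_smul, QuaternionAlgebra.imJ_smul, QuaternionAlgebra.imK_smul, smul_eq_mul, mul_zero, smul_zero, Matrix.cons_val_zero, Matrix.cons_val_one, Matrix.head_cons, Matrix.cons_val_two, Matrix.tail_cons]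
        linear_combination (-1*(p 0)^2*(q 1) - 1*(p 0)^2 + 2*(p 0)*(q 1) + 2*(p 0) - 1*(p 1)^2*(q 1) + (p 1)^2 - 1*(p 2)^2*(q 1) - 1*(p 2)^2 - 1*(q 1) - 1) * h2 + ((p 0)*(q 0)*(q 1) + (p 0)*(q 0) + (p 1)*(q 1)^2 - 1*(p 1)*(q 1) - 2*(p 1) + (p 2)*(q 1)*(q 2) + (p 2)*(q 2) - 2*(q 0)*(q 1) - 2*(q 0)) * h3
      · simp only [v1, v2, Quaternion.normSq_def', Quaternion.re_smul, Quaternion.imI_smul, Quaternion.imJ_smul, Quaternion.imK_smul, QuaternionAlgebra.re_smul, QuaternionAlgebra.imI_smul, QuaternionAlgebra.imJ_smul, QuaternionAlgebra.imK_smul, smul_eq_mul, mul_zero, smul_zero, Matrix.cons_val_zero, Matrix.cons_val_one, Matrix.head_cons, Matrix.cons_val_two, Matrix.tail_cons]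
        linear_combination (-1*(p 0)^2*(q 2) + 2*(p 0)*(q 2) - 1*(p 1)^2*(q 2) + 2*(p 1)*(p 2) - 1*(p 2)^2*(q 2) - 1*(q 2)) * h2 + ((p 0)*(q 0)*(q 2) + (p 1)*(q 1)*(q 2) - 2*(p 2)*(q 1) + (p 2)*(q 2)^2 - 2*(p 2) - 2*(q 0)*(q 2)) * h3
  · refine build hpq h ?_ ?_
    · erw [conjI]
      ext <;> erw [Quaternion.normSq_def']
      · simp only [v1, v2, Quaternion.normSq_def', Quaternion.re_smul, Quaternion.imI_smul, Quaternion.imJ_smul, Quaternion.imK_smul, QuaternionAlgebra.re_smul, QuaternionAlgebra.imI_smul, QuaternionAlgebra.imJ_smul, QuaternionAlgebra.imK_smul, smul_eq_mul, mul_zero, smul_zero, Matrix.cons_val_zero, Matrix.cons_val_one, Matrix.head_cons, Matrix.cons_val_two, Matrix.tail_cons]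
      · simp only [v1, v2, Quaternion.normSq_def', Quaternion.re_smul, Quaternion.imI_smul, Quaternion.imJ_smul, Quaternion.imK_smul, QuaternionAlgebra.re_smul, QuaternionAlgebra.imI_smul, QuaternionAlgebra.imJ_smul, QuaternionAlgebra.imK_smul, smul_eq_mul, mul_zero, smul_zero, Matrix.cons_val_zero, Matrix.cons_val_one, Matrix.head_cons, Matrix.cons_val_two, Matrix.tail_cons]
        linear_combination (-2*(p 0)*(q 1)^2 + 2*(p 0)*(q 1) - 2*(p 0)*(q 2)^2 + 2*(p 1)*(q 0)*(q 1) + 2*(p 2)*(q 0)*(q 2) + 2*(q 1)^2 - 2*(q 1) + 2*(q 2)^2) * h1 + ((p 0)^3 - 1*(p 0)^2 + (p 0)*(p 1)^2 + (p 0)*(p 2)^2 - 1*(p 0) - 1*(p 1)^2 - 1*(p 2)^2 + 1) * h2 + (-1*(p 0)^2*(q 0) + (p 0)*(p 1)*(q 1) - 2*(p 0)*(p 1) + (p 0)*(p 2)*(q 2) + (p 0)*(q 0) - 2*(p 1)^2*(q 0) - 1*(p 1)*(q 1) + 2*(p 1) - 2*(p 2)^2*(q 0) - 1*(p 2)*(q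 2)) * h3
      · simp only [v1, v2, Quaternion.normSq_def', Quaternion.re_smul, Quaternion.imI_smul, Quaternion.imJ_smul, Quaternion.imK_smul, QuaternionAlgebra.re_smul, QuaternionAlgebra.imI_smul, QuaternionAlgebra.imJ_smul, QuaternionAlgebra.imK_smul, smul_eq_mul, mul_zero, smul_zero, Matrix.cons_val_zero, Matrix.cons_val_one, Matrix.head_cons, Matrix.cons_val_two, Matrix.tail_cons]
        linear_combination (2*(p 1)*(q 1) - 2*(p 1) - 2*(q 0)*(q 1) + 2*(q 0)) * h1 + (-1*(p 0)^2*(p 1) - 1*(p 1)^3 - 1*(p 1)*(p 2)^2 + (p 1)) * h2 + ((p 0)*(p 1)*(q 0) + 2*(p 0)*(q 1) - 2*(p 0) + (p 1)^2*(q 1) - 2*(p 1)^2 + (p 1)*(p 2)*(q 2) - 2*(q 1) + 2) * h3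
      · simp only [v1, v2, Quaternion.normSq_def', Quaternion.re_smul, Quaternion.imI_smul, Quaternion.imJ_smul, Quaternion.imK_smul, QuaternionAlgebra.re_smul, QuaternionAlgebra.imI_smul, QuaternionAlgebra.imJ_smul, QuaternionAlgebra.imK_smul, smul_eq_mul, mul_zero, smul_zero, Matrix.cons_val_zero, Matrix.cons_val_one, Matrix.head_cons, Matrix.cons_val_two, Matrix.tail_cons]
        linear_combination (2*(p 2)*(q 1) - 2*(p 2) - 2*(q 0)*(q 2)) * h1 + (-1*(p 0)^2*(p 2) - 1*(p 1)^2*(p 2) - 1*(p 2)^3 + (p 2)) * h2 + ((p 0)*(p 2)*(q 0) + 2*(p 0)*(q 2) + (p 1)*(p 2)*(q 1) - 2*(p 1)*(p 2) + (p 2)^2*(q 2) - 2*(q 2)) * h3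
    · erw [conjJ]
      ext <;> erw [Quaternion.normSq_def']
      · simp only [v1, v2, Quaternion.normSq_def', Quaternion.re_smul, Quaternion.imI_smul, Quaternion.imJ_smul, Quaternion.imK_smul, QuaternionAlgebra.re_smul, QuaternionAlgebra.imI_smul, QuaternionAlgebra.imJ_smul, QuaternionAlgebra.imK_smul, smul_eq_mul, mul_zero, smul_zero, Matrix.cons_val_zero, Matrix.cons_val_one, Matrix.head_cons, Matrix.cons_val_two, Matrix.tail_cons]
      · simp only [v1, v2, Quaternion.normSq_def', Quaternion.re_smul, Quaternion.imI_smul, Quaternion.imJ_smul, Quaternion.imK_smul, QuaternionAlgebra.re_smul, QuaternionAlgebra.imI_smul, QuaternionAlgebra.imJ_smul, QuaternionAlgebra.imK_smul, smul_eq_mul, mul_zero, smul_zero, Matrix.cons_val_zero, Matrix.cons_val_one, Matrix.head_cons, Matrix.cons_val_two, Matrix.tail_cons]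
        linear_combination (-1*(p 0)^2*(q 0) - 2*(p 0)*(p 1) - 1*(p 1)^2*(q 0) - 2*(p 1)*(q 1) + 2*(p 1) - 1*(p 2)^2*(q 0) - 2*(p 2)*(q 2) - 1*(q 0)) * h2 + ((p 0)*(q 0)^2 + 2*(p 0)*(q 1) - 2*(p 0) + (p 1)*(q 0)*(q 1) + (p 2)*(q 0)*(q 2) + 2*(q 1)^2 - 2*(q 1) + 2*(q 2)^2) * h3
      · simp only [v1, v2, Quaternion.normSq_def', Quaternion.re_smul, Quaternion.imI_smul, Quaternion.imJ_smul, Quaternion.imK_smul, QuaternionAlgebra.re_smul, QuaternionAlgebra.imI_smul, QuaternionAlgebra.imJ_smul, QuaternionAlgebra.imK_smul, smul_eq_mul, mul_zero, smul_zero, Matrix.cons_val_zero, Matrix.cons_val_one, Matrix.head_cons, Matrix.cons_val_two, Matrix.tail_cons]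
        linear_combination (-1*(p 0)^2*(q 1) + (p 0)^2 + 2*(p 0)*(q 1) - 2*(p 0) - 1*(p 1)^2*(q 1) - 1*(p 1)^2 - 1*(p 2)^2*(q 1) + (p 2)^2 - 1*(q 1) + 1) * h2 + ((p 0)*(q 0)*(q 1) - 1*(p 0)*(q 0) + (p 1)*(q 1)^2 + (p 1)*(q 1) - 2*(p 1) + (p 2)*(q 1)*(q 2) - 1*(p 2)*(q 2) - 2*(q 0)*(q 1) + 2*(q 0)) * h3
      · simp only [v1, v2, Quaternion.normSq_def', Quaternion.re_smul, Quaternion.imI_smul, Quaternion.imJ_smul, Quaternion.imK_smul, QuaternionAlgebra.re_smul, QuaternionAlgebra.imI_smul, QuaternionAlgebra.imJ_smul, QuaternionAlgebra.imK_smul, smul_eq_mul, mul_zero, smul_zero, Matrix.cons_val_zero, Matrix.cons_val_one, Matrix.head_cons, Matrix.cons_val_two, Matrix.tail_cons]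
        linear_combination (-1*(p 0)^2*(q 2) + 2*(p 0)*(q 2) - 1*(p 1)^2*(q 2) - 2*(p 1)*(p 2) - 1*(p 2)^2*(q 2) - 1*(q 2)) * h2 + ((p 0)*(q 0)*(q 2) + (p 1)*(q 1)*(q 2) + 2*(p 2)*(q 1) + (p 2)*(q 2)^2 - 2*(p 2) - 2*(q 0)*(q 2)) * h3

lemma sign_smul_symm {e : ℝ} (he : e = 1 ∨ e = -1) {u w : Fin 3 → ℝ} (h : w = e • u) :
    u = e • w := by
  rcases he with h' | h' <;> subst h' <;> rw [h, smul_smul] <;> norm_num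

lemma signRel_equiv : Equivalence signRel := by
  constructor
  · intro a
    exact ⟨1, 1, Or.inl rfl, Or.inl rfl, (one_smul ℝ _).symm, (one_smul ℝ _).symm⟩
  · rintro a b ⟨e1, e2, he1, he2, h1, h2⟩
    exact ⟨e1, e2, he1, he2, sign_smul_symm he1 h1, sign_smul_symm he2 h2⟩
  · rintro a b c ⟨e1, e2, he1, he2, h1, h2⟩ ⟨f1, f2, hf1, hf2, k1, k2⟩
    refine ⟨f1 * e1, f2 * e2, ?_, ?_, ?_, ?_⟩
    · rcases he1 with h | h <;> rcases hf1 with h' | h' <;> subst h <;> subst h' <;> norm_num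
    · rcases he2 with h | h <;> rcases hf2 with h' | h' <;> subst h <;> subst h' <;> norm_num
    · rw [k1, h1, smul_smul]
    · rw [k2, h2, smul_smul]

lemma sign_of_outer {u w : Fin 3 → ℝ} (hu : u ⬝ᵥ u = 1) (h : ∀ i j, w i * w j = u i * u j) :
    ∃ e : ℝ, (e = 1 ∨ e = -1) ∧ w = e • u := by
  have hex : ∃ i, u i ≠ 0 := by
    by_contra hc
    push_neg at hc
    simp [dotProduct, Fin.sum_univ_three, hc 0, hc 1, hc 2] at hu
  obtain ⟨i0, hi0⟩ := hex
  have hsq : w i0 * w i0 = u i0 * u i0 := h i0 i0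
  have hw0 : w i0 ≠ 0 := by
    intro h0
    apply hi0
    have : u i0 * u i0 = 0 := by rw [← hsq, h0, zero_mul]
    exact mul_self_eq_zero.mp this
  refine ⟨w i0 / u i0, ?_, ?_⟩
  · have he2 : (w i0 / u i0) ^ 2 = 1 := by
      field_simp
      linear_combination hsq
    rcases mul_eq_zero.mp (show (w i0 / u i0 - 1) * (w i0 / u i0 + 1) = 0 by
      linear_combination he2) with h' | h'
    · left; linarith
    · right; linarith
  · funext j
    have key : (w j * u i0 - w i0 * u j) * w i0 = 0 := by
      linear_combination (u i0) * (h j i0) - (u j) * hsq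
    rcases mul_eq_zero.mp key with h' | h'
    · have : w j * u i0 = w i0 * u j := by linarith
      show w j = w i0 / u i0 * u j
      field_simp
      linarith
    · exact absurd h' hw0

def psiFun (v : V2R3) : (Fin 3 → Fin 3 → ℝ) × (Fin 3 → Fin 3 → ℝ) :=
  ((fun i j => v.val.1 i * v.val.1 j), (fun i j => v.val.2 i * v.val.2 j))

lemma psiFun_resp : ∀ a b, signRel a b → psiFun a = psiFun b := by
  rintro a b ⟨e1, e2, he1, he2, h1, h2⟩
  have s1 : e1 * e1 = 1 := by rcases he1 with h | h <;> rw [h] <;> norm_num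
  have s2 : e2 * e2 = 1 := by rcases he2 with h | h <;> rw [h] <;> norm_num
  unfold psiFun
  rw [h1, h2]
  simp only [Prod.mk.injEq]
  constructor <;> funext i j <;> simp only [Pi.smul_apply, smul_eq_mul]
  · linear_combination (-(a.val.1 i * a.val.1 j)) * s1
  · linear_combination (-(a.val.2 i * a.val.2 j)) * s2

lemma continuous_psiFun : Continuous psiFun := by
  unfold psiFun
  apply Continuous.prodMk <;>
  · apply continuous_pi
    intro i
    apply continuous_pi
    intro j
    fun_prop

instance quotSignT2 : T2Space (Quot signRel) := by
  have hc : Continuous (Quot.lift psiFun psiFun_resp) :=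
    continuous_quot_lift _ continuous_psiFun
  have hinj : Function.Injective (Quot.lift psiFun psiFun_resp) := by
    intro x y
    induction x using Quot.ind with | _ a =>
    induction y using Quot.ind with | _ b =>
    intro h
    have hh := Prod.ext_iff.mp h
    have hA : ∀ i j, b.val.1 i * b.val.1 j = a.val.1 i * a.val.1 j := by
      intro i j
      exact (congrFun (congrFun hh.1 i) j).symm
    have hB : ∀ i j, b.val.2 i * b.val.2 j = a.val.2 i * a.val.2 j := by
      intro i j
      exact (congrFun (congrFun hh.2 i) j).symm
    obtain ⟨e1, he1, hw1⟩ := sign_of_outer a.property.1 hA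
    obtain ⟨e2, he2, hw2⟩ := sign_of_outer a.property.2.1 hB
    exact Quot.sound ⟨e1, e2, he1, he2, hw1, hw2⟩
  exact ⟨fun x y hxy => separated_by_continuous hc (fun h => hxy (hinj h))⟩

instance s3Compact : CompactSpace S3 := by
  have h : IsCompact {q : ℍ[ℝ] | ‖q‖ = 1} := by
    have he : {q : ℍ[ℝ] | ‖q‖ = 1} = Metric.sphere (0 : ℍ[ℝ]) 1 := by
      ext q
      simp [mem_sphere_zero_iff_norm]
    rw [he]
    exact isCompact_sphere 0 1
  exact isCompact_iff_compactSpace.mp h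

/-- The quotient of the Stiefel manifold `V₂(ℝ³)` by `(v₁, v₂) ∼ (ε₁ v₁, ε₂ v₂)`,
`ε₁, ε₂ = ±1`, is homeomorphic to the orbit space `S³/Q₈`. -/
theorem V2_quotient_homeomorph_S3_mod_Q8 :
    Nonempty (Quot signRel ≃ₜ Quot q8Rel) := by
  let Φ : Quot q8Rel → Quot signRel :=
    Quot.lift (fun a => Quot.mk signRel (Fq a)) (fun a b h => Quot.sound (Fq_invariant h))
  have hΦc : Continuous Φ :=
    continuous_quot_lift _ (continuous_quot_mk.comp continuous_Fq)
  have hsurj : Function.Surjective Φ := by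
    intro x
    induction x using Quot.ind with | _ v =>
    obtain ⟨a, ha⟩ := surj_core v
    exact ⟨Quot.mk _ a, by show Quot.mk signRel (Fq a) = _; rw [ha]⟩
  have hinj : Function.Injective Φ := by
    intro x y
    induction x using Quot.ind with | _ a =>
    induction y using Quot.ind with | _ b =>
    intro h
    exact Quot.sound (Fq_inj_core ((signRel_equiv.eqvGen_iff).mp (Quot.eq.mp h)))
  let E : Quot q8Rel ≃ Quot signRel := Equiv.ofBijective Φ ⟨hinj, hsurj⟩
  exact ⟨(Continuous.homeoOfEquivCompactToT2 (f := E) hΦc).symm⟩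
end

section
/- Let n ≥ 2 and let ω : [0,1] → Mₙ⁻(SO(3)) be a continuous path, ω(t) = (B₁(t),…,Bₙ(t)). Then for all t ∈ [0,1]: (i) if Bᵢ(0) = id then Bᵢ(t) = id; (ii) if Bᵢ(0) = Bⱼ(0) then Bᵢ(t) = Bⱼ(t); (iii) if Bᵢ(0) and Bⱼ(0) are distinct involutions then Bᵢ(t) and Bⱼ(t) are distinct involutions; (iv) if B_k(0) = Bᵢ(0)Bⱼ(0) then B_k(t) = Bᵢ(t)Bⱼ(t). -/
set_option maxHeartbeats 1600000

/-- `Mₙ⁻(SO(3))`: the complement of the connected component of the identity `n`-tuple in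
`Hom(ℤⁿ, SO(3))`. -/
def MMinus (n : ℕ) : Set (CommTuples n SO3) := (connectedComponent (oneTuple n SO3))ᶜ

/-- The `i`-th coordinate `Bᵢ(t)` of a path `ω` in `Mₙ⁻(SO(3))`. -/
def coordAt {n : ℕ} (ω : C(unitInterval, ↥(MMinus n))) (i : Fin n)
    (t : unitInterval) : SO3 :=
  ((ω t : CommTuples n SO3)).val i


open Matrix

noncomputable section SO3Aux

abbrev M3 := Matrix (Fin 3) (Fin 3) ℝ

def crossM (x : Fin 3 → ℝ) : M3 := !![0, -x 2, x 1; x 2, 0, -x 0; -x 1, x 0, 0]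

def projM (k : Fin 3 → ℝ) : M3 := vecMulVec k k

def rotM (k : Fin 3 → ℝ) (e a b : ℝ) : M3 :=
  e • projM k + a • (1 - projM k) + b • crossM k

lemma crossM_transpose (k : Fin 3 → ℝ) : (crossM k)ᵀ = -crossM k := by
  ext i j; fin_cases i <;> fin_cases j <;> simp [crossM]

lemma projM_transpose (k : Fin 3 → ℝ) : (projM k)ᵀ = projM k := by
  ext i j; fin_cases i <;> fin_cases j <;> simp [projM, vecMulVec, mul_comm]

lemma crossM_mulVec_self (k : Fin 3 → ℝ) : (crossM k).mulVec k = 0 := by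
  funext i; fin_cases i <;> simp [crossM, mulVec, dotProduct, Fin.sum_univ_three] <;> ring

lemma projM_mulVec' (v y : Fin 3 → ℝ) : (projM v).mulVec y = (v ⬝ᵥ y) • v := by
  funext i
  simp [projM, vecMulVec, mulVec, dotProduct, Fin.sum_univ_three]
  ring

lemma crossM_mul_projM (k : Fin 3 → ℝ) : crossM k * projM k = 0 := by
  ext i j
  simp [crossM, projM, vecMulVec, Matrix.mul_apply, Fin.sum_univ_three]
  fin_cases i <;> simp [crossM] <;> ring

lemma projM_mul_crossM (k : Fin 3 → ℝ) : projM k * crossM k = 0 := by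
  ext i j
  simp [crossM, projM, vecMulVec, Matrix.mul_apply, Fin.sum_univ_three]
  fin_cases j <;> simp [crossM] <;> ring

lemma mul_transpose_apply (A B : M3) (i j : Fin 3) : (A * Bᵀ) i j = A i ⬝ᵥ B j := by
  simp [Matrix.mul_apply, dotProduct]

section UnitK

variable (k w : Fin 3 → ℝ)
  (hk : k 0 ^ 2 + k 1 ^ 2 + k 2 ^ 2 = 1)
  (hw : w 0 ^ 2 + w 1 ^ 2 + w 2 ^ 2 = 1)
  (hkw : k 0 * w 0 + k 1 * w 1 + k 2 * w 2 = 0)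

include hk in
lemma crossM_sq : crossM k * crossM k = projM k - 1 := by
  ext i j
  fin_cases i <;> fin_cases j <;>
    simp [crossM, projM, vecMulVec, Matrix.mul_apply, Fin.sum_univ_three, Matrix.one_apply] <;>
    nlinarith [hk]

include hk in
lemma projM_sq : projM k * projM k = projM k := by
  ext i j
  simp [projM, vecMulVec, Matrix.mul_apply, Fin.sum_univ_three]
  linear_combination (k i * k j) * hk

include hk in
lemma rotM_mul (e a b e' a' b' : ℝ) :
    rotM k e a b * rotM k e' a' b' = rotM k (e*e') (a*a'-b*b') (a*b'+b*a') := by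
  unfold rotM
  simp only [mul_add, add_mul, smul_mul_assoc, mul_smul_comm, smul_smul, sub_mul, mul_sub,
    one_mul, mul_one, projM_sq k hk, crossM_sq k hk, crossM_mul_projM, projM_mul_crossM]
  module

lemma rotM_transpose (e a b : ℝ) : (rotM k e a b)ᵀ = rotM k e a (-b) := by
  unfold rotM
  simp only [transpose_add, transpose_smul, transpose_sub, transpose_one,
    projM_transpose, crossM_transpose]
  module

include hk in
lemma rotM_orth {a b : ℝ} (hab : a ^ 2 + b ^ 2 = 1) (e : ℝ) (he : e ^ 2 = 1) :
    rotM k e a b * (rotM k e a b)ᵀ = 1 := by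
  rw [rotM_transpose, rotM_mul k hk]
  have h1 : e * e = 1 := by nlinarith
  have h2 : a * a - b * -b = 1 := by nlinarith
  have h3 : a * -b + b * a = 0 := by ring
  rw [h1, h2, h3]
  unfold rotM
  module

include hk in
lemma rotM_comm (e a b e' a' b' : ℝ) :
    rotM k e a b * rotM k e' a' b' = rotM k e' a' b' * rotM k e a b := by
  rw [rotM_mul k hk, rotM_mul k hk, mul_comm e e',
    show a*a'-b*b' = a'*a-b'*b from by ring, show a*b'+b*a' = a'*b+b'*a from by ring]

lemma rotM_one : rotM k 1 1 0 = 1 := by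
  unfold rotM; module

include hk in
lemma dot_self_k : k ⬝ᵥ k = 1 := by
  simpa [dotProduct, Fin.sum_univ_three, sq] using hk

include hk in
lemma rotM_mulVec_k (e a b : ℝ) : (rotM k e a b).mulVec k = e • k := by
  unfold rotM
  simp [add_mulVec, smul_mulVec, sub_mulVec, projM_mulVec', crossM_mulVec_self,
    dot_self_k k hk, one_mulVec]

include hkw in
lemma dot_kw : k ⬝ᵥ w = 0 := by
  simpa [dotProduct, Fin.sum_univ_three] using hkw

include hkw in
lemma rotM_mulVec_w (e a b : ℝ) :
    (rotM k e a b).mulVec w = a • w + b • (crossM k).mulVec w := by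
  unfold rotM
  simp [add_mulVec, smul_mulVec, sub_mulVec, projM_mulVec', dot_kw k w hkw, one_mulVec]

include hk hkw in
lemma crossM_mulVec_u : (crossM k).mulVec ((crossM k).mulVec w) = -w := by
  rw [Matrix.mulVec_mulVec, crossM_sq k hk, sub_mulVec, projM_mulVec', dot_kw k w hkw,
    one_mulVec]
  module

include hk hkw in
lemma rotM_mulVec_u (e a b : ℝ) :
    (rotM k e a b).mulVec ((crossM k).mulVec w) =
      a • (crossM k).mulVec w - b • w := by
  rw [Matrix.mulVec_mulVec]
  have h2 : rotM k e a b * crossM k = a • crossM k + b • (projM k - 1) := by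
    unfold rotM
    simp only [add_mul, smul_mul_assoc, sub_mul, one_mul, projM_mul_crossM, crossM_sq k hk]
    module
  rw [h2, add_mulVec, smul_mulVec, smul_mulVec, sub_mulVec, projM_mulVec',
    dot_kw k w hkw, one_mulVec]
  module

def uVec : Fin 3 → ℝ := (crossM k).mulVec w

def basisH : M3 := Matrix.of ![k, w, uVec k w]

include hk hw hkw in
lemma basisH_mul_transpose : basisH k w * (basisH k w)ᵀ = 1 := by
  ext i j
  rw [mul_transpose_apply]
  fin_cases i <;> fin_cases j <;>
    simp [basisH, uVec, crossM, mulVec, dotProduct,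
      Fin.sum_univ_three, Matrix.one_apply] <;>
    nlinarith [hk, hw, hkw]

include hk hw hkw in
lemma projM_sum : projM k + projM w + projM (uVec k w) = 1 := by
  have h := mul_eq_one_comm.mp (basisH_mul_transpose k w hk hw hkw)
  ext i j
  have h2 := congrFun (congrFun h i) j
  simp only [Matrix.mul_apply, Fin.sum_univ_three, basisH, transpose_apply,
    Matrix.of_apply] at h2
  simp only [Matrix.add_apply, projM, vecMulVec_apply]
  rw [← h2]
  simp [basisH]

include hk hw hkw in
lemma recon (y : Fin 3 → ℝ) :
    y = (k ⬝ᵥ y) • k + (w ⬝ᵥ y) • w + (uVec k w ⬝ᵥ y) • uVec k w := by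
  conv_lhs => rw [← Matrix.one_mulVec y, ← projM_sum k w hk hw hkw]
  rw [Matrix.add_mulVec, Matrix.add_mulVec, projM_mulVec', projM_mulVec', projM_mulVec']

include hk hw hkw in
lemma eq_of_basis_action (Y Z : M3)
    (h1 : Y.mulVec k = Z.mulVec k) (h2 : Y.mulVec w = Z.mulVec w)
    (h3 : Y.mulVec (uVec k w) = Z.mulVec (uVec k w)) : Y = Z := by
  have hH : (basisH k w)ᵀ * basisH k w = 1 :=
    mul_eq_one_comm.mp (basisH_mul_transpose k w hk hw hkw)
  have key : Y * (basisH k w)ᵀ = Z * (basisH k w)ᵀ := by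
    ext i j
    have hXe : ∀ X : M3, (X * (basisH k w)ᵀ) i j = (X.mulVec (basisH k w j)) i := by
      intro X
      simp [Matrix.mul_apply, mulVec, dotProduct]
    rw [hXe, hXe]
    fin_cases j
    · exact congrFun h1 i
    · exact congrFun h2 i
    · exact congrFun h3 i
  calc Y = Y * ((basisH k w)ᵀ * basisH k w) := by rw [hH, mul_one]
    _ = Y * (basisH k w)ᵀ * basisH k w := by rw [Matrix.mul_assoc]
    _ = Z * (basisH k w)ᵀ * basisH k w := by rw [key]
    _ = Z * ((basisH k w)ᵀ * basisH k w) := by rw [Matrix.mul_assoc]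
    _ = Z := by rw [hH, mul_one]

include hk hw hkw in
lemma dots9 : k ⬝ᵥ k = 1 ∧ w ⬝ᵥ w = 1 ∧ uVec k w ⬝ᵥ uVec k w = 1 ∧
    k ⬝ᵥ w = 0 ∧ w ⬝ᵥ k = 0 ∧ k ⬝ᵥ uVec k w = 0 ∧ uVec k w ⬝ᵥ k = 0 ∧
    w ⬝ᵥ uVec k w = 0 ∧ uVec k w ⬝ᵥ w = 0 := by
  refine ⟨?_, ?_, ?_, ?_, ?_, ?_, ?_, ?_, ?_⟩ <;>
    simp [uVec, crossM, mulVec, dotProduct, Fin.sum_univ_three] <;>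
    nlinarith [hk, hw, hkw]

include hk hw hkw in
lemma det_of_basis_action (Y : M3) (e a b : ℝ)
    (h1 : Y.mulVec k = e • k) (h2 : Y.mulVec w = a • w + b • uVec k w)
    (h3 : Y.mulVec (uVec k w) = a • uVec k w - b • w) :
    Y.det = e * (a ^ 2 + b ^ 2) := by
  obtain ⟨d1, d2, d3, d4, d5, d6, d7, d8, d9⟩ := dots9 k w hk hw hkw
  have hC : basisH k w * Y * (basisH k w)ᵀ = !![e, 0, 0; 0, a, -b; 0, b, a] := by
    ext i j
    have hentry : (basisH k w * Y * (basisH k w)ᵀ) i j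
        = basisH k w i ⬝ᵥ Y.mulVec (basisH k w j) := by
      simp [Matrix.mul_apply, mulVec, dotProduct, Fin.sum_univ_three]
      ring
    rw [hentry]
    fin_cases i <;> fin_cases j
    · show k ⬝ᵥ Y *ᵥ k = e
      rw [h1, dotProduct_smul, d1]; simp
    · show k ⬝ᵥ Y *ᵥ w = 0
      rw [h2, dotProduct_add, dotProduct_smul, dotProduct_smul, d4, d6]; simp
    · show k ⬝ᵥ Y *ᵥ uVec k w = 0
      rw [h3, dotProduct_sub, dotProduct_smul, dotProduct_smul, d6, d4]; simp
    · show w ⬝ᵥ Y *ᵥ k = 0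
      rw [h1, dotProduct_smul, d5]; simp
    · show w ⬝ᵥ Y *ᵥ w = a
      rw [h2, dotProduct_add, dotProduct_smul, dotProduct_smul, d2, d8]; simp
    · show w ⬝ᵥ Y *ᵥ uVec k w = -b
      rw [h3, dotProduct_sub, dotProduct_smul, dotProduct_smul, d8, d2]; simp
    · show uVec k w ⬝ᵥ Y *ᵥ k = 0
      rw [h1, dotProduct_smul, d7]; simp
    · show uVec k w ⬝ᵥ Y *ᵥ w = b
      rw [h2, dotProduct_add, dotProduct_smul, dotProduct_smul, d9, d3]; simp
    · show uVec k w ⬝ᵥ Y *ᵥ uVec k w = a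
      rw [h3, dotProduct_sub, dotProduct_smul, dotProduct_smul, d3, d9]; simp
  have hdetH : (basisH k w).det * (basisH k w)ᵀ.det = 1 := by
    rw [← Matrix.det_mul, basisH_mul_transpose k w hk hw hkw, Matrix.det_one]
  have hd : (basisH k w * Y * (basisH k w)ᵀ).det = Y.det := by
    rw [Matrix.det_mul, Matrix.det_mul]
    rw [Matrix.det_transpose] at hdetH ⊢
    linear_combination Y.det * hdetH
  rw [hC] at hd
  rw [← hd, Matrix.det_fin_three]
  simp
  ring

include hk hw hkw in
lemma classify (B : M3) (hBO : B * Bᵀ = 1) (hBdet : B.det = 1)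
    (hBK : B * crossM k = crossM k * B) :
    ∃ a b : ℝ, a ^ 2 + b ^ 2 = 1 ∧ B = rotM k 1 a b := by
  obtain ⟨d1, d2, d3, d4, d5, d6, d7, d8, d9⟩ := dots9 k w hk hw hkw
  have hBtB : Bᵀ * B = 1 := mul_eq_one_comm.mp hBO
  -- B commutes with projM k
  have hPB : B * projM k = projM k * B := by
    have h : B * (crossM k * crossM k) = (crossM k * crossM k) * B := by
      rw [← Matrix.mul_assoc, hBK, Matrix.mul_assoc, hBK, Matrix.mul_assoc]
    rw [crossM_sq k hk, mul_sub, sub_mul, mul_one, one_mul] at h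
    exact sub_left_inj.mp h
  have hPk : projM k *ᵥ k = k := by
    rw [projM_mulVec', d1, one_smul]
  have hBk : B *ᵥ k = (k ⬝ᵥ (B *ᵥ k)) • k := by
    have h1 : projM k *ᵥ (B *ᵥ k) = B *ᵥ k := by
      rw [Matrix.mulVec_mulVec, ← hPB, ← Matrix.mulVec_mulVec, hPk]
    conv_lhs => rw [← h1, projM_mulVec']
  set e : ℝ := k ⬝ᵥ (B *ᵥ k) with he_def
  have hPBT : Bᵀ * projM k = projM k * Bᵀ := by
    have h := congrArg Matrix.transpose hPB
    simpa [Matrix.transpose_mul, projM_transpose] using h.symm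
  have hBTk : Bᵀ *ᵥ k = (k ⬝ᵥ (Bᵀ *ᵥ k)) • k := by
    have h1 : projM k *ᵥ (Bᵀ *ᵥ k) = Bᵀ *ᵥ k := by
      rw [Matrix.mulVec_mulVec, ← hPBT, ← Matrix.mulVec_mulVec, hPk]
    conv_lhs => rw [← h1, projM_mulVec']
  have he' : k ⬝ᵥ (Bᵀ *ᵥ k) = e := by
    rw [dotProduct_mulVec, Matrix.vecMul_transpose, dotProduct_comm]
  have hkBw : k ⬝ᵥ (B *ᵥ w) = 0 := by
    rw [dotProduct_mulVec, ← Matrix.mulVec_transpose, hBTk, he', smul_dotProduct,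
      d4, smul_zero]
  set a : ℝ := w ⬝ᵥ (B *ᵥ w) with ha_def
  set b : ℝ := uVec k w ⬝ᵥ (B *ᵥ w) with hb_def
  have hBw : B *ᵥ w = a • w + b • uVec k w := by
    have h := recon k w hk hw hkw (B *ᵥ w)
    rw [hkBw, zero_smul, zero_add] at h
    exact h
  have hKu : (crossM k) *ᵥ uVec k w = -w := crossM_mulVec_u k w hk hkw
  have hBu : B *ᵥ uVec k w = a • uVec k w - b • w := by
    show B *ᵥ ((crossM k) *ᵥ w) = _
    rw [Matrix.mulVec_mulVec, hBK, ← Matrix.mulVec_mulVec, hBw, Matrix.mulVec_add,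
      Matrix.mulVec_smul, Matrix.mulVec_smul, hKu]
    show a • uVec k w + b • (-w) = _
    module
  have hnorm : ∀ y : Fin 3 → ℝ, (B *ᵥ y) ⬝ᵥ (B *ᵥ y) = y ⬝ᵥ y := by
    intro y
    rw [dotProduct_mulVec, ← Matrix.mulVec_transpose, Matrix.mulVec_mulVec, hBtB,
      Matrix.one_mulVec]
  have hab : a ^ 2 + b ^ 2 = 1 := by
    have h1 := hnorm w
    rw [hBw, d2] at h1
    rw [add_dotProduct, smul_dotProduct, smul_dotProduct, dotProduct_add, dotProduct_add,
      dotProduct_smul, dotProduct_smul, dotProduct_smul, dotProduct_smul,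
      d2, d3, d8, d9] at h1
    simp only [smul_eq_mul] at h1
    nlinarith [h1]
  have he2 : e * e = 1 := by
    have h1 := hnorm k
    rw [hBk] at h1
    rw [smul_dotProduct, dotProduct_smul, d1] at h1
    simp only [smul_eq_mul] at h1
    nlinarith [h1]
  have hdet : B.det = e * (a ^ 2 + b ^ 2) :=
    det_of_basis_action k w hk hw hkw B e a b hBk hBw hBu
  have he1 : e = 1 := by
    rw [hBdet, hab, mul_one] at hdet
    exact hdet.symm
  refine ⟨a, b, hab, ?_⟩
  refine eq_of_basis_action k w hk hw hkw B (rotM k 1 a b) ?_ ?_ ?_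
  · rw [rotM_mulVec_k k hk, hBk, he1]
  · rw [rotM_mulVec_w k w hkw, hBw]
    rfl
  · show B *ᵥ ((crossM k) *ᵥ w) = rotM k 1 a b *ᵥ ((crossM k) *ᵥ w)
    rw [rotM_mulVec_u k w hk hkw]
    exact hBu

end UnitK

lemma exists_perp (k : Fin 3 → ℝ) :
    ∃ w : Fin 3 → ℝ, (w 0 ^ 2 + w 1 ^ 2 + w 2 ^ 2 = 1) ∧
      (k 0 * w 0 + k 1 * w 1 + k 2 * w 2 = 0) := by
  by_cases h : k 0 = 0 ∧ k 1 = 0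
  · refine ⟨![1, 0, 0], by norm_num; rfl, by simp [h.1]⟩
  · have hpos : 0 < k 0 ^ 2 + k 1 ^ 2 := by
      rcases not_and_or.mp h with h | h
      · positivity
      · positivity
    set d := Real.sqrt (k 0 ^ 2 + k 1 ^ 2) with hd_def
    have hd : 0 < d := Real.sqrt_pos.mpr hpos
    have hd2 : d ^ 2 = k 0 ^ 2 + k 1 ^ 2 := Real.sq_sqrt hpos.le
    refine ⟨![-(d⁻¹ * k 1), d⁻¹ * k 0, 0], ?_, ?_⟩
    · simp only [Matrix.cons_val_zero, Matrix.cons_val_one, Matrix.head_cons,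
        Matrix.cons_val_two, Matrix.tail_cons]
      field_simp
      linarith [hd2]
    · simp only [Matrix.cons_val_zero, Matrix.cons_val_one, Matrix.head_cons,
        Matrix.cons_val_two, Matrix.tail_cons]
      ring

lemma exists_angle {a b : ℝ} (hab : a ^ 2 + b ^ 2 = 1) :
    ∃ θ : ℝ, Real.cos θ = a ∧ Real.sin θ = b := by
  have ha1 : -1 ≤ a := by nlinarith
  have ha2 : a ≤ 1 := by nlinarith
  rcases le_or_gt 0 b with hb | hb
  · refine ⟨Real.arccos a, Real.cos_arccos ha1 ha2, ?_⟩
    rw [Real.sin_arccos]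
    rw [show 1 - a ^ 2 = b ^ 2 from by linarith, Real.sqrt_sq hb]
  · refine ⟨-Real.arccos a, by rw [Real.cos_neg]; exact Real.cos_arccos ha1 ha2, ?_⟩
    rw [Real.sin_neg, Real.sin_arccos]
    rw [show 1 - a ^ 2 = b ^ 2 from by linarith, Real.sqrt_sq_eq_abs, abs_of_neg hb, neg_neg]

lemma rotM_mem_SO3 (k : Fin 3 → ℝ) (hk : k 0 ^ 2 + k 1 ^ 2 + k 2 ^ 2 = 1)
    {a b : ℝ} (hab : a ^ 2 + b ^ 2 = 1) :
    rotM k 1 a b ∈ Matrix.specialOrthogonalGroup (Fin 3) ℝ := by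
  rw [Matrix.mem_specialOrthogonalGroup_iff]
  constructor
  · rw [Matrix.mem_orthogonalGroup_iff]
    convert rotM_orth k hk hab 1 (by norm_num) using 2
  · obtain ⟨w, hw, hkw⟩ := exists_perp k
    have h := det_of_basis_action k w hk hw hkw (rotM k 1 a b) 1 a b
      (rotM_mulVec_k k hk 1 a b) (rotM_mulVec_w k w hkw 1 a b)
      (rotM_mulVec_u k w hk hkw 1 a b)
    rw [h, hab, mul_one]

end SO3Aux


noncomputable section SO3Aux2

open Matrix

lemma star_eq_transpose (X : M3) : star X = Xᵀ := by
  ext i j; simp [Matrix.star_apply]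

lemma so3_props (x : SO3) : (x : M3) * (x : M3)ᵀ = 1 ∧ (x : M3).det = 1 := by
  have h := x.2
  rw [Matrix.mem_specialOrthogonalGroup_iff] at h
  obtain ⟨h1, h2⟩ := h
  rw [Matrix.mem_orthogonalGroup_iff] at h1
  exact ⟨h1, h2⟩

/-- Every coordinate of a commuting tuple outside the identity component squares to `1`. -/
lemma sq_one_of_mem_MMinus {n : ℕ} (f : CommTuples n SO3) (hf : f ∈ MMinus n) (i : Fin n) :
    f.1 i * f.1 i = 1 := by
  by_contra hne
  apply hf
  set A : M3 := ((f.1 i : M3)) with hA_def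
  have hAO : A * Aᵀ = 1 := (so3_props _).1
  have hAA : A * A ≠ 1 := by
    intro h
    exact hne (Subtype.ext h)
  have hAT : A ≠ Aᵀ := by
    intro h
    rw [← h] at hAO
    exact hAA hAO
  set S : M3 := A - Aᵀ with hS_def
  have hSne : S ≠ 0 := sub_ne_zero_of_ne hAT
  have hSkew : Sᵀ = -S := by
    rw [hS_def, transpose_sub, transpose_transpose, neg_sub]
  have hskew' : ∀ i j, S j i = -S i j := by
    intro i j
    have h := congrFun (congrFun hSkew i) j
    simpa [Matrix.transpose_apply] using h
  set v : Fin 3 → ℝ := ![S 2 1, S 0 2, S 1 0] with hv_def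
  have hvpos : 0 < v 0 ^ 2 + v 1 ^ 2 + v 2 ^ 2 := by
    rcases lt_or_eq_of_le (by positivity : (0:ℝ) ≤ v 0 ^ 2 + v 1 ^ 2 + v 2 ^ 2) with h | h
    · exact h
    · exfalso
      apply hSne
      have h0 : v 0 = 0 := by nlinarith [sq_nonneg (v 0), sq_nonneg (v 1), sq_nonneg (v 2)]
      have h1 : v 1 = 0 := by nlinarith [sq_nonneg (v 0), sq_nonneg (v 1), sq_nonneg (v 2)]
      have h2 : v 2 = 0 := by nlinarith [sq_nonneg (v 0), sq_nonneg (v 1), sq_nonneg (v 2)]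
      simp only [hv_def, Matrix.cons_val_zero, Matrix.cons_val_one, Matrix.head_cons,
        Matrix.cons_val_two, Matrix.tail_cons] at h0 h1 h2
      ext i j
      fin_cases i <;> fin_cases j <;>
        simp [Matrix.zero_apply] <;>
        first
          | linarith [hskew' 0 0]
          | linarith [hskew' 1 1]
          | linarith [hskew' 2 2]
          | linarith [hskew' 1 0, h2]
          | linarith [hskew' 0 2, h1]
          | linarith [hskew' 2 1, h0]
          | linarith [h0, h1, h2]
  set r : ℝ := Real.sqrt (v 0 ^ 2 + v 1 ^ 2 + v 2 ^ 2) with hr_def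
  have hr : 0 < r := Real.sqrt_pos.mpr hvpos
  have hr2 : r ^ 2 = v 0 ^ 2 + v 1 ^ 2 + v 2 ^ 2 := Real.sq_sqrt hvpos.le
  set k : Fin 3 → ℝ := fun m => r⁻¹ * v m with hk_def
  have hk : k 0 ^ 2 + k 1 ^ 2 + k 2 ^ 2 = 1 := by
    have : k 0 ^ 2 + k 1 ^ 2 + k 2 ^ 2 = r⁻¹ ^ 2 * (v 0 ^ 2 + v 1 ^ 2 + v 2 ^ 2) := by
      simp [hk_def]; ring
    rw [this, ← hr2]
    field_simp
  have hcv : crossM v = S := by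
    ext i j
    fin_cases i <;> fin_cases j <;>
      simp [crossM, hv_def] <;>
      first
        | linarith [hskew' 0 0]
        | linarith [hskew' 1 1]
        | linarith [hskew' 2 2]
        | linarith [hskew' 1 0]
        | linarith [hskew' 0 2]
        | linarith [hskew' 2 1]
  have hck : crossM k = r⁻¹ • S := by
    rw [← hcv]
    ext i j
    fin_cases i <;> fin_cases j <;>
      simp [crossM, hk_def, Matrix.smul_apply] <;> ring
  have hcommK : ∀ j, (f.1 j : M3) * crossM k = crossM k * (f.1 j : M3) := by
    intro j
    set B : M3 := (f.1 j : M3) with hB_def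
    have hBO : B * Bᵀ = 1 := (so3_props _).1
    have hBtB : Bᵀ * B = 1 := mul_eq_one_comm.mp hBO
    have hBA : B * A = A * B := congrArg Subtype.val (f.2 j i)
    have hBAT : B * Aᵀ = Aᵀ * B := by
      have h := congrArg Matrix.transpose hBA
      rw [Matrix.transpose_mul, Matrix.transpose_mul] at h
      calc B * Aᵀ = B * Aᵀ * (Bᵀ * B) := by rw [hBtB, mul_one]
        _ = B * (Aᵀ * Bᵀ) * B := by simp only [Matrix.mul_assoc]
        _ = B * (Bᵀ * Aᵀ) * B := by rw [h]
        _ = (B * Bᵀ) * (Aᵀ * B) := by simp only [Matrix.mul_assoc]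
        _ = Aᵀ * B := by rw [hBO, one_mul]
    have hBS : B * S = S * B := by
      rw [hS_def, mul_sub, sub_mul, hBA, hBAT]
    rw [hck, mul_smul_comm, smul_mul_assoc, hBS]
  obtain ⟨w, hw, hkw⟩ := exists_perp k
  have hcls : ∀ j, ∃ a b : ℝ, a ^ 2 + b ^ 2 = 1 ∧ (f.1 j : M3) = rotM k 1 a b := fun j =>
    classify k w hk hw hkw (f.1 j : M3) (so3_props _).1 (so3_props _).2 (hcommK j)
  choose a b hab hBeq using hcls
  choose θ hcos hsin using fun j => exists_angle (hab j)
  have hmem : ∀ (s : unitInterval) (j : Fin n),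
      rotM k 1 (Real.cos ((1-(s:ℝ)) * θ j)) (Real.sin ((1-(s:ℝ)) * θ j))
        ∈ Matrix.specialOrthogonalGroup (Fin 3) ℝ := by
    intro s j
    exact rotM_mem_SO3 k hk (Real.cos_sq_add_sin_sq _)
  set Γ : unitInterval → CommTuples n SO3 := fun s =>
    ⟨fun j => ⟨rotM k 1 (Real.cos ((1-(s:ℝ)) * θ j)) (Real.sin ((1-(s:ℝ)) * θ j)),
        hmem s j⟩,
      fun j l => Subtype.ext (rotM_comm k hk _ _ _ _ _ _)⟩ with hΓ_def
  have hcont : Continuous Γ := by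
    apply Continuous.subtype_mk
    apply continuous_pi
    intro j
    apply Continuous.subtype_mk
    have hc : Continuous fun s : unitInterval => Real.cos ((1-(s:ℝ)) * θ j) :=
      Real.continuous_cos.comp ((continuous_const.sub continuous_subtype_val).mul
        continuous_const)
    have hs : Continuous fun s : unitInterval => Real.sin ((1-(s:ℝ)) * θ j) :=
      Real.continuous_sin.comp ((continuous_const.sub continuous_subtype_val).mul
        continuous_const)
    unfold rotM
    fun_prop
  have hsrc : Γ 0 = f := by
    apply Subtype.ext
    funext j
    apply Subtype.ext
    show rotM k 1 (Real.cos ((1-((0:unitInterval):ℝ)) * θ j))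
        (Real.sin ((1-((0:unitInterval):ℝ)) * θ j)) = (f.1 j : M3)
    rw [show ((0:unitInterval):ℝ) = 0 from rfl]
    rw [show (1-(0:ℝ)) * θ j = θ j from by ring]
    rw [hcos j, hsin j, ← hBeq j]
  have htgt : Γ 1 = oneTuple n SO3 := by
    apply Subtype.ext
    funext j
    apply Subtype.ext
    show rotM k 1 (Real.cos ((1-((1:unitInterval):ℝ)) * θ j))
        (Real.sin ((1-((1:unitInterval):ℝ)) * θ j)) = (1 : M3)
    rw [show ((1:unitInterval):ℝ) = 1 from rfl]
    rw [show (1-(1:ℝ)) * θ j = 0 from by ring]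
    rw [Real.cos_zero, Real.sin_zero, rotM_one]
  have hJ : Joined f (oneTuple n SO3) := ⟨⟨⟨Γ, hcont⟩, hsrc, htgt⟩⟩
  exact pathComponent_subset_component _ hJ.symm

end SO3Aux2

noncomputable section TopoAux

open Matrix

def frob (Y : M3) : ℝ := ∑ i : Fin 3, ∑ j : Fin 3, (Y i j) ^ 2

lemma frob_nonneg (Y : M3) : 0 ≤ frob Y := by
  unfold frob; positivity

lemma frob_eq_zero {Y : M3} (h : frob Y = 0) : Y = 0 := by
  ext i j
  have h1 : ∀ i ∈ Finset.univ, (0:ℝ) ≤ ∑ j : Fin 3, (Y i j) ^ 2 := fun i _ => by positivity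
  have h2 := (Finset.sum_eq_zero_iff_of_nonneg h1).mp h i (Finset.mem_univ i)
  have h3 : ∀ j ∈ Finset.univ, (0:ℝ) ≤ (Y i j) ^ 2 := fun j _ => by positivity
  have h4 := (Finset.sum_eq_zero_iff_of_nonneg h3).mp h2 j (Finset.mem_univ j)
  have h5 : Y i j = 0 := by
    have := sq_eq_zero_iff.mp h4
    exact this
  simpa using h5

lemma frob_mul_le (Y Z : M3) : frob (Y * Z) ≤ frob Y * frob Z := by
  unfold frob
  calc ∑ i : Fin 3, ∑ j : Fin 3, ((Y*Z) i j) ^ 2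
      ≤ ∑ i : Fin 3, ∑ j : Fin 3, (∑ l : Fin 3, (Y i l) ^ 2) * (∑ l : Fin 3, (Z l j) ^ 2) := by
        apply Finset.sum_le_sum; intro i _; apply Finset.sum_le_sum; intro j _
        rw [Matrix.mul_apply]
        exact Finset.sum_mul_sq_le_sq_mul_sq _ _ _
    _ = (∑ i : Fin 3, ∑ l : Fin 3, (Y i l) ^ 2) * (∑ j : Fin 3, ∑ l : Fin 3, (Z l j) ^ 2) := by
        simp only [← Finset.mul_sum]
        rw [← Finset.sum_mul]
    _ = (∑ i : Fin 3, ∑ l : Fin 3, (Y i l) ^ 2) * (∑ l : Fin 3, ∑ j : Fin 3, (Z l j) ^ 2) := by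
        congr 1
        exact Finset.sum_comm

lemma stable (g : unitInterval → M3) (hg : Continuous g)
    (hsq : ∀ s, g s * g s = 1) (t : unitInterval) :
    (g 0 = 1 → g t = 1) ∧ (g 0 ≠ 1 → g t ≠ 1) := by
  have hdich : ∀ s, g s = 1 ∨ 4 ≤ frob (g s - 1) := by
    intro s
    have hEE : (g s - 1) * (g s - 1) = (-2 : ℝ) • (g s - 1) := by
      have hX := hsq s
      simp only [sub_mul, mul_sub, mul_one, one_mul, hX]
      module
    have h4 : frob ((-2:ℝ) • (g s - 1)) = 4 * frob (g s - 1) := by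
      unfold frob
      rw [Finset.mul_sum]
      refine Finset.sum_congr rfl fun i _ => ?_
      rw [Finset.mul_sum]
      refine Finset.sum_congr rfl fun j _ => ?_
      simp [Matrix.smul_apply]
      ring
    have hle : 4 * frob (g s - 1) ≤ frob (g s - 1) * frob (g s - 1) := by
      have hfm := frob_mul_le (g s - 1) (g s - 1)
      rw [hEE, h4] at hfm
      exact hfm
    rcases eq_or_lt_of_le (frob_nonneg (g s - 1)) with h0 | h0
    · left
      have := frob_eq_zero h0.symm
      exact sub_eq_zero.mp this
    · right
      nlinarith [hle, h0]
  have hFcont : Continuous fun s => frob (g s - 1) := by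
    unfold frob
    apply continuous_finset_sum; intro i _
    apply continuous_finset_sum; intro j _
    have he : Continuous fun s => g s i j :=
      (continuous_apply j).comp ((continuous_apply i).comp hg)
    have : Continuous fun s => (g s - 1) i j := by
      exact he.sub continuous_const
    exact this.pow 2
  have hC : IsClopen {s | g s = 1} := by
    constructor
    · exact (isClosed_singleton).preimage hg
    · have heq : {s | g s = 1} = (fun s => frob (g s - 1)) ⁻¹' (Set.Iio 4) := by
        ext s
        simp only [Set.mem_setOf_eq, Set.mem_preimage, Set.mem_Iio]
        constructor
        · intro h
          rw [h]
          simp [frob]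
        · intro h
          rcases hdich s with h1 | h1
          · exact h1
          · linarith
      rw [heq]
      exact isOpen_Iio.preimage hFcont
  rcases isClopen_iff.mp hC with h | h
  · constructor
    · intro h0
      exfalso
      have : (0:unitInterval) ∈ {s | g s = 1} := h0
      rw [h] at this
      exact this
    · intro _ ht
      have : t ∈ {s | g s = 1} := ht
      rw [h] at this
      exact this
  · constructor
    · intro _
      have : t ∈ {s | g s = 1} := by rw [h]; trivial
      exact this
    · intro h0
      exfalso
      apply h0
      have : (0:unitInterval) ∈ {s | g s = 1} := by rw [h]; trivial
      exact this

lemma sq_one_mul {Mo : Type*} [Monoid Mo] {x y : Mo} (hc : x * y = y * x)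
    (hx : x * x = 1) (hy : y * y = 1) : (x * y) * (x * y) = 1 := by
  calc (x*y)*(x*y) = x*((y*x)*y) := by simp only [mul_assoc]
    _ = x*((x*y)*y) := by rw [← hc]
    _ = (x*x)*(y*y) := by simp only [mul_assoc]
    _ = 1 := by rw [hx, hy, one_mul]

lemma eq_of_mul_sq {Mo : Type*} [Monoid Mo] {p q : Mo} (h : p * q = 1) (hq : q * q = 1) :
    p = q := by
  calc p = p * (q*q) := by rw [hq, mul_one]
    _ = (p*q)*q := by rw [mul_assoc]
    _ = q := by rw [h, one_mul]

end TopoAux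

/-- Let `n ≥ 2` and let `ω(t) = (B₁(t), …, Bₙ(t))` be a continuous path in `Mₙ⁻(SO(3))`.
Then for all `t`: (i) if `Bᵢ(0) = id` then `Bᵢ(t) = id`; (ii) if `Bᵢ(0) = Bⱼ(0)` then
`Bᵢ(t) = Bⱼ(t)`; (iii) if `Bᵢ(0)` and `Bⱼ(0)` are distinct involutions then so are
`Bᵢ(t)` and `Bⱼ(t)`; (iv) if `B_k(0) = Bᵢ(0)·Bⱼ(0)` then `B_k(t) = Bᵢ(t)·Bⱼ(t)`. -/
theorem path_in_MMinus_rigidity (n : ℕ) (hn : 2 ≤ n)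
    (ω : C(unitInterval, ↥(MMinus n))) (t : unitInterval) :
    (∀ i, coordAt ω i 0 = 1 → coordAt ω i t = 1) ∧
    (∀ i j, coordAt ω i 0 = coordAt ω j 0 → coordAt ω i t = coordAt ω j t) ∧
    (∀ i j,
      (coordAt ω i 0 * coordAt ω i 0 = 1 ∧ coordAt ω i 0 ≠ 1 ∧
        coordAt ω j 0 * coordAt ω j 0 = 1 ∧ coordAt ω j 0 ≠ 1 ∧
        coordAt ω i 0 ≠ coordAt ω j 0) →
      (coordAt ω i t * coordAt ω i t = 1 ∧ coordAt ω i t ≠ 1 ∧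
        coordAt ω j t * coordAt ω j t = 1 ∧ coordAt ω j t ≠ 1 ∧
        coordAt ω i t ≠ coordAt ω j t)) ∧
    (∀ i j k, coordAt ω k 0 = coordAt ω i 0 * coordAt ω j 0 →
      coordAt ω k t = coordAt ω i t * coordAt ω j t) := by
  -- all coordinates square to one at all times
  have hsqA : ∀ (s : unitInterval) (j : Fin n), coordAt ω j s * coordAt ω j s = 1 :=
    fun s j => sq_one_of_mem_MMinus _ (ω s).2 j
  have hsqA' : ∀ (s : unitInterval) (j : Fin n),
      (coordAt ω j s : M3) * (coordAt ω j s : M3) = 1 :=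
    fun s j => congrArg Subtype.val (hsqA s j)
  have hcm' : ∀ (s : unitInterval) (a b : Fin n),
      (coordAt ω a s : M3) * (coordAt ω b s : M3)
        = (coordAt ω b s : M3) * (coordAt ω a s : M3) :=
    fun s a b => congrArg Subtype.val (((ω s : CommTuples n SO3)).2 a b)
  have hcontc : ∀ i : Fin n, Continuous fun s => (coordAt ω i s : M3) := by
    intro i
    have h1 : Continuous fun s => (ω s : CommTuples n SO3) :=
      continuous_subtype_val.comp ω.continuous
    have h2 : Continuous fun s => ((ω s : CommTuples n SO3)).1 :=
      continuous_subtype_val.comp h1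
    have h3 : Continuous fun s => ((ω s : CommTuples n SO3)).1 i :=
      (continuous_apply i).comp h2
    exact continuous_subtype_val.comp h3
  refine ⟨?_, ?_, ?_, ?_⟩
  · -- (i)
    intro i h0
    have hst := stable (fun s => (coordAt ω i s : M3)) (hcontc i) (fun s => hsqA' s i) t
    have h0' : (coordAt ω i 0 : M3) = 1 := congrArg Subtype.val h0
    exact Subtype.ext (hst.1 h0')
  · -- (ii)
    intro i j h0
    have hgc : Continuous fun s => (coordAt ω i s : M3) * (coordAt ω j s : M3) :=
      (hcontc i).mul (hcontc j)
    have hgsq : ∀ s, ((coordAt ω i s : M3) * (coordAt ω j s : M3))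
        * ((coordAt ω i s : M3) * (coordAt ω j s : M3)) = 1 :=
      fun s => sq_one_mul (hcm' s i j) (hsqA' s i) (hsqA' s j)
    have hst := stable _ hgc hgsq t
    have h00 : (coordAt ω i 0 : M3) * (coordAt ω j 0 : M3) = 1 := by
      rw [show (coordAt ω i 0 : M3) = (coordAt ω j 0 : M3) from congrArg Subtype.val h0]
      exact hsqA' 0 j
    exact Subtype.ext (eq_of_mul_sq (hst.1 h00) (hsqA' t j))
  · -- (iii)
    intro i j ⟨hi1, hi2, hj1, hj2, hij⟩
    have hsti := stable (fun s => (coordAt ω i s : M3)) (hcontc i) (fun s => hsqA' s i) t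
    have hstj := stable (fun s => (coordAt ω j s : M3)) (hcontc j) (fun s => hsqA' s j) t
    have hgc : Continuous fun s => (coordAt ω i s : M3) * (coordAt ω j s : M3) :=
      (hcontc i).mul (hcontc j)
    have hgsq : ∀ s, ((coordAt ω i s : M3) * (coordAt ω j s : M3))
        * ((coordAt ω i s : M3) * (coordAt ω j s : M3)) = 1 :=
      fun s => sq_one_mul (hcm' s i j) (hsqA' s i) (hsqA' s j)
    have hstij := stable _ hgc hgsq t
    refine ⟨hsqA t i, ?_, hsqA t j, ?_, ?_⟩
    · have hne0 : (coordAt ω i 0 : M3) ≠ 1 := fun h => hi2 (Subtype.ext h)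
      exact fun h => (hsti.2 hne0) (congrArg Subtype.val h)
    · have hne0 : (coordAt ω j 0 : M3) ≠ 1 := fun h => hj2 (Subtype.ext h)
      exact fun h => (hstj.2 hne0) (congrArg Subtype.val h)
    · have hne0 : (coordAt ω i 0 : M3) * (coordAt ω j 0 : M3) ≠ 1 := by
        intro h
        exact hij (Subtype.ext (eq_of_mul_sq h (hsqA' 0 j)))
      have hnet := hstij.2 hne0
      intro h
      apply hnet
      rw [show (coordAt ω i t : M3) = (coordAt ω j t : M3) from congrArg Subtype.val h]
      exact hsqA' t j
  · -- (iv)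
    intro i j k h0
    have hgc : Continuous fun s =>
        (coordAt ω k s : M3) * ((coordAt ω i s : M3) * (coordAt ω j s : M3)) :=
      (hcontc k).mul ((hcontc i).mul (hcontc j))
    have hu : ∀ s, ((coordAt ω i s : M3) * (coordAt ω j s : M3))
        * ((coordAt ω i s : M3) * (coordAt ω j s : M3)) = 1 :=
      fun s => sq_one_mul (hcm' s i j) (hsqA' s i) (hsqA' s j)
    have hgsq : ∀ s, ((coordAt ω k s : M3) * ((coordAt ω i s : M3) * (coordAt ω j s : M3)))
        * ((coordAt ω k s : M3) * ((coordAt ω i s : M3) * (coordAt ω j s : M3))) = 1 := by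
      intro s
      have hcomm : (coordAt ω k s : M3) * ((coordAt ω i s : M3) * (coordAt ω j s : M3))
          = ((coordAt ω i s : M3) * (coordAt ω j s : M3)) * (coordAt ω k s : M3) :=
        Commute.mul_right (hcm' s k i) (hcm' s k j)
      exact sq_one_mul hcomm (hsqA' s k) (hu s)
    have hst := stable _ hgc hgsq t
    have h00 : (coordAt ω k 0 : M3) * ((coordAt ω i 0 : M3) * (coordAt ω j 0 : M3)) = 1 := by
      rw [show (coordAt ω k 0 : M3) = (coordAt ω i 0 : M3) * (coordAt ω j 0 : M3) from
        congrArg Subtype.val h0]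
      exact hu 0
    exact Subtype.ext (eq_of_mul_sq (hst.1 h00) (hu t))
end
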